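/- arXiv:2302.04653 — 4 statements merged into one kernel-verified Lean document; each statement's English description precedes it below -/
import Mathlib

section
/- (Sewing lemma) Let $W$ be a Banach space, $0 < \alpha \leq 1 < \beta$, and let $\Xi$ be a function on the simplex $\{0 \le s \le t \le T\}$ with values in $W$ satisfying $\Xi_{t,t} = 0$, $\|\Xi\|_{\alpha} < \infty$ and $\|\delta\Xi\|_{\beta} < \infty$, where $\delta\Xi_{s,u,t} = \Xi_{s,t} - \Xi_{s,u} - \Xi_{u,t}$. Then there exists a unique $\alpha$-Hölder path $\mathcal{I}\Xi : [0,T] \to W$ with $(\mathcal{I}\Xi)_0 = 0$ such that $|(\mathcal{I}\Xi)_t - (\mathcal{I}\Xi)_s - \Xi_{s,t}| \leq \|\delta\Xi\|_{\beta}\,[2^{\beta}(\zeta(\beta)-1)+1]\,|t-s|^{\beta}$ for all $s \le t$. Moreover, $(\mathcal{I}\Xi)_t - (\mathcal{I}\Xi)_s = \lim_{|\mathcal{P}| \to 0} \sum_{[u,v] \in \mathcal{P}} \Xi_{u,v}$ where the limit is over partitions $\mathcal{P}$ of $[s,t]$ with mesh size tending to $0$. -/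
open Filter

section SewingAuxSection
open Finset
namespace SewingAux

def RS {W : Type*} [NormedAddCommGroup W] (Ξ : ℝ → ℝ → W) (τ : ℕ → ℝ) (N : ℕ) : W :=
  ∑ i ∈ Finset.range N, Ξ (τ i) (τ (i + 1))

lemma tau_mono {α : Type*} [Preorder α] {τ : ℕ → α} {N : ℕ}
    (h : ∀ i < N, τ i < τ (i + 1)) :
    ∀ a b, a ≤ b → b ≤ N → τ a ≤ τ b := by
  intro a b hab hbN
  induction b, hab using Nat.le_induction with
  | base => exact le_refl _
  | succ b hab ih => exact le_trans (ih (by omega)) (h b (by omega)).le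

theorem maximal {W : Type*} [NormedAddCommGroup W]
    (T β : ℝ) (hβ : 1 < β) (Ξ : ℝ → ℝ → W) (Cδ : ℝ) (hCδ0 : 0 ≤ Cδ)
    (hCδ : ∀ s u t, 0 ≤ s → s ≤ u → u ≤ t → t ≤ T →
      ‖Ξ s t - Ξ s u - Ξ u t‖ ≤ Cδ * (t - s) ^ β) :
    ∀ N : ℕ, ∀ τ : ℕ → ℝ, 1 ≤ N → (∀ i < N, τ i < τ (i + 1)) → 0 ≤ τ 0 → τ N ≤ T →
      ‖RS Ξ τ N - Ξ (τ 0) (τ N)‖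
        ≤ Cδ * ((2 : ℝ) ^ β * ∑ k ∈ Finset.Icc 1 (N - 1), (k : ℝ) ^ (-β)) * (τ N - τ 0) ^ β := by
  intro N
  induction N using Nat.strong_induction_on with
  | _ N IH =>
  intro τ hN hstep h0 hT
  have hmono := tau_mono hstep
  rcases eq_or_lt_of_le hN with h1 | h2
  · -- N = 1
    subst h1
    simp [RS, Finset.sum_range_one]
  · -- N ≥ 2
    set s := τ 0 with hs
    set t := τ N with ht
    have hst : s < t := by
      have := hstep 0 (by omega)
      calc s < τ 1 := this
        _ ≤ t := hmono 1 N (by omega) le_rfl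
    have hNr : (2 : ℝ) ≤ (N : ℝ) := by exact_mod_cast h2
    -- choose the index with minimal pair length
    obtain ⟨i, hiIcc, hmin⟩ :=
      Finset.exists_min_image (Finset.Icc 1 (N - 1)) (fun j => τ (j + 1) - τ (j - 1))
        ⟨1, by simp [Finset.mem_Icc]; omega⟩
    rw [Finset.mem_Icc] at hiIcc
    obtain ⟨hi1, hi2⟩ := hiIcc
    -- sum of pair lengths
    have hsum_pairs : ∑ j ∈ Finset.Icc 1 (N - 1), (τ (j + 1) - τ (j - 1)) ≤ 2 * (t - s) := by
      have hre : ∑ j ∈ Finset.Icc 1 (N - 1), (τ (j + 1) - τ (j - 1))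
          = ∑ j ∈ Finset.range (N - 1), (τ (j + 2) - τ j) := by
        rw [← Finset.Ico_add_one_right_eq_Icc, Finset.sum_Ico_eq_sum_range]
        refine Finset.sum_congr (by simp) fun j _ => ?_
        congr 2 <;> omega
      rw [hre]
      have e1 : ∑ j ∈ Finset.range (N - 1), (τ (j + 1 + 1) - τ (j + 1))
          = τ (N - 1 + 1) - τ (0 + 1) :=
        Finset.sum_range_sub (fun j => τ (j + 1)) (N - 1)
      have e2 : ∑ j ∈ Finset.range (N - 1), (τ (j + 1) - τ j) = τ (N - 1) - τ 0 :=
        Finset.sum_range_sub τ (N - 1)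
      have hsplit : ∑ j ∈ Finset.range (N - 1), (τ (j + 2) - τ j)
          = (τ (N - 1 + 1) - τ (0 + 1)) + (τ (N - 1) - τ 0) := by
        rw [← e1, ← e2, ← Finset.sum_add_distrib]
        refine Finset.sum_congr rfl fun j _ => ?_; ring_nf
      rw [hsplit]
      have hN1 : N - 1 + 1 = N := by omega
      rw [hN1]
      have l1 : s ≤ τ (0 + 1) := hmono 0 (0 + 1) (by omega) (by omega)
      have l2 : τ (N - 1) ≤ t := hmono (N - 1) N (by omega) le_rfl
      simp only [← hs, ← ht]
      linarith
    have hcard : ((N : ℝ) - 1) * (τ (i + 1) - τ (i - 1))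
        ≤ ∑ j ∈ Finset.Icc 1 (N - 1), (τ (j + 1) - τ (j - 1)) := by
      have h' := Finset.card_nsmul_le_sum (Finset.Icc 1 (N - 1))
        (fun j => τ (j + 1) - τ (j - 1)) (τ (i + 1) - τ (i - 1))
        (fun j hj => hmin j hj)
      rw [Nat.card_Icc, nsmul_eq_mul] at h'
      have hcast : ((N - 1 + 1 - 1 : ℕ) : ℝ) = (N : ℝ) - 1 := by
        have hh : N - 1 + 1 - 1 = N - 1 := by omega
        rw [hh, Nat.cast_sub (by omega : 1 ≤ N)]; norm_num
      rwa [hcast] at h'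
    have hNpos : (0 : ℝ) < (N : ℝ) - 1 := by linarith
    have hpair : τ (i + 1) - τ (i - 1) ≤ 2 * (t - s) / ((N : ℝ) - 1) := by
      rw [le_div_iff₀ hNpos, mul_comm]
      linarith
    -- replace i by i₀ + 1
    obtain ⟨i₀, rfl⟩ : ∃ i₀, i = i₀ + 1 := ⟨i - 1, by omega⟩
    have hpair' : τ (i₀ + 2) - τ i₀ ≤ 2 * (t - s) / ((N : ℝ) - 1) := by
      have : i₀ + 1 - 1 = i₀ := by omega
      rw [this] at hpair
      convert hpair using 3 <;> omega
    -- the reduced partition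
    set τ' : ℕ → ℝ := fun j => if j < i₀ + 1 then τ j else τ (j + 1) with hτ'
    have hτ'0 : τ' 0 = s := by simp only [hτ']; rw [if_pos (by omega)]
    have hτ'N : τ' (N - 1) = t := by
      simp only [hτ']
      rw [if_neg (by omega)]
      have : N - 1 + 1 = N := by omega
      rw [this]
    have hstep' : ∀ j < N - 1, τ' j < τ' (j + 1) := by
      intro j hj
      simp only [hτ']
      split_ifs with ha hb hb
      · exact hstep j (by omega)
      · exact lt_trans (hstep j (by omega)) (hstep (j + 1) (by omega))
      · omega
      · exact hstep (j + 1) (by omega)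
    -- sum identity
    have hkey : RS Ξ τ N - RS Ξ τ' (N - 1)
        = Ξ (τ i₀) (τ (i₀ + 1)) + Ξ (τ (i₀ + 1)) (τ (i₀ + 2)) - Ξ (τ i₀) (τ (i₀ + 2)) := by
      have eA : RS Ξ τ N = ((∑ j ∈ Finset.range i₀, Ξ (τ j) (τ (j + 1)))
          + Ξ (τ i₀) (τ (i₀ + 1)) + Ξ (τ (i₀ + 1)) (τ (i₀ + 2)))
          + ∑ j ∈ Finset.Ico (i₀ + 2) N, Ξ (τ j) (τ (j + 1)) := by
        rw [RS, Finset.range_eq_Ico,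
          ← Finset.sum_Ico_consecutive _ (by omega : 0 ≤ i₀ + 2) (by omega : i₀ + 2 ≤ N),
          ← Finset.range_eq_Ico, Finset.sum_range_succ, Finset.sum_range_succ]
      have eB : RS Ξ τ' (N - 1) = ((∑ j ∈ Finset.range i₀, Ξ (τ j) (τ (j + 1)))
          + Ξ (τ i₀) (τ (i₀ + 2)))
          + ∑ j ∈ Finset.Ico (i₀ + 2) N, Ξ (τ j) (τ (j + 1)) := by
        rw [RS, Finset.range_eq_Ico,
          ← Finset.sum_Ico_consecutive _ (by omega : 0 ≤ i₀ + 1) (by omega : i₀ + 1 ≤ N - 1),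
          ← Finset.range_eq_Ico, Finset.sum_range_succ]
        congr 1
        · congr 1
          · refine Finset.sum_congr rfl fun j hj => ?_
            rw [Finset.mem_range] at hj
            simp only [hτ']
            rw [if_pos (by omega), if_pos (by omega)]
          · simp only [hτ']
            rw [if_pos (by omega), if_neg (by omega)]
        · rw [Finset.sum_Ico_eq_sum_range, Finset.sum_Ico_eq_sum_range]
          refine Finset.sum_congr (by congr 1; omega) fun j _ => ?_
          simp only [hτ']
          rw [if_neg (by omega), if_neg (by omega)]
          congr 2 <;> omega
      rw [eA, eB]
      abel
    -- estimate the removed term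
    have hmem : ∀ j, j ≤ N → 0 ≤ τ j ∧ τ j ≤ T := by
      intro j hj
      exact ⟨le_trans h0 (hmono 0 j (by omega) hj), le_trans (hmono j N hj le_rfl) hT⟩
    have hδ1 : ‖RS Ξ τ N - RS Ξ τ' (N - 1)‖ ≤ Cδ * (2 * (t - s) / ((N : ℝ) - 1)) ^ β := by
      rw [hkey]
      have e : Ξ (τ i₀) (τ (i₀ + 1)) + Ξ (τ (i₀ + 1)) (τ (i₀ + 2)) - Ξ (τ i₀) (τ (i₀ + 2))
          = -(Ξ (τ i₀) (τ (i₀ + 2)) - Ξ (τ i₀) (τ (i₀ + 1)) - Ξ (τ (i₀ + 1)) (τ (i₀ + 2))) := by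
        abel
      rw [e, norm_neg]
      have b1 := hCδ (τ i₀) (τ (i₀ + 1)) (τ (i₀ + 2)) (hmem i₀ (by omega)).1
        (hmono i₀ (i₀ + 1) (by omega) (by omega)) (hmono (i₀ + 1) (i₀ + 2) (by omega) (by omega))
        (hmem (i₀ + 2) (by omega)).2
      refine le_trans b1 (mul_le_mul_of_nonneg_left ?_ hCδ0)
      apply Real.rpow_le_rpow
      · have := hmono i₀ (i₀ + 2) (by omega) (by omega); linarith
      · exact hpair'
      · linarith
    have hpow : (2 * (t - s) / ((N : ℝ) - 1)) ^ β
        = (2 : ℝ) ^ β * (((N : ℝ) - 1)) ^ (-β) * (t - s) ^ β := by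
      rw [Real.div_rpow (by linarith) (by linarith),
        Real.mul_rpow (by norm_num) (by linarith), Real.rpow_neg (by linarith)]
      ring
    -- apply IH
    have hIH := IH (N - 1) (by omega) τ' (by omega) hstep'
      (by rw [hτ'0]; exact h0) (by rw [hτ'N]; exact hT)
    rw [hτ'0, hτ'N] at hIH
    -- combine
    have htri : ‖RS Ξ τ N - Ξ s t‖
        ≤ ‖RS Ξ τ' (N - 1) - Ξ s t‖ + ‖RS Ξ τ N - RS Ξ τ' (N - 1)‖ := by
      have e : RS Ξ τ N - Ξ s t
          = (RS Ξ τ' (N - 1) - Ξ s t) + (RS Ξ τ N - RS Ξ τ' (N - 1)) := by abel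
      rw [e]; exact norm_add_le _ _
    have hNsplit : ∑ k ∈ Finset.Icc 1 (N - 1), (k : ℝ) ^ (-β)
        = ∑ k ∈ Finset.Icc 1 (N - 1 - 1), (k : ℝ) ^ (-β) + ((N : ℝ) - 1) ^ (-β) := by
      have h' : N - 1 = (N - 2) + 1 := by omega
      rw [h', Finset.sum_Icc_succ_top (by omega)]
      have : ((N - 2 + 1 : ℕ) : ℝ) = (N : ℝ) - 1 := by
        have hh : N - 2 + 1 = N - 1 := by omega
        rw [hh, Nat.cast_sub (by omega : 1 ≤ N)]; norm_num
      rw [this]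
      simp
    rw [hpow] at hδ1
    refine le_trans (le_trans htri (add_le_add hIH hδ1)) (le_of_eq ?_)
    rw [hNsplit]; ring


lemma tau_strict {α : Type*} [Preorder α] {τ : ℕ → α} {N : ℕ}
    (h : ∀ i < N, τ i < τ (i + 1)) :
    ∀ a b, a < b → b ≤ N → τ a < τ b := by
  intro a b hab hbN
  calc τ a < τ (a + 1) := h a (by omega)
    _ ≤ τ b := tau_mono h (a + 1) b (by omega) hbN



lemma zsummable {β : ℝ} (hβ : 1 < β) : Summable (fun n : ℕ => ((n : ℝ) + 1) ^ (-β)) := by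
  have h0 : Summable (fun n : ℕ => (n : ℝ) ^ (-β)) :=
    Real.summable_nat_rpow.mpr (by linarith)
  have h1 := (summable_nat_add_iff (f := fun n : ℕ => (n : ℝ) ^ (-β)) 1).mpr h0
  simpa [Nat.cast_add] using h1

lemma Z_nonneg_terms {β : ℝ} (n : ℕ) : 0 ≤ ((n : ℝ) + 1) ^ (-β) :=
  Real.rpow_nonneg (by positivity) _

/-- partial sums `∑_{k=1}^M k^{-β}` are bounded by `Z = ∑' n, (n+1)^{-β}`. -/
lemma sum_Icc_le_Z {β : ℝ} (hβ : 1 < β) (M : ℕ) :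
    ∑ k ∈ Finset.Icc 1 M, (k : ℝ) ^ (-β) ≤ ∑' n : ℕ, ((n : ℝ) + 1) ^ (-β) := by
  have h1 : ∑ k ∈ Finset.Icc 1 M, (k : ℝ) ^ (-β)
      = ∑ j ∈ Finset.range M, ((j : ℝ) + 1) ^ (-β) := by
    rw [← Finset.Ico_add_one_right_eq_Icc, Finset.sum_Ico_eq_sum_range]
    refine Finset.sum_congr rfl fun j _ => ?_
    push_cast; ring_nf
  rw [h1]
  exact Summable.sum_le_tsum _ (fun n _ => Z_nonneg_terms n) (zsummable hβ)

lemma one_le_Z {β : ℝ} (hβ : 1 < β) : 1 ≤ ∑' n : ℕ, ((n : ℝ) + 1) ^ (-β) := by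
  have := Summable.sum_le_tsum {0} (fun n _ => Z_nonneg_terms (β := β) n) (zsummable hβ)
  simpa using this

/-- `∑_{k=2}^M k^{-β} ≤ Z - 1`. -/
lemma sum_Icc_two_le {β : ℝ} (hβ : 1 < β) (M : ℕ) :
    ∑ k ∈ Finset.Icc 2 M, (k : ℝ) ^ (-β) ≤ (∑' n : ℕ, ((n : ℝ) + 1) ^ (-β)) - 1 := by
  rcases le_or_gt 2 M with hM | hM
  · have hsplit : (1 : ℝ) ^ (-β) + ∑ k ∈ Finset.Icc 2 M, (k : ℝ) ^ (-β)
        = ∑ k ∈ Finset.Icc 1 M, (k : ℝ) ^ (-β) := by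
      have : Finset.Icc 1 M = insert 1 (Finset.Icc 2 M) := by
        ext x; simp [Finset.mem_Icc, Finset.mem_insert]; omega
      rw [this, Finset.sum_insert (by simp)]
      norm_num
    have h2 := sum_Icc_le_Z hβ M
    rw [← hsplit] at h2
    simp only [Nat.cast_one, Real.one_rpow] at h2 ⊢
    linarith
  · have : Finset.Icc 2 M = ∅ := by
      apply Finset.Icc_eq_empty; omega
    rw [this]; simp
    linarith [one_le_Z hβ]

/-- sum of `len^β` bounded via mesh. -/
lemma sum_len_rpow_le {β : ℝ} (hβ : 1 < β) {τ : ℕ → ℝ} {N : ℕ} {δ : ℝ} (hδ : 0 ≤ δ)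
    (hstep : ∀ i < N, τ i < τ (i + 1)) (hmesh : ∀ i < N, τ (i + 1) - τ i ≤ δ) :
    ∑ i ∈ Finset.range N, (τ (i + 1) - τ i) ^ β ≤ δ ^ (β - 1) * (τ N - τ 0) := by
  have key : ∀ i ∈ Finset.range N,
      (τ (i + 1) - τ i) ^ β ≤ δ ^ (β - 1) * (τ (i + 1) - τ i) := by
    intro i hi
    rw [Finset.mem_range] at hi
    have hx : 0 < τ (i + 1) - τ i := by linarith [hstep i hi]
    have h1 : (τ (i + 1) - τ i) ^ β
        = (τ (i + 1) - τ i) ^ (β - 1) * (τ (i + 1) - τ i) := by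
      nth_rewrite 1 [show β = (β - 1) + 1 by ring]
      rw [Real.rpow_add hx, Real.rpow_one]
    rw [h1]
    apply mul_le_mul_of_nonneg_right _ hx.le
    exact Real.rpow_le_rpow hx.le (hmesh i hi) (by linarith)
  calc ∑ i ∈ Finset.range N, (τ (i + 1) - τ i) ^ β
      ≤ ∑ i ∈ Finset.range N, δ ^ (β - 1) * (τ (i + 1) - τ i) :=
        Finset.sum_le_sum key
    _ = δ ^ (β - 1) * ∑ i ∈ Finset.range N, (τ (i + 1) - τ i) := by
        rw [Finset.mul_sum]
    _ = δ ^ (β - 1) * (τ N - τ 0) := by rw [Finset.sum_range_sub]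



section D
variable {W : Type*} [NormedAddCommGroup W]

lemma sum_blocks (f : ℕ → W) (φ : ℕ → ℕ) (hφ0 : φ 0 = 0) :
    ∀ N, (∀ j < N, φ j ≤ φ (j + 1)) →
      ∑ k ∈ Finset.range (φ N), f k
        = ∑ j ∈ Finset.range N, ∑ k ∈ Finset.Ico (φ j) (φ (j + 1)), f k := by
  intro N
  induction N with
  | zero => intro _; simp [hφ0]
  | succ n IHn =>
    intro h
    rw [Finset.sum_range_succ, ← IHn (fun j hj => h j (by omega))]
    rw [Finset.range_eq_Ico, Finset.range_eq_Ico]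
    exact (Finset.sum_Ico_consecutive f (by omega : 0 ≤ φ n) (h n (by omega))).symm

/-- Refinement comparison: if `ρ` refines `τ` via index map `φ`, the Riemann sums differ
by at most `Cδ·Cm·∑ lenᵝ`. -/
theorem refine_bound
    (T β : ℝ) (hβ : 1 < β) (Ξ : ℝ → ℝ → W) (Cδ : ℝ) (hCδ0 : 0 ≤ Cδ)
    (hCδ : ∀ s u t, 0 ≤ s → s ≤ u → u ≤ t → t ≤ T →
      ‖Ξ s t - Ξ s u - Ξ u t‖ ≤ Cδ * (t - s) ^ β)
    (Cm : ℝ) (hCm : ∀ M : ℕ, ∑ k ∈ Finset.Icc 1 M, (k : ℝ) ^ (-β) ≤ Cm)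
    {N P : ℕ} {τ ρ : ℕ → ℝ} (φ : ℕ → ℕ)
    (hN : 1 ≤ N) (hτ : ∀ i < N, τ i < τ (i + 1)) (hρ : ∀ i < P, ρ i < ρ (i + 1))
    (h0 : 0 ≤ τ 0) (hT : τ N ≤ T)
    (hφ0 : φ 0 = 0) (hφN : φ N = P) (hφmono : ∀ j < N, φ j < φ (j + 1))
    (hagree : ∀ j ≤ N, ρ (φ j) = τ j) :
    ‖RS Ξ ρ P - RS Ξ τ N‖
      ≤ Cδ * ((2 : ℝ) ^ β * Cm) * ∑ j ∈ Finset.range N, (τ (j + 1) - τ j) ^ β := by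
  have hτmono := tau_mono hτ
  have hφle : ∀ a b, a ≤ b → b ≤ N → φ a ≤ φ b := tau_mono hφmono
  have hCm0 : 0 ≤ Cm := le_trans (by simp) (hCm 0)
  have hRS : RS Ξ ρ P = ∑ j ∈ Finset.range N,
      ∑ k ∈ Finset.Ico (φ j) (φ (j + 1)), Ξ (ρ k) (ρ (k + 1)) := by
    rw [RS, ← hφN]
    exact sum_blocks _ φ hφ0 N (fun j hj => (hφmono j hj).le)
  have hdiff : RS Ξ ρ P - RS Ξ τ N = ∑ j ∈ Finset.range N,
      ((∑ k ∈ Finset.Ico (φ j) (φ (j + 1)), Ξ (ρ k) (ρ (k + 1))) - Ξ (τ j) (τ (j + 1))) := by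
    rw [hRS, RS, Finset.sum_sub_distrib]
  rw [hdiff]
  refine le_trans (norm_sum_le _ _) ?_
  rw [Finset.mul_sum]
  refine Finset.sum_le_sum fun j hj => ?_
  rw [Finset.mem_range] at hj
  -- the block partition
  set M := φ (j + 1) - φ j with hM
  set σ : ℕ → ℝ := fun k => ρ (φ j + k) with hσ
  have hM1 : 1 ≤ M := by have := hφmono j hj; omega
  have hφjP : φ (j + 1) ≤ P := by rw [← hφN]; exact hφle (j + 1) N (by omega) le_rfl
  have hσstep : ∀ k < M, σ k < σ (k + 1) := by
    intro k hk
    have : φ j + k < P := by omega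
    have h' := hρ (φ j + k) this
    simpa [hσ, Nat.add_assoc] using h'
  have hσ0 : σ 0 = τ j := by simp [hσ, hagree j (by omega)]
  have hσM : σ M = τ (j + 1) := by
    have : φ j + M = φ (j + 1) := by omega
    simp only [hσ, this]
    exact hagree (j + 1) (by omega)
  have hblock : ∑ k ∈ Finset.Ico (φ j) (φ (j + 1)), Ξ (ρ k) (ρ (k + 1)) = RS Ξ σ M := by
    rw [Finset.sum_Ico_eq_sum_range, RS]
    refine Finset.sum_congr rfl fun k _ => ?_
    simp only [hσ, Nat.add_assoc]
  rw [hblock, hσ0.symm, hσM.symm]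
  have h0' : 0 ≤ σ 0 := by rw [hσ0]; exact le_trans h0 (hτmono 0 j (by omega) (by omega))
  have hT' : σ M ≤ T := by rw [hσM]; exact le_trans (hτmono (j + 1) N (by omega) le_rfl) hT
  have hmax := maximal T β hβ Ξ Cδ hCδ0 hCδ M σ hM1 hσstep h0' hT'
  refine le_trans hmax ?_
  have hlen : (0:ℝ) ≤ (σ M - σ 0) ^ β := Real.rpow_nonneg
    (by have := tau_mono hσstep 0 M (by omega) le_rfl; linarith) _
  refine mul_le_mul_of_nonneg_right ?_ hlen
  refine mul_le_mul_of_nonneg_left ?_ hCδ0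
  refine mul_le_mul_of_nonneg_left (hCm _) (Real.rpow_nonneg (by norm_num) _)

end D


theorem merge_partitions {τ σ : ℕ → ℝ} {N M : ℕ}
    (hN : 1 ≤ N) (hM : 1 ≤ M)
    (hτ : ∀ i < N, τ i < τ (i + 1)) (hσ : ∀ i < M, σ i < σ (i + 1))
    (h00 : τ 0 = σ 0) (hNM : τ N = σ M) :
    ∃ (P : ℕ) (ρ : ℕ → ℝ) (φ ψ : ℕ → ℕ),
      1 ≤ P ∧ (∀ i < P, ρ i < ρ (i + 1)) ∧
      φ 0 = 0 ∧ φ N = P ∧ (∀ j < N, φ j < φ (j + 1)) ∧ (∀ j ≤ N, ρ (φ j) = τ j) ∧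
      ψ 0 = 0 ∧ ψ M = P ∧ (∀ j < M, ψ j < ψ (j + 1)) ∧ (∀ j ≤ M, ρ (ψ j) = σ j) := by
  classical
  set A : Finset ℝ := (Finset.range (N + 1)).image τ ∪ (Finset.range (M + 1)).image σ with hA
  set l : List ℝ := A.sort (· ≤ ·) with hl
  have hsort : l.Pairwise (· < ·) := (Finset.sortedLT_sort A).pairwise
  have hmemτ : ∀ j ≤ N, τ j ∈ l := by
    intro j hj
    rw [hl, Finset.mem_sort]
    exact Finset.mem_union_left _ (Finset.mem_image_of_mem τ (by rw [Finset.mem_range]; omega))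
  have hmemσ : ∀ j ≤ M, σ j ∈ l := by
    intro j hj
    rw [hl, Finset.mem_sort]
    exact Finset.mem_union_right _ (Finset.mem_image_of_mem σ (by rw [Finset.mem_range]; omega))
  have hτ0N : τ 0 < τ N := by
    calc τ 0 < τ 1 := hτ 0 (by omega)
      _ ≤ τ N := tau_mono hτ 1 N hN le_rfl
  have hlen2 : 2 ≤ l.length := by
    rw [hl, Finset.length_sort]
    refine Finset.one_lt_card.mpr ⟨τ 0, ?_, τ N, ?_, ne_of_lt hτ0N⟩
    · exact (Finset.mem_sort (α := ℝ) (· ≤ ·)).mp (hmemτ 0 (by omega))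
    · exact (Finset.mem_sort (α := ℝ) (· ≤ ·)).mp (hmemτ N le_rfl)
  set P : ℕ := l.length - 1 with hP
  set ρ : ℕ → ℝ := fun i => l.getD i 0 with hρ
  have hget : ∀ a b : ℕ, a < b → b < l.length → ρ a < ρ b := by
    intro a b hab hb
    have ha : a < l.length := lt_trans hab hb
    simp only [hρ, List.getD_eq_getElem _ _ ha, List.getD_eq_getElem _ _ hb]
    have := hsort.rel_get_of_lt (a := ⟨a, ha⟩) (b := ⟨b, hb⟩) hab
    simpa [List.get_eq_getElem] using this
  have hmemA : ∀ i, i < l.length → ρ i ∈ A := by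
    intro i hi
    rw [← Finset.mem_sort (α := ℝ) (· ≤ ·), ← hl]
    simp only [hρ, List.getD_eq_getElem _ _ hi]
    exact List.getElem_mem _
  have haux : ∀ x ∈ A, τ 0 ≤ x ∧ x ≤ τ N := by
    intro x hx
    rw [hA, Finset.mem_union] at hx
    rcases hx with hx | hx <;> rw [Finset.mem_image] at hx <;> obtain ⟨j, hj, rfl⟩ := hx
    · rw [Finset.mem_range] at hj
      exact ⟨tau_mono hτ 0 j (by omega) (by omega), tau_mono hτ j N (by omega) le_rfl⟩
    · rw [Finset.mem_range] at hj
      constructor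
      · rw [h00]; exact tau_mono hσ 0 j (by omega) (by omega)
      · rw [hNM]; exact tau_mono hσ j M (by omega) le_rfl
  -- generic index map construction
  have build : ∀ (υ : ℕ → ℝ) (K : ℕ), 1 ≤ K → (∀ i < K, υ i < υ (i + 1)) →
      υ 0 = τ 0 → υ K = τ N → (∀ j, j ≤ K → υ j ∈ l) →
      ∃ χ : ℕ → ℕ, χ 0 = 0 ∧ χ K = P ∧ (∀ j < K, χ j < χ (j + 1)) ∧
        (∀ j ≤ K, ρ (χ j) = υ j) := by
    intro υ K hK hustep hu0 huK humem
    set χ : ℕ → ℕ := fun j => l.idxOf (υ j) with hχ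
    have hχlt : ∀ j ≤ K, χ j < l.length := by
      intro j hj
      exact List.idxOf_lt_length_iff.mpr (humem j hj)
    have hρχ : ∀ j ≤ K, ρ (χ j) = υ j := by
      intro j hj
      simp only [hρ, hχ, List.getD_eq_getElem _ _ (hχlt j hj)]
      exact (List.getD_eq_getElem _ _ (hχlt j hj)).trans (List.getElem_idxOf (hχlt j hj))
    have hχmono : ∀ j < K, χ j < χ (j + 1) := by
      intro j hj
      by_contra hcon
      push_neg at hcon
      have h1 := hρχ j (by omega)
      have h2 := hρχ (j + 1) (by omega)
      have hv : υ j < υ (j + 1) := hustep j hj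
      rcases eq_or_lt_of_le hcon with he | hlt
      · rw [← h1, ← h2, he] at hv; exact lt_irrefl _ hv
      · have := hget _ _ hlt (hχlt j (by omega))
        rw [h1, h2] at this; linarith
    have hχ0 : χ 0 = 0 := by
      by_contra hne
      have h0lt : 0 < χ 0 := by omega
      have hlt := hget 0 (χ 0) h0lt (hχlt 0 (by omega))
      rw [hρχ 0 (by omega), hu0] at hlt
      have hmem0 := haux _ (hmemA 0 (by omega))
      linarith [hmem0.1]
    have hχK : χ K = P := by
      by_contra hne
      have hltP : χ K < P := by
        have := hχlt K le_rfl; omega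
      have hlt := hget (χ K) P hltP (by omega)
      rw [hρχ K le_rfl, huK] at hlt
      have hmemP := haux _ (hmemA P (by omega))
      linarith [hmemP.2]
    exact ⟨χ, hχ0, hχK, hχmono, hρχ⟩
  obtain ⟨φ, hφ0, hφK, hφmono, hφρ⟩ := build τ N hN hτ rfl rfl hmemτ
  obtain ⟨ψ, hψ0, hψK, hψmono, hψρ⟩ := build σ M hM hσ h00.symm hNM.symm hmemσ
  refine ⟨P, ρ, φ, ψ, by omega, ?_, hφ0, hφK, hφmono, hφρ, hψ0, hψK, hψmono, hψρ⟩
  intro i hi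
  exact hget i (i + 1) (by omega) (by omega)



lemma rpow_two_pow_cast {β : ℝ} (k : ℕ) :
    (((2 ^ k : ℕ)) : ℝ) ^ (-β) = (2 : ℝ) ^ ((k : ℝ) * (-β)) := by
  rw [Nat.cast_pow, Nat.cast_ofNat, ← Real.rpow_natCast (2 : ℝ) k,
    ← Real.rpow_mul (by norm_num)]

lemma geo_pow {β : ℝ} (k : ℕ) :
    ((2 : ℝ) ^ ((1 : ℝ) - β)) ^ k = (2 : ℝ) ^ (((1 : ℝ) - β) * (k : ℝ)) := by
  rw [← Real.rpow_natCast ((2 : ℝ) ^ ((1:ℝ) - β)) k, ← Real.rpow_mul (by norm_num)]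

lemma cond_ineq {β : ℝ} (hβ : 1 < β) :
    ∀ Mn : ℕ, ∑ k ∈ Finset.Icc 1 Mn, ((2 : ℝ) ^ ((1:ℝ) - β)) ^ k
      ≤ (2 : ℝ) ^ β * ∑ n ∈ Finset.Icc (2:ℕ) (2 ^ Mn), (n : ℝ) ^ (-β) := by
  intro Mn
  induction Mn with
  | zero =>
    rw [Finset.Icc_eq_empty (by omega), Finset.Icc_eq_empty (by norm_num)]
    simp
  | succ M IHm =>
    rw [Finset.sum_Icc_succ_top (by omega : 1 ≤ M + 1)]
    have hsplit : Finset.Icc (2:ℕ) (2 ^ (M + 1)) = Finset.Icc (2:ℕ) (2 ^ M) ∪ Finset.Ioc (2 ^ M) (2 ^ (M + 1)) := by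
      ext x
      simp only [Finset.mem_Icc, Finset.mem_Ioc, Finset.mem_union]
      have h1 : 1 ≤ 2 ^ M := Nat.one_le_two_pow
      have h2 : 2 ^ (M + 1) = 2 * 2 ^ M := by ring
      omega
    have hdisj : Disjoint (Finset.Icc (2:ℕ) (2 ^ M)) (Finset.Ioc (2 ^ M) (2 ^ (M + 1))) := by
      rw [Finset.disjoint_left]
      intro a ha hb
      rw [Finset.mem_Icc] at ha; rw [Finset.mem_Ioc] at hb; omega
    rw [hsplit, Finset.sum_union hdisj, mul_add]
    refine add_le_add IHm ?_
    -- lower bound the new block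
    have hlow : ∀ n ∈ Finset.Ioc ((2:ℕ) ^ M) (2 ^ (M + 1)),
        (((2 ^ (M + 1) : ℕ)) : ℝ) ^ (-β) ≤ (n : ℝ) ^ (-β) := by
      intro n hn
      rw [Finset.mem_Ioc] at hn
      have hn1 : 1 ≤ n := by have := Nat.one_le_two_pow (n := M); omega
      apply Real.rpow_le_rpow_of_nonpos
      · exact_mod_cast hn1
      · exact_mod_cast hn.2
      · linarith
    have hS2 := Finset.card_nsmul_le_sum _ _ _ hlow
    rw [Nat.card_Ioc] at hS2
    have hcard : 2 ^ (M + 1) - 2 ^ M = 2 ^ M := by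
      have : 2 ^ (M + 1) = 2 * 2 ^ M := by ring
      omega
    rw [hcard, nsmul_eq_mul] at hS2
    refine le_trans ?_ (mul_le_mul_of_nonneg_left hS2 (Real.rpow_nonneg (by norm_num) _))
    -- pure exponent computation
    rw [rpow_two_pow_cast, geo_pow]
    have hc : ((2 ^ M : ℕ) : ℝ) = (2 : ℝ) ^ ((M : ℝ)) := by
      rw [Nat.cast_pow, Nat.cast_ofNat, ← Real.rpow_natCast (2 : ℝ) M]
    rw [hc, ← Real.rpow_add (by norm_num : (0:ℝ) < 2), ← Real.rpow_add (by norm_num : (0:ℝ) < 2)]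
    rw [Real.rpow_le_rpow_left_iff (by norm_num : (1:ℝ) < 2)]
    push_cast
    nlinarith [hβ]

lemma geo_le_K {β : ℝ} (hβ : 1 < β) (m : ℕ) :
    ∑ k ∈ Finset.range m, ((2 : ℝ) ^ ((1:ℝ) - β)) ^ k
      ≤ (2 : ℝ) ^ β * ((∑' n : ℕ, ((n : ℝ) + 1) ^ (-β)) - 1) + 1 := by
  have hZ1 : (0:ℝ) ≤ (∑' n : ℕ, ((n : ℝ) + 1) ^ (-β)) - 1 := by
    linarith [one_le_Z hβ]
  have h2β : (0:ℝ) ≤ (2:ℝ) ^ β := Real.rpow_nonneg (by norm_num) _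
  rcases Nat.eq_zero_or_pos m with rfl | hm
  · rw [Finset.range_zero, Finset.sum_empty]; nlinarith
  obtain ⟨m', rfl⟩ : ∃ m', m = m' + 1 := ⟨m - 1, by omega⟩
  rw [Finset.sum_range_succ']
  have h2 : ∑ i ∈ Finset.range m', ((2:ℝ) ^ ((1:ℝ) - β)) ^ (i + 1)
      = ∑ k ∈ Finset.Icc 1 m', ((2:ℝ) ^ ((1:ℝ) - β)) ^ k := by
    rw [← Finset.Ico_add_one_right_eq_Icc, Finset.sum_Ico_eq_sum_range]
    exact Finset.sum_congr (by simp) fun i _ => by rw [add_comm 1 i]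
  rw [h2, pow_zero]
  have h3 := cond_ineq hβ m'
  have h4 := sum_Icc_two_le hβ (2 ^ m')
  nlinarith [h3, h4, h2β]


lemma glue_sum {γ : Type*} [AddCommMonoid γ] (G : ℝ → ℝ → γ) (du dt : ℕ → ℝ) (n : ℕ)
    (hn : 1 ≤ n) (hend : du n = dt 0) :
    ∑ i ∈ Finset.range (n + n),
        G (if i < n then du i else dt (i - n)) (if i + 1 < n then du (i + 1) else dt (i + 1 - n))
      = ∑ i ∈ Finset.range n, G (du i) (du (i + 1))
        + ∑ i ∈ Finset.range n, G (dt i) (dt (i + 1)) := by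
  rw [Finset.range_eq_Ico,
    ← Finset.sum_Ico_consecutive _ (by omega : 0 ≤ n) (by omega : n ≤ n + n),
    ← Finset.range_eq_Ico]
  congr 1
  · refine Finset.sum_congr rfl fun i hi => ?_
    rw [Finset.mem_range] at hi
    rcases lt_or_ge (i + 1) n with h | h
    · rw [if_pos hi, if_pos h]
    · have hin : i + 1 = n := by omega
      rw [if_pos hi, if_neg (by omega), hin, Nat.sub_self, ← hend]
  · rw [Finset.sum_Ico_eq_sum_range]
    refine Finset.sum_congr (by rw [show n + n - n = n by omega]) fun k hk => ?_
    rw [Finset.mem_range] at hk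
    rw [if_neg (by omega), if_neg (by omega)]
    congr 2 <;> omega

lemma sum_range_two_mul {γ : Type*} [AddCommMonoid γ] (f : ℕ → γ) :
    ∀ n, ∑ k ∈ Finset.range (2 * n), f k
      = ∑ i ∈ Finset.range n, (f (2 * i) + f (2 * i + 1)) := by
  intro n
  induction n with
  | zero => simp
  | succ n IH =>
    rw [Finset.sum_range_succ, ← IH, show 2 * (n + 1) = (2 * n) + 1 + 1 by ring,
      Finset.sum_range_succ, Finset.sum_range_succ, add_assoc]

end SewingAux
end SewingAuxSection

open SewingAux Finset in
set_option maxHeartbeats 1000000 in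
/-- Sewing lemma: given `Ξ` on the simplex over `[0,T]` with
`Ξ t t = 0`, finite `α`-Hölder norm and finite `β`-Hölder norm of `δΞ`
(`0 < α ≤ 1 < β`), there is a unique (on `[0,T]`) `α`-Hölder path `I` with
`I 0 = 0` satisfying the sewing bound with constant
`‖δΞ‖_β [2^β (ζ(β) - 1) + 1]`; moreover its increments are limits of
Riemann-type sums over partitions with vanishing mesh. -/
theorem sewing_lemma
    {W : Type*} [NormedAddCommGroup W] [NormedSpace ℝ W] [CompleteSpace W]
    (T : ℝ) (hT : 0 < T) (α β : ℝ) (hα0 : 0 < α) (hα1 : α ≤ 1) (hβ : 1 < β)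
    (Ξ : ℝ → ℝ → W)
    (hdiag : ∀ t, Ξ t t = 0)
    (C1 : ℝ) (hC1 : ∀ s t, 0 ≤ s → s ≤ t → t ≤ T → ‖Ξ s t‖ ≤ C1 * (t - s) ^ α)
    (Cδ : ℝ) (hCδ : ∀ s u t, 0 ≤ s → s ≤ u → u ≤ t → t ≤ T →
      ‖Ξ s t - Ξ s u - Ξ u t‖ ≤ Cδ * (t - s) ^ β) :
    ∃ I : ℝ → W,
      (I 0 = 0 ∧
      (∃ CI : ℝ, ∀ s t, 0 ≤ s → s ≤ t → t ≤ T → ‖I t - I s‖ ≤ CI * (t - s) ^ α) ∧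
      (∀ s t, 0 ≤ s → s ≤ t → t ≤ T →
        ‖I t - I s - Ξ s t‖
          ≤ Cδ * ((2 : ℝ) ^ β * ((∑' n : ℕ, ((n : ℝ) + 1) ^ (-β)) - 1) + 1) * (t - s) ^ β) ∧
      (∀ s t, 0 ≤ s → s ≤ t → t ≤ T → ∀ ε > 0, ∃ δ > 0,
        ∀ (N : ℕ) (τ : ℕ → ℝ), 0 < N → τ 0 = s → τ N = t →
          (∀ i < N, τ i < τ (i + 1)) → (∀ i < N, τ (i + 1) - τ i < δ) →
          ‖(∑ i ∈ Finset.range N, Ξ (τ i) (τ (i + 1))) - (I t - I s)‖ < ε)) ∧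
      -- uniqueness on `[0,T]` of any path with these properties
      (∀ J : ℝ → W,
        (J 0 = 0 ∧
        (∃ CJ : ℝ, ∀ s t, 0 ≤ s → s ≤ t → t ≤ T → ‖J t - J s‖ ≤ CJ * (t - s) ^ α) ∧
        (∀ s t, 0 ≤ s → s ≤ t → t ≤ T →
          ‖J t - J s - Ξ s t‖
            ≤ Cδ * ((2 : ℝ) ^ β * ((∑' n : ℕ, ((n : ℝ) + 1) ^ (-β)) - 1) + 1) * (t - s) ^ β)) →
        ∀ t, 0 ≤ t → t ≤ T → J t = I t) := by
  classical
  haveI : Nonempty W := ⟨0⟩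
  have hβ0 : (0:ℝ) < β := by linarith
  have hCδ0 : 0 ≤ Cδ := by
    have h := hCδ 0 (T / 2) T le_rfl (by linarith) (by linarith) le_rfl
    rw [sub_zero] at h
    have hTβ : 0 < T ^ β := Real.rpow_pos_of_pos hT β
    nlinarith [norm_nonneg (Ξ 0 T - Ξ 0 (T / 2) - Ξ (T / 2) T)]
  set Z : ℝ := ∑' n : ℕ, ((n : ℝ) + 1) ^ (-β) with hZdef
  have hZ1 : (1:ℝ) ≤ Z := one_le_Z hβ
  set K : ℝ := (2 : ℝ) ^ β * (Z - 1) + 1 with hKdef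
  have h2β : (0:ℝ) ≤ (2:ℝ) ^ β := Real.rpow_nonneg (by norm_num) _
  have hK0 : 0 ≤ K := by nlinarith
  set CR : ℝ := Cδ * ((2 : ℝ) ^ β * Z) with hCRdef
  have hCR0 : 0 ≤ CR := by
    apply mul_nonneg hCδ0; nlinarith
  set r : ℝ := (2 : ℝ) ^ ((1:ℝ) - β) with hrdef
  have hr0 : 0 ≤ r := Real.rpow_nonneg (by norm_num) _
  have hr1 : r < 1 := Real.rpow_lt_one_of_one_lt_of_neg (by norm_num) (by linarith)
  set Dm : ℝ → ℝ → ℕ → W := fun s t m =>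
    RS Ξ (fun i : ℕ => s + i * ((t - s) / 2 ^ m)) (2 ^ m) with hDmdef
  set A : ℝ → ℝ → W := fun s t => limUnder atTop (Dm s t) with hAdef
  -- dyadic length sums
  have hdylen : ∀ s t : ℝ, s < t → ∀ m : ℕ, ∀ x : ℕ → ℝ,
      (∀ i, x (i + 1) - x i = (t - s) / 2 ^ m) →
      ∑ i ∈ Finset.range (2 ^ m), (x (i + 1) - x i) ^ β = (t - s) ^ β * r ^ m := by
    intro s t hst m x hx
    have h2m : (0:ℝ) < 2 ^ m := by positivity
    have hc : ∑ i ∈ Finset.range (2 ^ m), (x (i + 1) - x i) ^ β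
        = ∑ _i ∈ Finset.range (2 ^ m), ((t - s) / 2 ^ m) ^ β :=
      Finset.sum_congr rfl fun i _ => by rw [hx i]
    rw [hc, Finset.sum_const, Finset.card_range, nsmul_eq_mul]
    rw [Real.div_rpow (by linarith) (le_of_lt h2m)]
    have e1 : ((2:ℝ) ^ m) ^ β = (2:ℝ) ^ ((m:ℝ) * β) := by
      rw [← Real.rpow_natCast (2:ℝ) m, ← Real.rpow_mul (by norm_num)]
    have e2 : ((2 ^ m : ℕ) : ℝ) = (2:ℝ) ^ ((m:ℝ)) := by
      rw [Nat.cast_pow, Nat.cast_ofNat, ← Real.rpow_natCast (2:ℝ) m]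
    rw [e1, e2, hrdef, geo_pow, show ((1:ℝ) - β) * (m:ℝ) = (m:ℝ) - (m:ℝ) * β by ring,
      Real.rpow_sub (by norm_num : (0:ℝ) < 2)]
    ring
  -- halving estimate
  have hhalf : ∀ s t : ℝ, 0 ≤ s → s < t → t ≤ T → ∀ m : ℕ,
      ‖Dm s t (m + 1) - Dm s t m‖ ≤ Cδ * (t - s) ^ β * r ^ m := by
    intro s t hs hst htT m
    have h2m : (0:ℝ) < 2 ^ m := by positivity
    have hts : (0:ℝ) < t - s := by linarith
    have hh : (0:ℝ) < (t - s) / 2 ^ m := by positivity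
    set x : ℕ → ℝ := fun i => s + i * ((t - s) / 2 ^ m) with hx
    set y : ℕ → ℝ := fun i => s + i * ((t - s) / 2 ^ (m + 1)) with hy
    have hxd : ∀ i : ℕ, x (i + 1) - x i = (t - s) / 2 ^ m := by
      intro i; simp only [hx]; push_cast; ring
    have hxstep : ∀ i : ℕ, x i < x (i + 1) := by
      intro i; refine sub_pos.mp ?_; rw [hxd i]; exact hh
    have hyd : ∀ i : ℕ, y (i + 1) - y i = (t - s) / 2 ^ (m + 1) := by
      intro i; simp only [hy]; push_cast; ring
    have hystep : ∀ i : ℕ, y i < y (i + 1) := by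
      intro i; refine sub_pos.mp ?_; rw [hyd i]; positivity
    have hyx : ∀ i : ℕ, y (2 * i) = x i := by
      intro i; simp only [hy, hx]; push_cast
      rw [pow_succ]
      field_simp
    have hxmono := tau_mono (N := 2 ^ m) (fun i _ => hxstep i)
    have hx0 : x 0 = s := by simp [hx]
    have hxN : x (2 ^ m) = t := by
      simp only [hx]; push_cast
      field_simp; ring
    have hkey : Dm s t (m + 1) - Dm s t m
        = ∑ i ∈ Finset.range (2 ^ m),
            (Ξ (x i) (y (2 * i + 1)) + Ξ (y (2 * i + 1)) (x (i + 1)) - Ξ (x i) (x (i + 1))) := by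
      rw [show Dm s t (m + 1) = RS Ξ y (2 ^ (m + 1)) from rfl,
        show Dm s t m = RS Ξ x (2 ^ m) from rfl, RS, RS,
        show (2:ℕ) ^ (m + 1) = 2 * 2 ^ m by ring, sum_range_two_mul, ← Finset.sum_sub_distrib]
      refine Finset.sum_congr rfl fun i hi => ?_
      rw [show 2 * i + 1 + 1 = 2 * (i + 1) by ring, hyx i, hyx (i + 1)]
    rw [hkey]
    refine le_trans (norm_sum_le _ _) ?_
    have hterm : ∀ i ∈ Finset.range (2 ^ m),
        ‖Ξ (x i) (y (2 * i + 1)) + Ξ (y (2 * i + 1)) (x (i + 1)) - Ξ (x i) (x (i + 1))‖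
          ≤ Cδ * (x (i + 1) - x i) ^ β := by
      intro i hi
      rw [Finset.mem_range] at hi
      have hxi0 : 0 ≤ x i := by
        have := hxmono 0 i (by omega) (by omega); rw [hx0] at this; linarith
      have hxi1T : x (i + 1) ≤ T := by
        have := hxmono (i + 1) (2 ^ m) (by omega) le_rfl; rw [hxN] at this; linarith
      have hmid1 : x i ≤ y (2 * i + 1) := by
        have := hystep (2 * i); rw [hyx i] at this; linarith
      have hmid2 : y (2 * i + 1) ≤ x (i + 1) := by
        have := hystep (2 * i + 1)
        rw [show 2 * i + 1 + 1 = 2 * (i + 1) by ring, hyx (i + 1)] at this; linarith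
      have e : Ξ (x i) (y (2 * i + 1)) + Ξ (y (2 * i + 1)) (x (i + 1)) - Ξ (x i) (x (i + 1))
          = -(Ξ (x i) (x (i + 1)) - Ξ (x i) (y (2 * i + 1)) - Ξ (y (2 * i + 1)) (x (i + 1))) := by
        abel
      rw [e, norm_neg]
      exact hCδ (x i) (y (2 * i + 1)) (x (i + 1)) hxi0 hmid1 hmid2 hxi1T
    refine le_trans (Finset.sum_le_sum hterm) ?_
    rw [← Finset.mul_sum, hdylen s t hst m x hxd, ← mul_assoc]
  -- convergence to A
  have hAconv : ∀ s t : ℝ, 0 ≤ s → s < t → t ≤ T →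
      Filter.Tendsto (Dm s t) Filter.atTop (nhds (A s t)) := by
    intro s t hs hst htT
    have hc : CauchySeq (Dm s t) := by
      refine SeminormedAddCommGroup.cauchySeq_of_le_geometric (C := Cδ * (t - s) ^ β) hr1 ?_
      intro n
      rw [norm_sub_rev]
      exact hhalf s t hs hst htT n
    obtain ⟨L, hL⟩ := cauchySeq_tendsto_of_complete hc
    have : A s t = L := hL.limUnder_eq
    rw [this]
    exact hL
  -- the sewing bound for A
  have hAbound : ∀ s t : ℝ, 0 ≤ s → s < t → t ≤ T →
      ‖A s t - Ξ s t‖ ≤ Cδ * K * (t - s) ^ β := by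
    intro s t hs hst htT
    have hD0 : Dm s t 0 = Ξ s t := by
      rw [show Dm s t 0 = RS Ξ (fun i : ℕ => s + i * ((t - s) / 2 ^ 0)) (2 ^ 0) from rfl, RS,
        show (2:ℕ) ^ 0 = 1 from rfl, Finset.sum_range_one]
      congr 1 <;> push_cast <;> ring
    have hrec : ∀ m, ‖Dm s t m - Ξ s t‖ ≤ (Cδ * (t - s) ^ β) * ∑ k ∈ Finset.range m, r ^ k := by
      intro m
      induction m with
      | zero => simp [hD0]
      | succ m IH =>
        have e : Dm s t (m + 1) - Ξ s t
            = (Dm s t m - Ξ s t) + (Dm s t (m + 1) - Dm s t m) := by abel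
        rw [e]
        refine le_trans (norm_add_le _ _) ?_
        rw [Finset.sum_range_succ, mul_add]
        exact add_le_add IH (hhalf s t hs hst htT m)
    have hlim : Filter.Tendsto (fun m => ‖Dm s t m - Ξ s t‖) Filter.atTop
        (nhds ‖A s t - Ξ s t‖) := ((hAconv s t hs hst htT).sub_const _).norm
    refine le_of_tendsto' hlim fun m => ?_
    have hCts : 0 ≤ Cδ * (t - s) ^ β := mul_nonneg hCδ0 (Real.rpow_nonneg (by linarith) _)
    calc ‖Dm s t m - Ξ s t‖ ≤ (Cδ * (t - s) ^ β) * ∑ k ∈ Finset.range m, r ^ k := hrec m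
      _ ≤ (Cδ * (t - s) ^ β) * K := by
          refine mul_le_mul_of_nonneg_left ?_ hCts
          rw [hrdef, hKdef]
          exact geo_le_K hβ m
      _ = Cδ * K * (t - s) ^ β := by ring
  -- master estimate for arbitrary partitions
  have hmaster : ∀ s t : ℝ, 0 ≤ s → s < t → t ≤ T → ∀ (N : ℕ) (τ : ℕ → ℝ),
      1 ≤ N → (∀ i < N, τ i < τ (i + 1)) → τ 0 = s → τ N = t →
      ‖RS Ξ τ N - A s t‖ ≤ CR * ∑ j ∈ Finset.range N, (τ (j + 1) - τ j) ^ β := by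
    intro s t hs hst htT N τ hN hstep h0 hNt
    have hcomp : ∀ m : ℕ, ‖RS Ξ τ N - Dm s t m‖
        ≤ CR * (∑ j ∈ Finset.range N, (τ (j + 1) - τ j) ^ β) + (CR * (t - s) ^ β) * r ^ m := by
      intro m
      have h2m : (0:ℝ) < 2 ^ m := by positivity
      set d : ℕ → ℝ := fun i => s + i * ((t - s) / 2 ^ m) with hd
      have hdd : ∀ i : ℕ, d (i + 1) - d i = (t - s) / 2 ^ m := by
        intro i; simp only [hd]; push_cast; ring
      have hdstep : ∀ i : ℕ, d i < d (i + 1) := by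
        intro i; refine sub_pos.mp ?_; rw [hdd i]
        exact div_pos (by linarith) h2m
      have hd0 : d 0 = s := by simp [hd]
      have hdN : d (2 ^ m) = t := by
        simp only [hd]; push_cast; field_simp; ring
      obtain ⟨P, ρ, φ, ψ, hP1, hρstep, hφ0, hφN, hφmono, hφρ, hψ0, hψN, hψmono, hψρ⟩ :=
        merge_partitions (τ := τ) (σ := d) hN Nat.one_le_two_pow hstep (fun i _ => hdstep i)
          (by rw [h0, hd0]) (by rw [hNt, hdN])
      have hb1 := refine_bound T β hβ Ξ Cδ hCδ0 hCδ Z (fun M => sum_Icc_le_Z hβ M) φ hN hstep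
        hρstep (by rw [h0]; exact hs) (by rw [hNt]; exact htT) hφ0 hφN hφmono hφρ
      have hb2 := refine_bound T β hβ Ξ Cδ hCδ0 hCδ Z (fun M => sum_Icc_le_Z hβ M) ψ
        Nat.one_le_two_pow (fun i _ => hdstep i) hρstep (by rw [hd0]; exact hs)
        (by rw [hdN]; exact htT) hψ0 hψN hψmono hψρ
      rw [hdylen s t hst m d hdd] at hb2
      have hDd : Dm s t m = RS Ξ d (2 ^ m) := rfl
      have htri : ‖RS Ξ τ N - Dm s t m‖
          ≤ ‖RS Ξ ρ P - RS Ξ τ N‖ + ‖RS Ξ ρ P - RS Ξ d (2 ^ m)‖ := by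
        rw [hDd]
        have e : RS Ξ τ N - RS Ξ d (2 ^ m)
            = -(RS Ξ ρ P - RS Ξ τ N) + (RS Ξ ρ P - RS Ξ d (2 ^ m)) := by abel
        rw [e]
        exact le_trans (norm_add_le _ _) (by rw [norm_neg])
      refine le_trans htri ?_
      have e2 : CR * ∑ j ∈ Finset.range N, (τ (j + 1) - τ j) ^ β
          = Cδ * ((2:ℝ) ^ β * Z) * ∑ j ∈ Finset.range N, (τ (j + 1) - τ j) ^ β := by
        rw [hCRdef]
      have e3 : (CR * (t - s) ^ β) * r ^ m = Cδ * ((2:ℝ) ^ β * Z) * ((t - s) ^ β * r ^ m) := by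
        rw [hCRdef]; ring
      rw [e2, e3]
      exact add_le_add hb1 hb2
    have h1 : Filter.Tendsto (fun m => ‖RS Ξ τ N - Dm s t m‖) Filter.atTop
        (nhds ‖RS Ξ τ N - A s t‖) :=
      (Filter.Tendsto.sub tendsto_const_nhds (hAconv s t hs hst htT)).norm
    have h2 : Filter.Tendsto
        (fun m => CR * (∑ j ∈ Finset.range N, (τ (j + 1) - τ j) ^ β) + (CR * (t - s) ^ β) * r ^ m)
        Filter.atTop (nhds (CR * (∑ j ∈ Finset.range N, (τ (j + 1) - τ j) ^ β) + 0)) := by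
      refine Filter.Tendsto.add tendsto_const_nhds ?_
      have := (tendsto_pow_atTop_nhds_zero_of_lt_one hr0 hr1).const_mul (CR * (t - s) ^ β)
      simpa using this
    have := le_of_tendsto_of_tendsto' h1 h2 hcomp
    simpa using this
  -- additivity of A
  have hAadd : ∀ s u t : ℝ, 0 ≤ s → s < u → u < t → t ≤ T → A s u + A u t = A s t := by
    intro s u t hs hsu hut htT
    have hst : s < t := hsu.trans hut
    have key : ∀ m : ℕ, ‖(Dm s u m + Dm u t m) - A s t‖
        ≤ (CR * ((u - s) ^ β + (t - u) ^ β)) * r ^ m := by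
      intro m
      have h2m : (0:ℝ) < 2 ^ m := by positivity
      set n : ℕ := 2 ^ m with hn
      have hn1 : 1 ≤ n := Nat.one_le_two_pow
      set du : ℕ → ℝ := fun i => s + i * ((u - s) / 2 ^ m) with hdu
      set dt : ℕ → ℝ := fun i => u + i * ((t - u) / 2 ^ m) with hdt
      have hdud : ∀ i : ℕ, du (i + 1) - du i = (u - s) / 2 ^ m := by
        intro i; simp only [hdu]; push_cast; ring
      have hdtd : ∀ i : ℕ, dt (i + 1) - dt i = (t - u) / 2 ^ m := by
        intro i; simp only [hdt]; push_cast; ring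
      have hdustep : ∀ i : ℕ, du i < du (i + 1) := by
        intro i; refine sub_pos.mp ?_; rw [hdud i]
        exact div_pos (by linarith) h2m
      have hdtstep : ∀ i : ℕ, dt i < dt (i + 1) := by
        intro i; refine sub_pos.mp ?_; rw [hdtd i]
        exact div_pos (by linarith) h2m
      have hdu0 : du 0 = s := by simp [hdu]
      have hdun : du n = u := by simp only [hdu, hn]; push_cast; field_simp; ring
      have hdt0 : dt 0 = u := by simp [hdt]
      have hdtn : dt n = t := by simp only [hdt, hn]; push_cast; field_simp; ring
      set τg : ℕ → ℝ := fun i => if i < n then du i else dt (i - n) with hτg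
      have hτgl : ∀ i, i < n → τg i = du i := by
        intro i hi; simp only [hτg]; rw [if_pos hi]
      have hτgr : ∀ k : ℕ, τg (n + k) = dt k := by
        intro k; simp only [hτg]; rw [if_neg (by omega)]
        congr 1; omega
      have hτgl' : ∀ i, i < n → τg (i + 1) = du (i + 1) := by
        intro i hi
        rcases lt_or_ge (i + 1) n with h' | h'
        · exact hτgl (i + 1) h'
        · have : i + 1 = n := by omega
          rw [this]
          have := hτgr 0
          rw [Nat.add_zero] at this
          rw [this, hdt0, ← hdun]
      have hτgstep : ∀ i < n + n, τg i < τg (i + 1) := by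
        intro i hi
        rcases lt_or_ge i n with h' | h'
        · rw [hτgl i h', hτgl' i h']
          exact hdustep i
        · obtain ⟨k, rfl⟩ : ∃ k, i = n + k := ⟨i - n, by omega⟩
          rw [hτgr k, show n + k + 1 = n + (k + 1) by omega, hτgr (k + 1)]
          exact hdtstep k
      have hτg0 : τg 0 = s := by rw [hτgl 0 (by omega), hdu0]
      have hτgN : τg (n + n) = t := by rw [hτgr n, hdtn]
      have hRSsplit : RS Ξ τg (n + n) = Dm s u m + Dm u t m := by
        rw [RS]
        have := glue_sum Ξ du dt n hn1 (by rw [hdun, hdt0])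
        rw [show Dm s u m = RS Ξ du n from rfl, show Dm u t m = RS Ξ dt n from rfl, RS, RS]
        exact this
      have hlensplit : ∑ j ∈ Finset.range (n + n), (τg (j + 1) - τg j) ^ β
          = (u - s) ^ β * r ^ m + (t - u) ^ β * r ^ m := by
        have := glue_sum (fun a b => (b - a) ^ β) du dt n hn1 (by rw [hdun, hdt0])
        rw [this, hdylen s u hsu m du hdud, hdylen u t hut m dt hdtd]
      have hm := hmaster s t hs hst htT (n + n) τg (by omega) hτgstep hτg0 hτgN
      rw [hRSsplit, hlensplit] at hm
      refine le_trans hm (le_of_eq ?_)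
      ring
    have h1 : Filter.Tendsto (fun m => ‖(Dm s u m + Dm u t m) - A s t‖) Filter.atTop
        (nhds ‖(A s u + A u t) - A s t‖) :=
      (((hAconv s u hs hsu (by linarith)).add
        (hAconv u t (by linarith) hut htT)).sub_const _).norm
    have h2 : Filter.Tendsto (fun m => (CR * ((u - s) ^ β + (t - u) ^ β)) * r ^ m)
        Filter.atTop (nhds 0) := by
      have := (tendsto_pow_atTop_nhds_zero_of_lt_one hr0 hr1).const_mul
        (CR * ((u - s) ^ β + (t - u) ^ β))
      simpa using this
    have hle := le_of_tendsto_of_tendsto' h1 h2 key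
    exact sub_eq_zero.mp (norm_le_zero_iff.mp hle)
  -- A vanishes on the diagonal
  have hAdiag : ∀ t : ℝ, A t t = 0 := by
    intro t
    have hDm0 : ∀ m, Dm t t m = 0 := by
      intro m
      show RS Ξ _ _ = 0
      rw [RS]
      refine Finset.sum_eq_zero fun i _ => ?_
      have e : ∀ j : ℕ, t + (j:ℝ) * ((t - t) / 2 ^ m) = t := by
        intro j; simp
      simp only [e]
      exact hdiag t
    show limUnder Filter.atTop (Dm t t) = 0
    have : Filter.Tendsto (Dm t t) Filter.atTop (nhds 0) :=
      Filter.Tendsto.congr (fun m => (hDm0 m).symm) tendsto_const_nhds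
    exact this.limUnder_eq
  -- increments of I
  have hIncr : ∀ s t : ℝ, 0 ≤ s → s ≤ t → t ≤ T → A 0 t - A 0 s = A s t := by
    intro s t hs hst htT
    rcases eq_or_lt_of_le hst with rfl | h
    · rw [sub_self, hAdiag]
    rcases eq_or_lt_of_le hs with rfl | hs0
    · rw [hAdiag, sub_zero]
    · have := hAadd 0 s t le_rfl hs0 h htT
      rw [← this]; abel
  -- the sewing bound for I
  have hsewing : ∀ s t : ℝ, 0 ≤ s → s ≤ t → t ≤ T →
      ‖A 0 t - A 0 s - Ξ s t‖ ≤ Cδ * K * (t - s) ^ β := by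
    intro s t hs hst htT
    rcases eq_or_lt_of_le hst with rfl | h
    · rw [sub_self (A 0 s), zero_sub, norm_neg, hdiag, norm_zero, sub_self s,
        Real.zero_rpow (ne_of_gt hβ0), mul_zero]
    · rw [hIncr s t hs hst htT]
      exact hAbound s t hs h htT
  have hC10 : 0 ≤ C1 := by
    have h := hC1 0 T le_rfl (le_of_lt hT) le_rfl
    rw [sub_zero] at h
    have hTα : 0 < T ^ α := Real.rpow_pos_of_pos hT α
    nlinarith [norm_nonneg (Ξ 0 T)]
  refine ⟨fun t => A 0 t, ⟨hAdiag 0, ?_, ?_, ?_⟩, ?_⟩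
  · -- Hölder bound
    refine ⟨Cδ * K * T ^ (β - α) + C1, fun s t hs hst htT => ?_⟩
    show ‖A 0 t - A 0 s‖ ≤ (Cδ * K * T ^ (β - α) + C1) * (t - s) ^ α
    have h1 := hsewing s t hs hst htT
    have h2 := hC1 s t hs hst htT
    have h3 : ‖A 0 t - A 0 s‖ ≤ ‖A 0 t - A 0 s - Ξ s t‖ + ‖Ξ s t‖ := by
      have hna := norm_add_le (A 0 t - A 0 s - Ξ s t) (Ξ s t)
      have e : A 0 t - A 0 s - Ξ s t + Ξ s t = A 0 t - A 0 s := by abel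
      rwa [e] at hna
    have h4 : (t - s) ^ β ≤ T ^ (β - α) * (t - s) ^ α := by
      rcases eq_or_lt_of_le hst with rfl | h
      · rw [sub_self, Real.zero_rpow (ne_of_gt hβ0), Real.zero_rpow (ne_of_gt hα0), mul_zero]
      · have hts : (0:ℝ) < t - s := by linarith
        have e : (t - s) ^ β = (t - s) ^ (β - α) * (t - s) ^ α := by
          rw [← Real.rpow_add hts]; congr 1; ring
        rw [e]
        refine mul_le_mul_of_nonneg_right ?_ (Real.rpow_nonneg hts.le _)
        refine Real.rpow_le_rpow hts.le ?_ (by linarith)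
        linarith
    have h5 : Cδ * K * (t - s) ^ β ≤ Cδ * K * (T ^ (β - α) * (t - s) ^ α) :=
      mul_le_mul_of_nonneg_left h4 (mul_nonneg hCδ0 hK0)
    calc ‖A 0 t - A 0 s‖ ≤ Cδ * K * (t - s) ^ β + C1 * (t - s) ^ α :=
          le_trans h3 (add_le_add h1 h2)
      _ ≤ Cδ * K * (T ^ (β - α) * (t - s) ^ α) + C1 * (t - s) ^ α := by linarith
      _ = (Cδ * K * T ^ (β - α) + C1) * (t - s) ^ α := by ring
  · -- sewing bound
    intro s t hs hst htT
    exact hsewing s t hs hst htT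
  · -- Riemann sums
    intro s t hs hst htT ε hε
    rcases eq_or_lt_of_le hst with rfl | h
    · refine ⟨1, by norm_num, fun N τ hN h0 hN' hstep hmesh => ?_⟩
      have hlt := tau_strict hstep 0 N hN le_rfl
      rw [h0, hN'] at hlt
      exact absurd hlt (lt_irrefl _)
    · obtain ⟨B, hBdef⟩ : ∃ x : ℝ, x = CR * (t - s) := ⟨_, rfl⟩
      have hB0 : 0 ≤ B := by
        rw [hBdef]; exact mul_nonneg hCR0 (by linarith)
      obtain ⟨c, hcdef⟩ : ∃ x : ℝ, x = ε / (B + 1) := ⟨_, rfl⟩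
      have hc0 : 0 < c := by rw [hcdef]; exact div_pos hε (by linarith)
      obtain ⟨δ0, hδ0def⟩ : ∃ x : ℝ, x = c ^ ((1:ℝ) / (β - 1)) := ⟨_, rfl⟩
      have hδ0pos : 0 < δ0 := by rw [hδ0def]; exact Real.rpow_pos_of_pos hc0 _
      have hδ0pow : δ0 ^ (β - 1) = c := by
        rw [hδ0def, ← Real.rpow_mul hc0.le, one_div,
          inv_mul_cancel₀ (by linarith : β - 1 ≠ 0), Real.rpow_one]
      refine ⟨δ0, hδ0pos, fun N τ hN h0 hN' hstep hmesh => ?_⟩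
      show ‖RS Ξ τ N - (A 0 t - A 0 s)‖ < ε
      rw [hIncr s t hs hst htT]
      have hm := hmaster s t hs h htT N τ (by omega) hstep h0 hN'
      have hsum := sum_len_rpow_le hβ hδ0pos.le hstep (fun i hi => (hmesh i hi).le)
      rw [h0, hN', hδ0pow] at hsum
      have hfin : B * c < ε := by
        rw [hcdef, ← mul_div_assoc, div_lt_iff₀ (by linarith : (0:ℝ) < B + 1)]
        have he : ε * (B + 1) - B * ε = ε := by ring
        linarith
      calc ‖RS Ξ τ N - A s t‖
          ≤ CR * ∑ j ∈ Finset.range N, (τ (j + 1) - τ j) ^ β := hm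
        _ ≤ CR * (c * (t - s)) := mul_le_mul_of_nonneg_left hsum hCR0
        _ = B * c := by rw [hBdef, hcdef]; ring
        _ < ε := hfin
  · -- uniqueness
    rintro J ⟨hJ0, -, hJsew⟩ t ht htT
    rcases eq_or_lt_of_le ht with rfl | ht0
    · show J 0 = A 0 0
      rw [hJ0, hAdiag 0]
    · show J t = A 0 t
      have hdiffb : ∀ n : ℕ, 1 ≤ n →
          ‖J t - A 0 t‖ ≤ 2 * (Cδ * K) * t ^ β * (n:ℝ) ^ ((1:ℝ) - β) := by
        intro n hn
        have hnpos : (0:ℝ) < n := by exact_mod_cast hn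
        have hne : (n:ℝ) ≠ 0 := ne_of_gt hnpos
        set x : ℕ → ℝ := fun i => (i:ℝ) * (t / n) with hxdef
        have hx0 : x 0 = 0 := by simp [hxdef]
        have hxn : x n = t := by
          simp only [hxdef]
          rw [mul_comm, div_mul_cancel₀ t hne]
        have hxd : ∀ i : ℕ, x (i + 1) - x i = t / n := by
          intro i; simp only [hxdef]; push_cast; ring
        have htn0 : (0:ℝ) ≤ t / n := div_nonneg ht0.le hnpos.le
        have hxmem : ∀ i : ℕ, i ≤ n → 0 ≤ x i ∧ x i ≤ T := by
          intro i hi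
          constructor
          · simp only [hxdef]
            exact mul_nonneg (Nat.cast_nonneg i) htn0
          · have h1 : (i:ℝ) ≤ n := by exact_mod_cast hi
            have h2 : x i ≤ (n:ℝ) * (t / n) := by
              simp only [hxdef]
              exact mul_le_mul_of_nonneg_right h1 htn0
            have h3 : (n:ℝ) * (t / n) = t := by
              rw [mul_comm, div_mul_cancel₀ t hne]
            linarith
        set g : ℕ → W := fun i => J (x i) - A 0 (x i) with hgdef
        have htele : ∑ i ∈ Finset.range n, (g (i + 1) - g i) = g n - g 0 :=
          Finset.sum_range_sub g n
        have hg0 : g 0 = 0 := by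
          simp only [hgdef, hx0, hJ0, hAdiag 0, sub_zero]
        have hgn : g n = J t - A 0 t := by simp only [hgdef, hxn]
        have hJIeq : J t - A 0 t = ∑ i ∈ Finset.range n, (g (i + 1) - g i) := by
          rw [htele, hg0, hgn, sub_zero]
        rw [hJIeq]
        refine le_trans (norm_sum_le _ _) ?_
        have hterm : ∀ i ∈ Finset.range n,
            ‖g (i + 1) - g i‖ ≤ 2 * (Cδ * K) * (t / n) ^ β := by
          intro i hi
          rw [Finset.mem_range] at hi
          have hmi := hxmem i (by omega)
          have hmi1 := hxmem (i + 1) (by omega)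
          have hxle : x i ≤ x (i + 1) := by
            have := hxd i; linarith
          have e : g (i + 1) - g i
              = (J (x (i + 1)) - J (x i) - Ξ (x i) (x (i + 1)))
                - (A 0 (x (i + 1)) - A 0 (x i) - Ξ (x i) (x (i + 1))) := by
            simp only [hgdef]; abel
          rw [e]
          refine le_trans (norm_sub_le _ _) ?_
          have h1 := hJsew (x i) (x (i + 1)) hmi.1 hxle hmi1.2
          have h2 := hsewing (x i) (x (i + 1)) hmi.1 hxle hmi1.2
          calc ‖J (x (i + 1)) - J (x i) - Ξ (x i) (x (i + 1))‖
                + ‖A 0 (x (i + 1)) - A 0 (x i) - Ξ (x i) (x (i + 1))‖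
              ≤ Cδ * K * (x (i + 1) - x i) ^ β + Cδ * K * (x (i + 1) - x i) ^ β :=
                add_le_add h1 h2
            _ = 2 * (Cδ * K) * (t / n) ^ β := by rw [hxd i]; ring
        refine le_trans (Finset.sum_le_sum hterm) ?_
        rw [Finset.sum_const, Finset.card_range, nsmul_eq_mul]
        have e2 : (n:ℝ) * (2 * (Cδ * K) * (t / n) ^ β)
            = 2 * (Cδ * K) * t ^ β * (n:ℝ) ^ ((1:ℝ) - β) := by
          rw [Real.div_rpow ht0.le hnpos.le, Real.rpow_sub hnpos, Real.rpow_one]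
          field_simp
        rw [e2]
      have hlim : Filter.Tendsto (fun n : ℕ => 2 * (Cδ * K) * t ^ β * (n:ℝ) ^ ((1:ℝ) - β))
          Filter.atTop (nhds 0) := by
        have h1 : Filter.Tendsto (fun y : ℝ => y ^ ((1:ℝ) - β)) Filter.atTop (nhds 0) := by
          have := tendsto_rpow_neg_atTop (by linarith : (0:ℝ) < β - 1)
          simpa [show -(β - 1) = 1 - β by ring] using this
        have h2 := h1.comp (tendsto_natCast_atTop_atTop (R := ℝ))
        have h3 := h2.const_mul (2 * (Cδ * K) * t ^ β)
        simpa [Function.comp] using h3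
      have hle : ‖J t - A 0 t‖ ≤ 0 :=
        ge_of_tendsto hlim (Filter.eventually_atTop.mpr ⟨1, fun n hn => hdiffb n hn⟩)
      exact sub_eq_zero.mp (norm_le_zero_iff.mp hle)
end

section
/- In the setting of the Sewing lemma, for any partition $\mathcal{P}$ of $[s,t]$ one has the maximal inequality $\left|\sum_{[u,v]\in\mathcal{P}} \Xi_{u,v} - \Xi_{s,t}\right| \le \|\delta\Xi\|_{\beta}\,[2^{\beta}(\zeta(\beta)-1)+1]\,|t-s|^{\beta}$. -/
lemma sew_aux_mono (τ : ℕ → ℝ) (M : ℕ) (h : ∀ i < M, τ i < τ (i + 1)) :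
    ∀ j k, j ≤ k → k ≤ M → τ j ≤ τ k := by
  intro j k hjk
  induction k, hjk using Nat.le_induction with
  | base => intro _; exact le_refl _
  | succ k hjk ih =>
    intro hk
    exact le_trans (ih (by omega)) (le_of_lt (h k (by omega)))

lemma sew_key {W : Type*} [NormedAddCommGroup W] [NormedSpace ℝ W]
    (T : ℝ) (β : ℝ) (hβ : 1 < β)
    (Ξ : ℝ → ℝ → W)
    (Cδ : ℝ) (hCδ0 : 0 ≤ Cδ)
    (hCδ : ∀ s u t, 0 ≤ s → s ≤ u → u ≤ t → t ≤ T →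
      ‖Ξ s t - Ξ s u - Ξ u t‖ ≤ Cδ * (t - s) ^ β) :
    ∀ N, 0 < N → ∀ s t : ℝ, ∀ τ : ℕ → ℝ, 0 ≤ s → s ≤ t → t ≤ T → τ 0 = s → τ N = t →
      (∀ i < N, τ i < τ (i + 1)) →
      ‖(∑ i ∈ Finset.range N, Ξ (τ i) (τ (i + 1))) - Ξ s t‖
        ≤ Cδ * (1 + 2 ^ β * ∑ k ∈ Finset.Ico 2 N, ((k : ℝ)) ^ (-β)) * (t - s) ^ β := by
  intro N
  induction N with
  | zero => intro h; omega
  | succ N ih =>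
    intro _ s t τ hs hst htT hτ0 hτN hm
    rcases Nat.lt_or_ge N 2 with hN2 | hN2
    · interval_cases N
      · -- one interval : sum = Ξ s t
        have h1 : (0:ℝ) ≤ (t - s) ^ β := Real.rpow_nonneg (by linarith) _
        have h2 : Finset.Ico 2 (0 + 1) = (∅ : Finset ℕ) := Finset.Ico_eq_empty (by omega)
        have hz : ∑ i ∈ Finset.range (0 + 1), Ξ (τ i) (τ (i + 1)) = Ξ s t := by
          simp only [Nat.zero_add, Finset.sum_range_one, hτ0]
          try congr 1
          try simpa using hτN
        rw [hz, h2]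
        simp only [Finset.sum_empty, mul_zero, add_zero, mul_one, sub_self, norm_zero]
        exact mul_nonneg hCδ0 h1
      · -- two intervals
        have h2 : Finset.Ico 2 (1 + 1) = (∅ : Finset ℕ) := Finset.Ico_eq_empty (by omega)
        rw [h2]
        simp only [Finset.sum_empty, mul_zero, add_zero, mul_one]
        have hsum : ∑ i ∈ Finset.range 2, Ξ (τ i) (τ (i + 1))
            = Ξ s (τ 1) + Ξ (τ 1) t := by
          rw [Finset.sum_range_succ, Finset.sum_range_one, hτ0]
          norm_num [hτN]
        rw [hsum]
        have h01 : s ≤ τ 1 := hτ0 ▸ (hm 0 (by norm_num)).le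
        have h12 : τ 1 ≤ t := hτN ▸ (hm 1 (by norm_num)).le
        calc ‖Ξ s (τ 1) + Ξ (τ 1) t - Ξ s t‖
            = ‖Ξ s t - Ξ s (τ 1) - Ξ (τ 1) t‖ := by
              rw [← norm_neg]; congr 1; abel
          _ ≤ Cδ * (t - s) ^ β := hCδ s (τ 1) t hs h01 h12 htT
    · -- N ≥ 2, partition with N+1 intervals
      have hmono' := sew_aux_mono τ (N + 1) hm
      have hNpos : (0:ℝ) < N := by exact_mod_cast (by omega : 0 < N)
      -- find an index to remove
      have hex : ∃ m : ℕ, m + 1 ≤ N ∧ τ (m + 2) - τ m ≤ 2 * (t - s) / N := by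
        by_contra hcon
        push_neg at hcon
        have hlt : ∀ i ∈ Finset.Ico 1 (N + 1),
            2 * (t - s) / N < τ (i + 1) - τ (i - 1) := by
          intro i hi
          simp only [Finset.mem_Ico] at hi
          obtain ⟨m, rfl⟩ : ∃ m, i = m + 1 := ⟨i - 1, by omega⟩
          simpa using hcon m (by omega)
        have hsumlt : ∑ _i ∈ Finset.Ico 1 (N + 1), (2 * (t - s) / N)
            < ∑ i ∈ Finset.Ico 1 (N + 1), (τ (i + 1) - τ (i - 1)) :=
          Finset.sum_lt_sum_of_nonempty (by simp; omega) hlt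
        have hconst : ∑ _i ∈ Finset.Ico 1 (N + 1), (2 * (t - s) / N) = 2 * (t - s) := by
          rw [Finset.sum_const, Nat.card_Ico]
          simp only [Nat.add_sub_cancel, nsmul_eq_mul]
          field_simp
        have hsplit : ∑ i ∈ Finset.Ico 1 (N + 1), (τ (i + 1) - τ (i - 1))
            = (∑ i ∈ Finset.Ico 1 (N + 1), (τ (i + 1) - τ i))
              + ∑ i ∈ Finset.Ico 1 (N + 1), (τ i - τ (i - 1)) := by
          rw [← Finset.sum_add_distrib]
          apply Finset.sum_congr rfl
          intro i _; ring
        have ht1 : ∑ i ∈ Finset.Ico 1 (N + 1), (τ (i + 1) - τ i)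
            = τ (N + 1) - τ 1 := by
          rw [Finset.sum_Ico_eq_sub _ (by omega)]
          rw [Finset.sum_range_sub (fun i => τ i), Finset.sum_range_sub (fun i => τ i)]
          simp
        have ht2 : ∑ i ∈ Finset.Ico 1 (N + 1), (τ i - τ (i - 1))
            = τ N - τ 0 := by
          rw [Finset.sum_Ico_eq_sum_range, show N + 1 - 1 = N from rfl,
            ← Finset.sum_range_sub (fun i => τ i) N]
          apply Finset.sum_congr rfl
          intro k _
          have e1 : 1 + k = k + 1 := by omega
          have e2 : 1 + k - 1 = k := by omega
          rw [e1]
          norm_num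
        have hub : ∑ i ∈ Finset.Ico 1 (N + 1), (τ (i + 1) - τ (i - 1)) ≤ 2 * (t - s) := by
          rw [hsplit, ht1, ht2, hτN]
          have h1 : s ≤ τ 1 := hτ0 ▸ hmono' 0 1 (by omega) (by omega)
          have h2 : τ N ≤ t := hτN ▸ hmono' N (N + 1) (by omega) (by omega)
          rw [hτ0]
          linarith
        rw [hconst] at hsumlt
        linarith
      obtain ⟨m, hmN, hsmall⟩ := hex
      set τ' : ℕ → ℝ := fun j => if j ≤ m then τ j else τ (j + 1) with hτ'
      have hτ'0 : τ' 0 = s := by simp only [hτ', if_pos (Nat.zero_le m)]; exact hτ0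
      have hτ'N : τ' N = t := by
        simp only [hτ', if_neg (by omega : ¬ N ≤ m)]; exact hτN
      have hm' : ∀ j < N, τ' j < τ' (j + 1) := by
        intro j hj
        simp only [hτ']
        rcases Nat.lt_or_ge j m with h | h
        · rw [if_pos (by omega), if_pos (by omega)]
          exact hm j (by omega)
        rcases Nat.eq_or_lt_of_le h with h' | h'
        · subst h'
          rw [if_pos le_rfl, if_neg (by omega)]
          exact lt_trans (hm m (by omega)) (hm (m + 1) (by omega))
        · rw [if_neg (by omega), if_neg (by omega)]
          exact hm (j + 1) (by omega)
      -- sum identity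
      have hsum_id : ∑ i ∈ Finset.range (N + 1), Ξ (τ i) (τ (i + 1))
          = (∑ i ∈ Finset.range N, Ξ (τ' i) (τ' (i + 1)))
            + (Ξ (τ m) (τ (m + 1)) + Ξ (τ (m + 1)) (τ (m + 2)) - Ξ (τ m) (τ (m + 2))) := by
        have hA : ∑ i ∈ Finset.range (N + 1), Ξ (τ i) (τ (i + 1))
            = (∑ i ∈ Finset.range m, Ξ (τ i) (τ (i + 1)))
              + Ξ (τ m) (τ (m + 1)) + Ξ (τ (m + 1)) (τ (m + 2))
              + ∑ i ∈ Finset.Ico (m + 2) (N + 1), Ξ (τ i) (τ (i + 1)) := by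
          rw [Finset.range_eq_Ico, ← Finset.sum_Ico_consecutive _ (Nat.zero_le (m+2)) (by omega : m + 2 ≤ N + 1)]
          rw [← Finset.range_eq_Ico, Finset.sum_range_succ, Finset.sum_range_succ]
          try ring
        have hB : ∑ i ∈ Finset.range N, Ξ (τ' i) (τ' (i + 1))
            = (∑ i ∈ Finset.range m, Ξ (τ i) (τ (i + 1)))
              + Ξ (τ m) (τ (m + 2))
              + ∑ i ∈ Finset.Ico (m + 2) (N + 1), Ξ (τ i) (τ (i + 1)) := by
          rw [Finset.range_eq_Ico, ← Finset.sum_Ico_consecutive _ (Nat.zero_le (m+1)) (by omega : m + 1 ≤ N)]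
          rw [← Finset.range_eq_Ico, Finset.sum_range_succ]
          have e1 : ∑ i ∈ Finset.range m, Ξ (τ' i) (τ' (i + 1))
              = ∑ i ∈ Finset.range m, Ξ (τ i) (τ (i + 1)) := by
            apply Finset.sum_congr rfl
            intro i hi
            simp only [Finset.mem_range] at hi
            simp only [hτ', if_pos (by omega : i ≤ m), if_pos (by omega : i + 1 ≤ m)]
          have e2 : Ξ (τ' m) (τ' (m + 1)) = Ξ (τ m) (τ (m + 2)) := by
            simp only [hτ', if_pos (le_refl m), if_neg (by omega : ¬ m + 1 ≤ m)]
          have e3 : ∑ i ∈ Finset.Ico (m + 1) N, Ξ (τ' i) (τ' (i + 1))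
              = ∑ i ∈ Finset.Ico (m + 2) (N + 1), Ξ (τ i) (τ (i + 1)) := by
            rw [Finset.sum_Ico_eq_sum_range, Finset.sum_Ico_eq_sum_range]
            have hcard : N - (m + 1) = N + 1 - (m + 2) := by omega
            rw [← hcard]
            apply Finset.sum_congr rfl
            intro i _
            simp only [hτ', if_neg (by omega : ¬ m + 1 + i ≤ m),
              if_neg (by omega : ¬ m + 1 + i + 1 ≤ m)]
            congr 2 <;> omega
          rw [e1, e2, e3]
        rw [hA, hB]
        abel
      -- bound the removed term
      have h0m : 0 ≤ τ m := le_trans hs (hτ0 ▸ hmono' 0 m (by omega) (by omega))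
      have hm1 : τ m ≤ τ (m + 1) := hmono' m (m + 1) (by omega) (by omega)
      have hm2 : τ (m + 1) ≤ τ (m + 2) := hmono' (m + 1) (m + 2) (by omega) (by omega)
      have hm2T : τ (m + 2) ≤ T := le_trans (hτN ▸ hmono' (m + 2) (N + 1) (by omega) (by omega)) htT
      have hδ : ‖Ξ (τ m) (τ (m + 2)) - Ξ (τ m) (τ (m + 1)) - Ξ (τ (m + 1)) (τ (m + 2))‖
          ≤ Cδ * (2 * (t - s) / N) ^ β := by
        refine le_trans (hCδ _ _ _ h0m hm1 hm2 hm2T) ?_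
        apply mul_le_mul_of_nonneg_left _ hCδ0
        exact Real.rpow_le_rpow (by linarith) hsmall (by linarith)
      have hrpow : (2 * (t - s) / N) ^ β = 2 ^ β * (N : ℝ) ^ (-β) * (t - s) ^ β := by
        have h1 : 2 * (t - s) / N = (2 / N) * (t - s) := by ring
        rw [h1, Real.mul_rpow (by positivity) (by linarith),
          Real.div_rpow (by norm_num) hNpos.le, Real.rpow_neg hNpos.le]
        ring
      have hIH := ih (by omega) s t τ' hs hst htT hτ'0 hτ'N hm'
      have hmain : ‖(∑ i ∈ Finset.range (N + 1), Ξ (τ i) (τ (i + 1))) - Ξ s t‖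
          ≤ ‖(∑ i ∈ Finset.range N, Ξ (τ' i) (τ' (i + 1))) - Ξ s t‖
            + ‖Ξ (τ m) (τ (m + 2)) - Ξ (τ m) (τ (m + 1)) - Ξ (τ (m + 1)) (τ (m + 2))‖ := by
        rw [hsum_id]
        have heq : (∑ i ∈ Finset.range N, Ξ (τ' i) (τ' (i + 1)))
            + (Ξ (τ m) (τ (m + 1)) + Ξ (τ (m + 1)) (τ (m + 2)) - Ξ (τ m) (τ (m + 2))) - Ξ s t
          = ((∑ i ∈ Finset.range N, Ξ (τ' i) (τ' (i + 1))) - Ξ s t)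
            + -(Ξ (τ m) (τ (m + 2)) - Ξ (τ m) (τ (m + 1)) - Ξ (τ (m + 1)) (τ (m + 2))) := by
          abel
        rw [heq]
        exact (norm_add_le _ _).trans (by rw [norm_neg])
      have hS : ∑ k ∈ Finset.Ico 2 (N + 1), ((k : ℝ)) ^ (-β)
          = (∑ k ∈ Finset.Ico 2 N, ((k : ℝ)) ^ (-β)) + (N : ℝ) ^ (-β) :=
        Finset.sum_Ico_succ_top (by omega : 2 ≤ N) _
      refine le_trans hmain ?_
      rw [hrpow] at hδ
      rw [hS]
      calc ‖(∑ i ∈ Finset.range N, Ξ (τ' i) (τ' (i + 1))) - Ξ s t‖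
            + ‖Ξ (τ m) (τ (m + 2)) - Ξ (τ m) (τ (m + 1)) - Ξ (τ (m + 1)) (τ (m + 2))‖
          ≤ Cδ * (1 + 2 ^ β * ∑ k ∈ Finset.Ico 2 N, ((k : ℝ)) ^ (-β)) * (t - s) ^ β
            + Cδ * (2 ^ β * (N : ℝ) ^ (-β) * (t - s) ^ β) := add_le_add hIH hδ
        _ = Cδ * (1 + 2 ^ β * ((∑ k ∈ Finset.Ico 2 N, ((k : ℝ)) ^ (-β)) + (N : ℝ) ^ (-β)))
              * (t - s) ^ β := by ring

/-- Maximal inequality in the Sewing lemma: for any partition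
`s = τ 0 < τ 1 < ⋯ < τ N = t` of `[s,t] ⊆ [0,T]`,
`‖∑ Ξ_{τ i, τ (i+1)} - Ξ_{s,t}‖ ≤ ‖δΞ‖_β [2^β (ζ(β) - 1) + 1] (t-s)^β`. -/
theorem sewing_maximal_inequality
    {W : Type*} [NormedAddCommGroup W] [NormedSpace ℝ W]
    (T : ℝ) (hT : 0 < T) (β : ℝ) (hβ : 1 < β)
    (Ξ : ℝ → ℝ → W)
    (hdiag : ∀ t, Ξ t t = 0)
    (Cδ : ℝ) (hCδ : ∀ s u t, 0 ≤ s → s ≤ u → u ≤ t → t ≤ T →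
      ‖Ξ s t - Ξ s u - Ξ u t‖ ≤ Cδ * (t - s) ^ β)
    (s t : ℝ) (hs : 0 ≤ s) (hst : s ≤ t) (htT : t ≤ T)
    (N : ℕ) (hN : 0 < N) (τ : ℕ → ℝ)
    (hτ0 : τ 0 = s) (hτN : τ N = t) (hmono : ∀ i < N, τ i < τ (i + 1)) :
    ‖(∑ i ∈ Finset.range N, Ξ (τ i) (τ (i + 1))) - Ξ s t‖
      ≤ Cδ * ((2 : ℝ) ^ β * ((∑' n : ℕ, ((n : ℝ) + 1) ^ (-β)) - 1) + 1) * (t - s) ^ β := by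
  have hTβ : (0:ℝ) < T ^ β := Real.rpow_pos_of_pos hT β
  have hCδ0 : 0 ≤ Cδ := by
    have h := hCδ 0 0 T le_rfl le_rfl (by linarith) le_rfl
    rw [hdiag 0] at h
    simp only [sub_zero, sub_self, norm_zero] at h
    nlinarith
  have hbase : Summable (fun n : ℕ => ((n : ℝ)) ^ (-β)) :=
    Real.summable_nat_rpow.mpr (by linarith)
  have hsum : Summable (fun n : ℕ => ((n : ℝ) + 1) ^ (-β)) := by
    have h := (summable_nat_add_iff 1).mpr hbase
    convert h using 2 with n
    · rfl
    · push_cast; ring_nf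
  have hshift : Summable (fun n : ℕ => ((n : ℝ) + 2) ^ (-β)) := by
    have h := (summable_nat_add_iff 2).mpr hbase
    convert h using 2 with n
    · rfl
    · push_cast; ring_nf
  set Z := ∑' n : ℕ, ((n : ℝ) + 1) ^ (-β) with hZ
  have htail : ∑' n : ℕ, ((n : ℝ) + 2) ^ (-β) = Z - 1 := by
    have h1 := Summable.sum_add_tsum_nat_add (f := fun n : ℕ => ((n : ℝ) + 1) ^ (-β)) 1 hsum
    have h2 : ∑' (i : ℕ), ((↑(i + 1) : ℝ) + 1) ^ (-β)
        = ∑' n : ℕ, ((n : ℝ) + 2) ^ (-β) := by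
      apply tsum_congr; intro n; congr 1; push_cast; ring
    rw [Finset.sum_range_one] at h1
    simp only [Nat.cast_zero, zero_add, Real.one_rpow] at h1
    rw [h2] at h1
    linarith
  have hSle : ∑ k ∈ Finset.Ico 2 N, ((k : ℝ)) ^ (-β) ≤ Z - 1 := by
    have h2 : ∑ k ∈ Finset.Ico 2 N, ((k : ℝ)) ^ (-β)
        = ∑ i ∈ Finset.range (N - 2), ((i : ℝ) + 2) ^ (-β) := by
      rw [Finset.sum_Ico_eq_sum_range]
      apply Finset.sum_congr rfl
      intro i _
      congr 1; push_cast; ring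
    rw [h2, ← htail]
    exact Summable.sum_le_tsum _ (fun i _ => Real.rpow_nonneg (by positivity) _) hshift
  have hkey := sew_key T β hβ Ξ Cδ hCδ0 hCδ N hN s t τ hs hst htT hτ0 hτN hmono
  refine le_trans hkey ?_
  have h2β : (0:ℝ) ≤ 2 ^ β := Real.rpow_nonneg (by norm_num) β
  have hts : (0:ℝ) ≤ (t - s) ^ β := Real.rpow_nonneg (by linarith) _
  have hin : 1 + 2 ^ β * ∑ k ∈ Finset.Ico 2 N, ((k : ℝ)) ^ (-β)
      ≤ (2 : ℝ) ^ β * (Z - 1) + 1 := by nlinarith [hSle]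
  exact mul_le_mul_of_nonneg_right (mul_le_mul_of_nonneg_left hin hCδ0) hts
end

section
/- (Young integral) Let $V, W$ be Banach spaces, $g \in \mathcal{C}^{\alpha}([0,T],V)$, $f \in \mathcal{C}^{\beta}([0,T],L(V,W))$ with $\alpha + \beta > 1$. Then the limit of Riemann sums $\int_s^t f_u \, dg_u := \lim_{|\mathcal{P}|\to 0} \sum_{[u,v]\in\mathcal{P}} f_u (g_v - g_u)$ exists for every $s < t$, and satisfies $\left|\int_s^t f_u\,dg_u - f_s(g_t - g_s)\right| \leq C \|f\|_{\beta}\|g\|_{\alpha}|t-s|^{\alpha+\beta}$ for a constant $C$ depending only on $\alpha+\beta$. -/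
open Finset Filter Topology

set_option linter.unusedSectionVars false
set_option linter.unusedVariables false
set_option maxHeartbeats 2000000

namespace YoungProof

variable {V W : Type} [NormedAddCommGroup V] [NormedSpace ℝ V]
  [NormedAddCommGroup W] [NormedSpace ℝ W]

/-- Riemann sum of `f dg` along the partition `τ 0 < τ 1 < ... < τ N`. -/
noncomputable def RS (g : ℝ → V) (f : ℝ → V →L[ℝ] W) (τ : ℕ → ℝ) (N : ℕ) : W :=
  ∑ i ∈ Finset.range N, f (τ i) (g (τ (i + 1)) - g (τ i))

lemma steps_mono {τ : ℕ → ℝ} {N : ℕ} (h : ∀ i < N, τ i ≤ τ (i + 1)) :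
    ∀ i j, i ≤ j → j ≤ N → τ i ≤ τ j := by
  intro i j hij hjN
  induction j with
  | zero => simp_all
  | succ n ih =>
    rcases Nat.lt_or_ge i (n+1) with h' | h'
    · exact le_trans (ih (Nat.lt_succ_iff.mp h') (le_trans (Nat.le_succ n) hjN))
        (h n (Nat.lt_of_lt_of_le (Nat.lt_succ_self n) hjN))
    · have : i = n + 1 := le_antisymm hij h'
      simp [this]

lemma steps_mono_nat {k : ℕ → ℕ} {N : ℕ} (h : ∀ i < N, k i ≤ k (i + 1)) :
    ∀ i j, i ≤ j → j ≤ N → k i ≤ k j := by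
  intro i j hij hjN
  induction j with
  | zero => simp_all
  | succ n ih =>
    rcases Nat.lt_or_ge i (n+1) with h' | h'
    · exact le_trans (ih (Nat.lt_succ_iff.mp h') (le_trans (Nat.le_succ n) hjN))
        (h n (Nat.lt_of_lt_of_le (Nat.lt_succ_self n) hjN))
    · have : i = n + 1 := le_antisymm hij h'
      simp [this]

lemma sum_split (a : ℕ → W) (k : ℕ → ℕ) (hk0 : k 0 = 0) :
    ∀ N, (∀ i < N, k i ≤ k (i + 1)) → ∑ j ∈ range (k N), a j
      = ∑ i ∈ range N, ∑ m ∈ range (k (i + 1) - k i), a (k i + m) := by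
  intro N
  induction N with
  | zero => intro _; simp [hk0]
  | succ N ih =>
    intro hk
    rw [Finset.sum_range_succ, ← ih (fun i hi => hk i (by omega)),
      ← Finset.sum_range_add_sum_Ico a (hk N (by omega))]
    congr 1
    rw [Finset.sum_Ico_eq_sum_range]

lemma RS_remove (g : ℝ → V) (f : ℝ → V →L[ℝ] W) (τ : ℕ → ℝ) (N j : ℕ) (hj : j < N) :
    RS g f τ (N + 1)
      = RS g f (fun m => if m ≤ j then τ m else τ (m + 1)) N
        + (f (τ (j + 1)) - f (τ j)) (g (τ (j + 2)) - g (τ (j + 1))) := by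
  set τ' : ℕ → ℝ := fun m => if m ≤ j then τ m else τ (m + 1) with hτ'
  set a : ℕ → W := fun m => f (τ m) (g (τ (m + 1)) - g (τ m)) with ha
  set b : ℕ → W := fun m => f (τ' m) (g (τ' (m + 1)) - g (τ' m)) with hb
  have hb1 : ∀ m < j, b m = a m := by
    intro m hm
    simp only [hb, ha, hτ']
    rw [if_pos hm.le, if_pos (show m + 1 ≤ j from hm)]
  have hb2 : ∀ m, j < m → b m = a (m + 1) := by
    intro m hm
    simp only [hb, ha, hτ']
    rw [if_neg (by omega), if_neg (by omega)]
  have hbj : b j = f (τ j) (g (τ (j + 2)) - g (τ j)) := by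
    simp only [hb, hτ']
    rw [if_pos le_rfl, if_neg (by omega)]
  have h1 : RS g f τ (N + 1) = (∑ m ∈ range j, a m) + a j + a (j + 1)
      + ∑ m ∈ Ico (j + 2) (N + 1), a m := by
    rw [RS, ← ha, ← Finset.sum_range_add_sum_Ico a (show j + 2 ≤ N + 1 by omega),
      Finset.sum_range_succ, Finset.sum_range_succ]
  have h2 : RS g f τ' N = (∑ m ∈ range j, a m) + b j + ∑ m ∈ Ico (j + 2) (N + 1), a m := by
    rw [RS, ← hb, ← Finset.sum_range_add_sum_Ico b (show j + 1 ≤ N by omega),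
      Finset.sum_range_succ]
    have e1 : ∑ m ∈ range j, b m = ∑ m ∈ range j, a m :=
      Finset.sum_congr rfl fun m hm => hb1 m (Finset.mem_range.mp hm)
    have e2 : ∑ m ∈ Ico (j + 1) N, b m = ∑ m ∈ Ico (j + 2) (N + 1), a m := by
      rw [Finset.sum_Ico_eq_sum_range, Finset.sum_Ico_eq_sum_range]
      have hcard : N - (j + 1) = N + 1 - (j + 2) := by omega
      rw [← hcard]
      refine Finset.sum_congr rfl fun m _ => ?_
      rw [hb2 (j + 1 + m) (by omega), show j + 1 + m + 1 = j + 2 + m by omega]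
    rw [e1, e2]
  rw [h1, h2, hbj]
  simp only [ha, ContinuousLinearMap.sub_apply, map_sub]
  abel

lemma exists_small_gap (τ : ℕ → ℝ) (N : ℕ) (hN : 0 < N)
    (hmono : ∀ i < N + 1, τ i ≤ τ (i + 1)) :
    ∃ j < N, (N : ℝ) * (τ (j + 2) - τ j) ≤ 2 * (τ (N + 1) - τ 0) := by
  by_contra hcon
  push_neg at hcon
  have hsum : ∑ j ∈ range N, (τ (j + 2) - τ j)
      = (τ (N + 1) - τ 1) + (τ N - τ 0) := by
    have : ∀ j, τ (j + 2) - τ j = (τ (j + 1 + 1) - τ (j + 1)) + (τ (j + 1) - τ j) := by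
      intro j; ring
    rw [Finset.sum_congr rfl fun j _ => this j, Finset.sum_add_distrib,
      Finset.sum_range_sub (fun i => τ (i + 1)) N, Finset.sum_range_sub τ N]
  have hle : ∑ j ∈ range N, (τ (j + 2) - τ j) ≤ 2 * (τ (N + 1) - τ 0) := by
    rw [hsum]
    have h01 : τ 0 ≤ τ 1 := hmono 0 (by omega)
    have hN1 : τ N ≤ τ (N + 1) := hmono N (by omega)
    nlinarith
  have hNpos : (0:ℝ) < N := Nat.cast_pos.mpr hN
  have this' : ∀ j ∈ range N, 2 * (τ (N + 1) - τ 0) / N < τ (j + 2) - τ j := by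
    intro j hj
    have := hcon j (Finset.mem_range.mp hj)
    rw [div_lt_iff₀ hNpos]
    nlinarith
  have hsum' := Finset.sum_lt_sum_of_nonempty (Finset.nonempty_range_iff.mpr hN.ne') this'
  rw [Finset.sum_const, Finset.card_range, nsmul_eq_mul] at hsum'
  have h2 : (N:ℝ) * (2 * (τ (N + 1) - τ 0) / N) = 2 * (τ (N + 1) - τ 0) := by
    field_simp
  linarith

/-- Key estimate: coarsening a partition to a single interval. -/
lemma keyC (α β T : ℝ) (hα0 : 0 < α) (hβ0 : 0 < β)
    (g : ℝ → V) (f : ℝ → V →L[ℝ] W) (Cg Cf : ℝ) (hCf : 0 ≤ Cf) (hCg : 0 ≤ Cg)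
    (hg : ∀ s t, 0 ≤ s → s ≤ t → t ≤ T → ‖g t - g s‖ ≤ Cg * (t - s) ^ α)
    (hf : ∀ s t, 0 ≤ s → s ≤ t → t ≤ T → ‖f t - f s‖ ≤ Cf * (t - s) ^ β) :
    ∀ (N : ℕ) (τ : ℕ → ℝ), (∀ i < N, τ i ≤ τ (i + 1)) → 0 ≤ τ 0 → τ N ≤ T →
    ‖RS g f τ N - f (τ 0) (g (τ N) - g (τ 0))‖ ≤
      Cf * Cg * (2 * (τ N - τ 0)) ^ (α + β) * ∑ n ∈ range N, 1 / (n : ℝ) ^ (α + β) := by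
  intro N
  induction N with
  | zero =>
    intro τ _ _ _
    simp [RS]
  | succ N ih =>
    intro τ hmono h0 hT'
    -- basic facts
    have hτmono := steps_mono hmono
    have hΔ0 : 0 ≤ τ (N + 1) - τ 0 := by
      have := hτmono 0 (N + 1) (by omega) le_rfl; linarith
    rcases Nat.eq_zero_or_pos N with rfl | hN
    · -- single interval : LHS = 0
      have : RS g f τ 1 = f (τ 0) (g (τ 1) - g (τ 0)) := by simp [RS]
      rw [this, sub_self, norm_zero]
      positivity
    -- main case
    obtain ⟨j, hjN, hgap⟩ := exists_small_gap τ N hN hmono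
    set τ' : ℕ → ℝ := fun m => if m ≤ j then τ m else τ (m + 1) with hτ'def
    have hτ'0 : τ' 0 = τ 0 := by simp [hτ'def]
    have hτ'N : τ' N = τ (N + 1) := by
      simp only [hτ'def]; rw [if_neg (by omega)]
    have hτ'mono : ∀ i < N, τ' i ≤ τ' (i + 1) := by
      intro i hi
      simp only [hτ'def]
      by_cases c1 : i + 1 ≤ j
      · rw [if_pos (by omega), if_pos c1]
        exact hmono i (by omega)
      by_cases c2 : i ≤ j
      · rw [if_pos c2, if_neg c1]
        exact le_trans (hmono i (by omega)) (hmono (i + 1) (by omega))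
      · rw [if_neg c2, if_neg c1]
        exact hmono (i + 1) (by omega)
    have hrec := ih τ' hτ'mono (by rwa [hτ'0]) (by rwa [hτ'N])
    rw [hτ'0, hτ'N] at hrec
    -- the removal step
    have hrem := RS_remove g f τ N j hjN
    -- estimate the removed term
    have hmem : ∀ i, i ≤ N + 1 → 0 ≤ τ i ∧ τ i ≤ T := by
      intro i hi
      exact ⟨le_trans h0 (hτmono 0 i (by omega) hi), le_trans (hτmono i (N+1) hi le_rfl) hT'⟩
    set p := α + β with hp
    set d := τ (j + 2) - τ j with hd
    have hd0 : 0 ≤ d := by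
      have := hτmono j (j + 2) (by omega) (by omega); simp only [hd]; linarith
    have hstep : ‖(f (τ (j + 1)) - f (τ j)) (g (τ (j + 2)) - g (τ (j + 1)))‖
        ≤ Cf * Cg * d ^ p := by
      have h1 : ‖f (τ (j + 1)) - f (τ j)‖ ≤ Cf * (τ (j + 1) - τ j) ^ β :=
        hf (τ j) (τ (j + 1)) (hmem j (by omega)).1 (hmono j (by omega))
          (hmem (j + 1) (by omega)).2
      have h2 : ‖g (τ (j + 2)) - g (τ (j + 1))‖ ≤ Cg * (τ (j + 2) - τ (j + 1)) ^ α :=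
        hg (τ (j + 1)) (τ (j + 2)) (hmem (j + 1) (by omega)).1 (hmono (j + 1) (by omega))
          (hmem (j + 2) (by omega)).2
      have hb1 : 0 ≤ τ (j + 1) - τ j := by have := hmono j (by omega); linarith
      have hb2 : 0 ≤ τ (j + 2) - τ (j + 1) := by have := hmono (j + 1) (by omega); linarith
      have e1 : (τ (j + 1) - τ j) ^ β ≤ d ^ β := by
        apply Real.rpow_le_rpow hb1 _ hβ0.le
        simp only [hd]
        have := hmono (j + 1) (show j + 1 < N + 1 by omega); linarith
      have e2 : (τ (j + 2) - τ (j + 1)) ^ α ≤ d ^ α := by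
        apply Real.rpow_le_rpow hb2 _ hα0.le
        simp only [hd]
        have := hmono j (show j < N + 1 by omega); linarith
      calc ‖(f (τ (j + 1)) - f (τ j)) (g (τ (j + 2)) - g (τ (j + 1)))‖
          ≤ ‖f (τ (j + 1)) - f (τ j)‖ * ‖g (τ (j + 2)) - g (τ (j + 1))‖ :=
            ContinuousLinearMap.le_opNorm _ _
        _ ≤ (Cf * (τ (j + 1) - τ j) ^ β) * (Cg * (τ (j + 2) - τ (j + 1)) ^ α) := by
            apply mul_le_mul h1 h2 (norm_nonneg _)
            positivity
        _ ≤ (Cf * d ^ β) * (Cg * d ^ α) := by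
            apply mul_le_mul (by nlinarith [Real.rpow_nonneg hb1 β])
              (by nlinarith [Real.rpow_nonneg hb2 α]) (by positivity) (by positivity)
        _ = Cf * Cg * (d ^ β * d ^ α) := by ring
        _ = Cf * Cg * d ^ p := by
            rw [← Real.rpow_add' hd0 (by positivity)]
            rw [hp, add_comm]
    -- d ^ p ≤ (2Δ)^p / N^p
    have hNpos : (0:ℝ) < N := Nat.cast_pos.mpr hN
    have hdp : d ^ p ≤ (2 * (τ (N + 1) - τ 0)) ^ p * (1 / (N : ℝ) ^ p) := by
      have hd2 : d ≤ 2 * (τ (N + 1) - τ 0) / N := by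
        rw [le_div_iff₀ hNpos]; linarith
      calc d ^ p ≤ (2 * (τ (N + 1) - τ 0) / N) ^ p :=
            Real.rpow_le_rpow hd0 hd2 (by positivity)
        _ = (2 * (τ (N + 1) - τ 0)) ^ p / (N : ℝ) ^ p :=
            Real.div_rpow (by linarith) hNpos.le p
        _ = (2 * (τ (N + 1) - τ 0)) ^ p * (1 / (N : ℝ) ^ p) := by ring
    -- put it together
    rw [hrem]
    have htri : ‖RS g f τ' N + (f (τ (j + 1)) - f (τ j)) (g (τ (j + 2)) - g (τ (j + 1)))
        - f (τ 0) (g (τ (N + 1)) - g (τ 0))‖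
        ≤ ‖RS g f τ' N - f (τ 0) (g (τ (N + 1)) - g (τ 0))‖
          + ‖(f (τ (j + 1)) - f (τ j)) (g (τ (j + 2)) - g (τ (j + 1)))‖ := by
      rw [add_sub_right_comm]
      exact norm_add_le _ _
    rw [Finset.sum_range_succ, mul_add]
    refine le_trans htri (add_le_add hrec (le_trans hstep ?_))
    calc Cf * Cg * d ^ p
        ≤ Cf * Cg * ((2 * (τ (N + 1) - τ 0)) ^ p * (1 / (N : ℝ) ^ p)) :=
          mul_le_mul_of_nonneg_left hdp (by positivity)
      _ = Cf * Cg * (2 * (τ (N + 1) - τ 0)) ^ p * (1 / (N : ℝ) ^ p) := by ring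

/-- Refinement bound: if `σ` refines `τ`, the Riemann sums differ by the sum of the
local `keyC` bounds. -/
lemma refine_bound (α β T : ℝ) (hα0 : 0 < α) (hβ0 : 0 < β)
    (g : ℝ → V) (f : ℝ → V →L[ℝ] W) (Cg Cf : ℝ) (hCf : 0 ≤ Cf) (hCg : 0 ≤ Cg)
    (hg : ∀ s t, 0 ≤ s → s ≤ t → t ≤ T → ‖g t - g s‖ ≤ Cg * (t - s) ^ α)
    (hf : ∀ s t, 0 ≤ s → s ≤ t → t ≤ T → ‖f t - f s‖ ≤ Cf * (t - s) ^ β)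
    (Z : ℝ) (hZ : ∀ n : ℕ, ∑ m ∈ range n, 1 / (m : ℝ) ^ (α + β) ≤ Z)
    (N M : ℕ) (τ σ : ℕ → ℝ) (k : ℕ → ℕ)
    (hk0 : k 0 = 0) (hkN : k N = M) (hkmono : ∀ i < N, k i ≤ k (i + 1))
    (hτσ : ∀ i ≤ N, σ (k i) = τ i)
    (hσmono : ∀ j < M, σ j ≤ σ (j + 1)) (h0 : 0 ≤ σ 0) (hMT : σ M ≤ T) :
    ‖RS g f σ M - RS g f τ N‖
      ≤ 2 ^ (α + β) * Z * Cf * Cg * ∑ i ∈ range N, (τ (i + 1) - τ i) ^ (α + β) := by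
  have hkmono' := steps_mono_nat hkmono
  have hσmono' := steps_mono hσmono
  have hsplit : RS g f σ M = ∑ i ∈ range N,
      RS g f (fun m => σ (k i + m)) (k (i + 1) - k i) := by
    rw [RS, ← hkN, sum_split _ k hk0 N hkmono]
    refine Finset.sum_congr rfl fun i _ => ?_
    rfl
  have hdiff : RS g f σ M - RS g f τ N = ∑ i ∈ range N,
      (RS g f (fun m => σ (k i + m)) (k (i + 1) - k i)
        - f (τ i) (g (τ (i + 1)) - g (τ i))) := by
    rw [hsplit, RS, ← Finset.sum_sub_distrib]
  rw [hdiff]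
  refine le_trans (norm_sum_le _ _) ?_
  rw [Finset.mul_sum]
  refine Finset.sum_le_sum fun i hi => ?_
  have hiN : i < N := Finset.mem_range.mp hi
  set σi : ℕ → ℝ := fun m => σ (k i + m) with hσi
  have hend : k i + (k (i + 1) - k i) = k (i + 1) := by
    have := hkmono i hiN; omega
  have hσi0 : σi 0 = τ i := by
    simp only [hσi, Nat.add_zero]; exact hτσ i hiN.le
  have hσiN : σi (k (i + 1) - k i) = τ (i + 1) := by
    simp only [hσi, hend]; exact hτσ (i + 1) hiN
  have hkiM : ∀ m, m ≤ k (i + 1) - k i → k i + m ≤ M := by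
    intro m hm
    have h1 : k (i + 1) ≤ M := hkN ▸ hkmono' (i + 1) N hiN le_rfl
    omega
  have hσimono : ∀ m < k (i + 1) - k i, σi m ≤ σi (m + 1) := by
    intro m hm
    simp only [hσi]
    exact hσmono (k i + m) (by have := hkiM (m + 1) (by omega); omega)
  have hσi0' : 0 ≤ σi 0 := le_trans h0 (hσmono' 0 (k i + 0) (by omega) (hkiM 0 (by omega)))
  have hσiT : σi (k (i + 1) - k i) ≤ T :=
    le_trans (hσmono' _ M (hkiM _ le_rfl) le_rfl) hMT
  have hkey := keyC α β T hα0 hβ0 g f Cg Cf hCf hCg hg hf (k (i + 1) - k i) σi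
    hσimono hσi0' hσiT
  rw [hσi0, hσiN] at hkey
  refine le_trans hkey ?_
  have hΔ0 : 0 ≤ τ (i + 1) - τ i := by
    rw [← hσi0, ← hσiN]
    have := hσimono
    exact sub_nonneg.mpr (steps_mono hσimono 0 _ (by omega) le_rfl)
  have h2Δ : (2 * (τ (i + 1) - τ i)) ^ (α + β)
      = 2 ^ (α + β) * (τ (i + 1) - τ i) ^ (α + β) :=
    Real.mul_rpow (by norm_num) hΔ0
  rw [h2Δ]
  have hZ0 : (0:ℝ) ≤ Z := le_trans (by simp) (hZ 0)
  calc Cf * Cg * (2 ^ (α + β) * (τ (i + 1) - τ i) ^ (α + β))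
        * ∑ n ∈ range (k (i + 1) - k i), 1 / (n : ℝ) ^ (α + β)
      ≤ Cf * Cg * (2 ^ (α + β) * (τ (i + 1) - τ i) ^ (α + β)) * Z := by
        apply mul_le_mul_of_nonneg_left (hZ _) (by positivity)
    _ = 2 ^ (α + β) * Z * Cf * Cg * (τ (i + 1) - τ i) ^ (α + β) := by ring

/-- mesh bound for the sum of `Δᵢ^(α+β)`. -/
lemma mesh_sum (p : ℝ) (hp : 1 < p) (τ : ℕ → ℝ) (N : ℕ) (δ : ℝ) (hδ : 0 ≤ δ)
    (hmono : ∀ i < N, τ i ≤ τ (i + 1)) (hmesh : ∀ i < N, τ (i + 1) - τ i ≤ δ) :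
    ∑ i ∈ range N, (τ (i + 1) - τ i) ^ p ≤ δ ^ (p - 1) * (τ N - τ 0) := by
  have key : ∀ i < N, (τ (i + 1) - τ i) ^ p ≤ δ ^ (p - 1) * (τ (i + 1) - τ i) := by
    intro i hi
    set Δ := τ (i + 1) - τ i with hΔ
    have hΔ0 : 0 ≤ Δ := sub_nonneg.mpr (hmono i hi)
    rcases eq_or_lt_of_le hΔ0 with h | h
    · rw [← h, Real.zero_rpow (by positivity)]
      simp
    · have heq : Δ ^ (p - 1) * Δ = Δ ^ p := by
        rw [Real.rpow_sub_one h.ne']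
        field_simp
      rw [← heq]
      apply mul_le_mul_of_nonneg_right _ hΔ0
      exact Real.rpow_le_rpow hΔ0 (hmesh i hi) (by linarith)
  calc ∑ i ∈ range N, (τ (i + 1) - τ i) ^ p
      ≤ ∑ i ∈ range N, δ ^ (p - 1) * (τ (i + 1) - τ i) :=
        Finset.sum_le_sum fun i hi => key i (Finset.mem_range.mp hi)
    _ = δ ^ (p - 1) * (τ N - τ 0) := by
        rw [← Finset.mul_sum, Finset.sum_range_sub τ N]

/-- Common refinement of two partitions of the same interval. -/
lemma exists_common_refinement (N1 N2 : ℕ) (τ1 τ2 : ℕ → ℝ) (hN1 : 0 < N1) (hN2 : 0 < N2)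
    (h1 : ∀ i < N1, τ1 i < τ1 (i + 1)) (h2 : ∀ i < N2, τ2 i < τ2 (i + 1))
    (hs : τ1 0 = τ2 0) (ht : τ1 N1 = τ2 N2) :
    ∃ (M : ℕ) (σ : ℕ → ℝ) (k1 k2 : ℕ → ℕ),
      (∀ j < M, σ j < σ (j + 1)) ∧
      k1 0 = 0 ∧ k1 N1 = M ∧ (∀ i < N1, k1 i ≤ k1 (i + 1)) ∧ (∀ i ≤ N1, σ (k1 i) = τ1 i) ∧
      k2 0 = 0 ∧ k2 N2 = M ∧ (∀ i < N2, k2 i ≤ k2 (i + 1)) ∧ (∀ i ≤ N2, σ (k2 i) = τ2 i) := by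
  classical
  -- monotonicity of τ1, τ2
  have m1 : ∀ i j, i ≤ j → j ≤ N1 → τ1 i ≤ τ1 j := by
    intro i j hij hjN
    induction j with
    | zero => simp_all
    | succ n ih =>
      rcases Nat.lt_or_ge i (n+1) with h' | h'
      · exact le_trans (ih (by omega) (by omega)) (h1 n (by omega)).le
      · have : i = n + 1 := by omega
        simp [this]
  have m2 : ∀ i j, i ≤ j → j ≤ N2 → τ2 i ≤ τ2 j := by
    intro i j hij hjN
    induction j with
    | zero => simp_all
    | succ n ih =>
      rcases Nat.lt_or_ge i (n+1) with h' | h'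
      · exact le_trans (ih (by omega) (by omega)) (h2 n (by omega)).le
      · have : i = n + 1 := by omega
        simp [this]
  set P : Finset ℝ := (Finset.image τ1 (range (N1 + 1))) ∪ (Finset.image τ2 (range (N2 + 1)))
    with hP
  have hmem1 : ∀ i ≤ N1, τ1 i ∈ P := fun i hi =>
    Finset.mem_union_left _ (Finset.mem_image_of_mem τ1 (Finset.mem_range.mpr (by omega)))
  have hmem2 : ∀ i ≤ N2, τ2 i ∈ P := fun i hi =>
    Finset.mem_union_right _ (Finset.mem_image_of_mem τ2 (Finset.mem_range.mpr (by omega)))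
  have hPle : ∀ x ∈ P, τ1 0 ≤ x ∧ x ≤ τ1 N1 := by
    intro x hx
    rw [hP, Finset.mem_union] at hx
    rcases hx with hx | hx <;> rw [Finset.mem_image] at hx <;> obtain ⟨i, hi, rfl⟩ := hx
    · rw [Finset.mem_range] at hi
      exact ⟨m1 0 i (by omega) (by omega), m1 i N1 (by omega) (by omega)⟩
    · rw [Finset.mem_range] at hi
      constructor
      · rw [hs]; exact m2 0 i (by omega) (by omega)
      · rw [ht]; exact m2 i N2 (by omega) (by omega)
  have hPne : P.Nonempty := ⟨τ1 0, hmem1 0 (by omega)⟩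
  have hc0 : 0 < P.card := Finset.card_pos.mpr hPne
  let e : Fin P.card ≃o {x // x ∈ P} := P.orderIsoOfFin rfl
  let σ : ℕ → ℝ := fun j => if h : j < P.card then (e ⟨j, h⟩ : ℝ) else τ1 N1 + j
  let k1 : ℕ → ℕ := fun i => if h : i ≤ N1 then (e.symm ⟨τ1 i, hmem1 i h⟩ : Fin P.card).val else 0
  let k2 : ℕ → ℕ := fun i => if h : i ≤ N2 then (e.symm ⟨τ2 i, hmem2 i h⟩ : Fin P.card).val else 0
  have hσe : ∀ (j : ℕ) (h : j < P.card), σ j = (e ⟨j, h⟩ : ℝ) := fun j h => dif_pos h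
  have hσk : ∀ (x : ℝ) (hx : x ∈ P), σ ((e.symm ⟨x, hx⟩ : Fin P.card).val) = x := by
    intro x hx
    rw [hσe _ (e.symm ⟨x, hx⟩).isLt]
    have : (⟨(e.symm ⟨x, hx⟩ : Fin P.card).val, (e.symm ⟨x, hx⟩).isLt⟩ : Fin P.card)
        = e.symm ⟨x, hx⟩ := rfl
    rw [this, OrderIso.apply_symm_apply]
  have hk1v : ∀ i ≤ N1, σ (k1 i) = τ1 i := by
    intro i hi
    show σ (dite _ _ _) = τ1 i
    rw [dif_pos hi, hσk]
  have hk2v : ∀ i ≤ N2, σ (k2 i) = τ2 i := by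
    intro i hi
    show σ (dite _ _ _) = τ2 i
    rw [dif_pos hi, hσk]
  -- strict monotonicity of σ on [0, P.card)
  have hσmono : ∀ j, j + 1 < P.card → σ j < σ (j + 1) := by
    intro j hj
    rw [hσe j (by omega), hσe (j + 1) hj]
    have : (⟨j, by omega⟩ : Fin P.card) < ⟨j + 1, hj⟩ := by
      simp [Fin.lt_def]
    exact Subtype.coe_lt_coe.mpr (e.lt_iff_lt.mpr this)
  -- k1 is monotone
  have hk1mono : ∀ i < N1, k1 i ≤ k1 (i + 1) := by
    intro i hi
    show (dite _ _ _ : ℕ) ≤ dite _ _ _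
    rw [dif_pos (show i ≤ N1 by omega), dif_pos (show i + 1 ≤ N1 by omega)]
    have hlt : (⟨τ1 i, hmem1 i (by omega)⟩ : {x // x ∈ P}) < ⟨τ1 (i+1), hmem1 (i+1) hi⟩ := by
      exact Subtype.mk_lt_mk.mpr (h1 i hi)
    exact (e.symm.lt_iff_lt.mpr hlt).le
  have hk2mono : ∀ i < N2, k2 i ≤ k2 (i + 1) := by
    intro i hi
    show (dite _ _ _ : ℕ) ≤ dite _ _ _
    rw [dif_pos (show i ≤ N2 by omega), dif_pos (show i + 1 ≤ N2 by omega)]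
    have hlt : (⟨τ2 i, hmem2 i (by omega)⟩ : {x // x ∈ P}) < ⟨τ2 (i+1), hmem2 (i+1) hi⟩ := by
      exact Subtype.mk_lt_mk.mpr (h2 i hi)
    exact (e.symm.lt_iff_lt.mpr hlt).le
  -- index of the minimum / maximum
  have hbot : ∀ (x : ℝ) (hx : x ∈ P), x ≤ τ1 0 → (e.symm ⟨x, hx⟩ : Fin P.card).val = 0 := by
    intro x hx hle
    have hz : (⟨x, hx⟩ : {y // y ∈ P}) ≤ e ⟨0, hc0⟩ :=
      Subtype.mk_le_mk.mpr (le_trans hle (hPle _ (e ⟨0, hc0⟩).2).1)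
    have h2' : e.symm ⟨x, hx⟩ ≤ e.symm (e ⟨0, hc0⟩) := e.symm.le_iff_le.mpr hz
    rw [OrderIso.symm_apply_apply] at h2'
    exact Nat.le_zero.mp h2'
  have htop : ∀ (x : ℝ) (hx : x ∈ P), τ1 N1 ≤ x →
      (e.symm ⟨x, hx⟩ : Fin P.card).val = P.card - 1 := by
    intro x hx hle
    have hz : e ⟨P.card - 1, by omega⟩ ≤ (⟨x, hx⟩ : {y // y ∈ P}) :=
      Subtype.mk_le_mk.mpr (le_trans (hPle _ (e ⟨P.card - 1, by omega⟩).2).2 hle)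
    have h2' : e.symm (e ⟨P.card - 1, by omega⟩) ≤ e.symm ⟨x, hx⟩ := e.symm.le_iff_le.mpr hz
    rw [OrderIso.symm_apply_apply] at h2'
    have hlt := (e.symm ⟨x, hx⟩).isLt
    have : P.card - 1 ≤ (e.symm ⟨x, hx⟩ : Fin P.card).val := h2'
    omega
  have hk10 : k1 0 = 0 := by
    show (dite _ _ _ : ℕ) = 0
    rw [dif_pos (Nat.zero_le N1)]
    exact hbot _ _ le_rfl
  have hk20 : k2 0 = 0 := by
    show (dite _ _ _ : ℕ) = 0
    rw [dif_pos (Nat.zero_le N2)]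
    exact hbot _ _ hs.ge
  have hk1N : k1 N1 = P.card - 1 := by
    show (dite _ _ _ : ℕ) = _
    rw [dif_pos le_rfl]
    exact htop _ _ le_rfl
  have hk2N : k2 N2 = P.card - 1 := by
    show (dite _ _ _ : ℕ) = _
    rw [dif_pos le_rfl]
    exact htop _ _ ht.le

  exact ⟨P.card - 1, σ, k1, k2,
    fun j hj => hσmono j (by omega),
    hk10, hk1N, hk1mono, hk1v, hk20, hk2N, hk2mono, hk2v⟩


/-- Distance between Riemann sums over two strictly monotone partitions of the same
interval. -/
lemma dist_RS_le (α β T : ℝ) (hα0 : 0 < α) (hβ0 : 0 < β)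
    (g : ℝ → V) (f : ℝ → V →L[ℝ] W) (Cg Cf : ℝ) (hCf : 0 ≤ Cf) (hCg : 0 ≤ Cg)
    (hg : ∀ s t, 0 ≤ s → s ≤ t → t ≤ T → ‖g t - g s‖ ≤ Cg * (t - s) ^ α)
    (hf : ∀ s t, 0 ≤ s → s ≤ t → t ≤ T → ‖f t - f s‖ ≤ Cf * (t - s) ^ β)
    (Z : ℝ) (hZ : ∀ n : ℕ, ∑ m ∈ range n, 1 / (m : ℝ) ^ (α + β) ≤ Z)
    (N1 N2 : ℕ) (τ1 τ2 : ℕ → ℝ) (hN1 : 0 < N1) (hN2 : 0 < N2)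
    (h1 : ∀ i < N1, τ1 i < τ1 (i + 1)) (h2 : ∀ i < N2, τ2 i < τ2 (i + 1))
    (hs : τ1 0 = τ2 0) (ht : τ1 N1 = τ2 N2) (h0 : 0 ≤ τ1 0) (hT' : τ1 N1 ≤ T) :
    ‖RS g f τ1 N1 - RS g f τ2 N2‖ ≤ 2 ^ (α + β) * Z * Cf * Cg *
      (∑ i ∈ range N1, (τ1 (i + 1) - τ1 i) ^ (α + β)
        + ∑ i ∈ range N2, (τ2 (i + 1) - τ2 i) ^ (α + β)) := by
  obtain ⟨M, σ, k1, k2, hσmono, hk10, hk1N, hk1mono, hk1v, hk20, hk2N, hk2mono, hk2v⟩ :=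
    exists_common_refinement N1 N2 τ1 τ2 hN1 hN2 h1 h2 hs ht
  have hσ0 : σ 0 = τ1 0 := by
    have h := hk1v 0 (Nat.zero_le _); rw [hk10] at h; exact h
  have hσM : σ M = τ1 N1 := by
    have h := hk1v N1 le_rfl; rw [hk1N] at h; exact h
  have hσmono' : ∀ j < M, σ j ≤ σ (j + 1) := fun j hj => (hσmono j hj).le
  have hb1 := refine_bound α β T hα0 hβ0 g f Cg Cf hCf hCg hg hf Z hZ N1 M τ1 σ k1
    hk10 hk1N hk1mono hk1v hσmono' (hσ0 ▸ h0) (hσM ▸ hT')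
  have hb2 := refine_bound α β T hα0 hβ0 g f Cg Cf hCf hCg hg hf Z hZ N2 M τ2 σ k2
    hk20 hk2N hk2mono hk2v hσmono' (hσ0 ▸ h0) (hσM ▸ hT')
  have htri : ‖RS g f τ1 N1 - RS g f τ2 N2‖
      ≤ ‖RS g f σ M - RS g f τ1 N1‖ + ‖RS g f σ M - RS g f τ2 N2‖ := by
    have : RS g f τ1 N1 - RS g f τ2 N2
        = (RS g f σ M - RS g f τ2 N2) - (RS g f σ M - RS g f τ1 N1) := by abel
    rw [this]
    exact le_trans (norm_sub_le _ _) (by rw [add_comm])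
  refine le_trans htri ?_
  rw [mul_add]
  exact add_le_add hb1 hb2

end YoungProof

open YoungProof in
/-- Young integral: if `g` is `α`-Hölder and `f` is `β`-Hölder with
values in `L(V,W)` and `α + β > 1`, the Riemann sums `∑ f_u (g_v - g_u)` converge
for every `s < t`, and the limit `I s t = ∫_s^t f dg` satisfies
`‖I s t - f s (g t - g s)‖ ≤ C ‖f‖_β ‖g‖_α (t-s)^(α+β)` where `C` depends only on
`α + β` (it is chosen before `V`, `W`, `f`, `g`). -/
theorem young_integral
    (α β T : ℝ) (hα0 : 0 < α) (hα1 : α ≤ 1) (hβ0 : 0 < β) (hβ1 : β ≤ 1)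
    (hαβ : 1 < α + β) (hT : 0 < T) :
    ∃ C : ℝ, 0 < C ∧
      ∀ (V W : Type) (_ : NormedAddCommGroup V) (_ : NormedSpace ℝ V),
      ∀ (_ : NormedAddCommGroup W) (_ : NormedSpace ℝ W) (_ : CompleteSpace W),
      ∀ (g : ℝ → V) (f : ℝ → V →L[ℝ] W) (Cg Cf : ℝ),
        (∀ s t, 0 ≤ s → s ≤ t → t ≤ T → ‖g t - g s‖ ≤ Cg * (t - s) ^ α) →
        (∀ s t, 0 ≤ s → s ≤ t → t ≤ T → ‖f t - f s‖ ≤ Cf * (t - s) ^ β) →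
        ∃ I : ℝ → ℝ → W,
          (∀ s t, 0 ≤ s → s ≤ t → t ≤ T → ∀ ε > 0, ∃ δ > 0,
            ∀ (N : ℕ) (τ : ℕ → ℝ), 0 < N → τ 0 = s → τ N = t →
              (∀ i < N, τ i < τ (i + 1)) → (∀ i < N, τ (i + 1) - τ i < δ) →
              ‖(∑ i ∈ Finset.range N, f (τ i) (g (τ (i + 1)) - g (τ i))) - I s t‖ < ε) ∧
          (∀ s t, 0 ≤ s → s ≤ t → t ≤ T →
            ‖I s t - f s (g t - g s)‖ ≤ C * Cf * Cg * (t - s) ^ (α + β)) := by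
  classical
  have hp0 : (0:ℝ) < α + β := by linarith
  have hq0 : (0:ℝ) < α + β - 1 := by linarith
  set p := α + β with hp
  set Z : ℝ := ∑' n : ℕ, 1 / (n : ℝ) ^ p with hZdef
  have hsum : Summable (fun n : ℕ => 1 / (n : ℝ) ^ p) :=
    Real.summable_one_div_nat_rpow.mpr hαβ
  have hZ : ∀ n : ℕ, ∑ m ∈ range n, 1 / (m : ℝ) ^ p ≤ Z := fun n =>
    Summable.sum_le_tsum (range n) (fun i _ => by positivity) hsum
  have hZ0 : 0 ≤ Z := tsum_nonneg fun i => by positivity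
  refine ⟨2 ^ p * Z + 1, by positivity, ?_⟩
  intro V W _iV1 _iV2 _iW1 _iW2 _iW3 g f Cg Cf hg hf
  haveI : Nonempty W := ⟨0⟩
  have hCg : 0 ≤ Cg := by
    have hTα : (0:ℝ) < (T - 0) ^ α := Real.rpow_pos_of_pos (by linarith) α
    have h := le_trans (norm_nonneg _) (hg 0 T le_rfl hT.le le_rfl)
    nlinarith
  have hCf : 0 ≤ Cf := by
    have hTβ : (0:ℝ) < (T - 0) ^ β := Real.rpow_pos_of_pos (by linarith) β
    have h := le_trans (norm_nonneg _) (hf 0 T le_rfl hT.le le_rfl)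
    nlinarith
  -- the sequence of Riemann sums over uniform partitions
  set u : ℝ → ℝ → ℕ → ℕ → ℝ := fun s t n i => s + i * (t - s) / (n + 1) with hu
  set seq : ℝ → ℝ → ℕ → W := fun s t n => RS g f (u s t n) (n + 1) with hseq
  set I : ℝ → ℝ → W := fun s t => limUnder atTop (seq s t) with hI
  have hu0 : ∀ s t n, u s t n 0 = s := by intro s t n; simp [hu]
  have huN : ∀ s t n, u s t n (n + 1) = t := by
    intro s t n
    simp only [hu]
    have : ((n:ℝ) + 1) ≠ 0 := by positivity
    push_cast
    field_simp
    ring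
  have humesh : ∀ s t n i, u s t n (i + 1) - u s t n i = (t - s) / (n + 1) := by
    intro s t n i; simp only [hu]; push_cast; ring
  -- mesh sums for uniform partitions
  have husum : ∀ s t : ℝ, s ≤ t → ∀ n : ℕ,
      ∑ i ∈ range (n + 1), (u s t n (i + 1) - u s t n i) ^ p
        ≤ ((t - s) / (n + 1)) ^ (p - 1) * (t - s) := by
    intro s t hst n
    have hmesh0 : (0:ℝ) ≤ (t - s) / (n + 1) := div_nonneg (by linarith) (by positivity)
    have h := mesh_sum p hαβ (u s t n) (n + 1) ((t - s) / (n + 1)) hmesh0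
      (fun i _ => by rw [← sub_nonneg, humesh]; exact hmesh0)
      (fun i _ => le_of_eq (humesh s t n i))
    rwa [hu0, huN] at h
  -- the two-partition comparison, for s < t
  have hcomp : ∀ s t : ℝ, 0 ≤ s → s < t → t ≤ T →
      ∀ (N : ℕ) (τ : ℕ → ℝ), 0 < N → τ 0 = s → τ N = t → (∀ i < N, τ i < τ (i + 1)) →
      ∀ n : ℕ, ‖RS g f τ N - seq s t n‖ ≤ 2 ^ p * Z * Cf * Cg *
        (∑ i ∈ range N, (τ (i + 1) - τ i) ^ p + ((t - s) / (n + 1)) ^ (p - 1) * (t - s)) := by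
    intro s t hs0 hst htT N τ hN h0 hNt hmono n
    have hust : ∀ i < n + 1, u s t n i < u s t n (i + 1) := by
      intro i _
      rw [← sub_pos, humesh]
      exact div_pos (by linarith) (by positivity)
    have hb := dist_RS_le α β T hα0 hβ0 g f Cg Cf hCf hCg hg hf Z hZ
      N (n + 1) τ (u s t n) hN (Nat.succ_pos n) hmono hust
      (by rw [hu0, h0]) (by rw [huN, hNt]) (by rw [h0]; exact hs0) (by rw [hNt]; exact htT)
    refine le_trans hb ?_
    have := husum s t hst.le n
    have h2 : (0:ℝ) ≤ 2 ^ p * Z * Cf * Cg := by positivity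
    apply mul_le_mul_of_nonneg_left _ h2
    exact add_le_add le_rfl this
  -- Cauchy property and convergence of the defining sequence
  have hkey : ∀ s t : ℝ, 0 ≤ s → s ≤ t → t ≤ T → Tendsto (seq s t) atTop (𝓝 (I s t)) := by
    intro s t hs0 hst htT
    have hC : CauchySeq (seq s t) := by
      rcases eq_or_lt_of_le hst with rfl | hlt
      · have hz : seq s s = fun _ => (0:W) := by
          funext n
          have hus : ∀ i, u s s n i = s := by intro i; simp [hu]
          simp [hseq, RS, hus]
        rw [hz]
        exact cauchySeq_const 0
      · set A : ℝ := 2 ^ p * Z * Cf * Cg * (t - s) with hA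
        have hA0 : 0 ≤ A := by
          rw [hA]; exact mul_nonneg (by positivity) (by linarith)
        refine cauchySeq_of_le_tendsto_0 (fun N => 2 * A * ((t - s) / (N + 1)) ^ (p - 1)) ?_ ?_
        · intro m n N hNm hNn
          have hmono2 : ∀ k l : ℕ, k ≤ l → ((t - s) / (l + 1) : ℝ) ≤ (t - s) / (k + 1) := by
            intro k l hkl
            have hc : ((k:ℝ) + 1) ≤ (l:ℝ) + 1 := by exact_mod_cast Nat.succ_le_succ hkl
            exact div_le_div_of_nonneg_left (by linarith) (by positivity) hc
          have hboundgen : ∀ m' : ℕ, N ≤ m' →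
              (((t - s) / (m' + 1) : ℝ)) ^ (p - 1) ≤ ((t - s) / (N + 1)) ^ (p - 1) := by
            intro m' hm'
            exact Real.rpow_le_rpow (div_nonneg (by linarith) (by positivity)) (hmono2 N m' hm') (by linarith)
          have h1 := hcomp s t hs0 hlt htT (m + 1) (u s t m) (Nat.succ_pos m)
            (hu0 s t m) (huN s t m)
            (fun i _ => by rw [← sub_pos, humesh]; exact div_pos (by linarith) (by positivity)) n
          have husum' := husum s t hst m
          rw [dist_eq_norm]
          have h1' : ‖seq s t m - seq s t n‖ ≤ 2 ^ p * Z * Cf * Cg *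
              (((t - s) / (m + 1)) ^ (p - 1) * (t - s)
                + ((t - s) / (n + 1)) ^ (p - 1) * (t - s)) := by
            refine le_trans h1 ?_
            apply mul_le_mul_of_nonneg_left _ (by positivity)
            exact add_le_add husum' le_rfl
          refine le_trans h1' ?_
          have hts0 : (0:ℝ) ≤ t - s := by linarith
          have e1 := mul_le_mul_of_nonneg_right (hboundgen m hNm) hts0
          have e2 := mul_le_mul_of_nonneg_right (hboundgen n hNn) hts0
          calc 2 ^ p * Z * Cf * Cg *
              (((t - s) / (m + 1)) ^ (p - 1) * (t - s)
                + ((t - s) / (n + 1)) ^ (p - 1) * (t - s))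
              ≤ 2 ^ p * Z * Cf * Cg *
                (((t - s) / (N + 1)) ^ (p - 1) * (t - s)
                  + ((t - s) / (N + 1)) ^ (p - 1) * (t - s)) :=
                mul_le_mul_of_nonneg_left (add_le_add e1 e2) (by positivity)
            _ = 2 * A * ((t - s) / (N + 1)) ^ (p - 1) := by rw [hA]; ring
        · have t1' : Tendsto (fun N : ℕ => (t - s) / ((N:ℝ) + 1)) atTop (𝓝 0) := by
            have t1 : Tendsto (fun N : ℕ => (t - s) * (1 / ((N:ℝ) + 1))) atTop
                (𝓝 ((t - s) * 0)) :=
              tendsto_one_div_add_atTop_nhds_zero_nat.const_mul (t - s)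
            simpa [div_eq_mul_inv, one_div] using t1
          have t2 := t1'.rpow_const (Or.inr (by linarith : (0:ℝ) ≤ p - 1))
          rw [Real.zero_rpow hq0.ne'] at t2
          have t3 := t2.const_mul (2 * A)
          simpa using t3
    exact hC.tendsto_limUnder
  refine ⟨I, ?_, ?_⟩
  · -- convergence of Riemann sums
    intro s t hs0 hst htT ε hε
    rcases eq_or_lt_of_le hst with rfl | hlt
    · refine ⟨1, one_pos, ?_⟩
      intro N τ hN h0 hNt hmono hmesh
      exfalso
      have h01 : τ 0 < τ 1 := hmono 0 hN
      have h1N : τ 1 ≤ τ N := steps_mono (fun i hi => (hmono i hi).le) 1 N hN le_rfl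
      rw [h0] at h01; rw [hNt] at h1N; linarith
    · set A : ℝ := 2 ^ p * Z * Cf * Cg * (t - s) with hA
      have hA0 : 0 ≤ A := by
        rw [hA]; exact mul_nonneg (by positivity) (by linarith)
      set δ : ℝ := (ε / (4 * (A + 1))) ^ (1 / (p - 1)) with hδdef
      have hδpos : 0 < δ := Real.rpow_pos_of_pos (div_pos hε (by linarith)) _
      have hδq : δ ^ (p - 1) = ε / (4 * (A + 1)) := by
        rw [hδdef, ← Real.rpow_mul (le_of_lt (div_pos hε (by linarith))),
          one_div, inv_mul_cancel₀ hq0.ne', Real.rpow_one]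
      have hAδ : A * δ ^ (p - 1) ≤ ε / 4 := by
        rw [hδq]
        have h1 : (0:ℝ) < A + 1 := by linarith
        rw [mul_div_assoc', div_le_div_iff₀ (by linarith) (by norm_num : (0:ℝ) < 4)]
        nlinarith
      obtain ⟨n₀, hn₀⟩ := exists_nat_gt ((t - s) / δ)
      have hmeshn : ((t - s) / (n₀ + 1) : ℝ) < δ := by
        rw [div_lt_iff₀ (by positivity)]
        have h2 : t - s = ((t - s) / δ) * δ := by field_simp
        rw [h2]
        have : ((t - s) / δ) < (n₀:ℝ) + 1 := by linarith
        nlinarith [hδpos]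
      have htnd := hkey s t hs0 hst htT
      have hev : ∀ᶠ n in atTop, ‖seq s t n - I s t‖ < ε / 4 := by
        have h' : Tendsto (fun n => ‖seq s t n - I s t‖) atTop (𝓝 0) := by
          have := (htnd.sub_const (I s t)).norm
          simpa using this
        exact h'.eventually (gt_mem_nhds (by positivity))
      obtain ⟨n, hn1, hn2⟩ := ((eventually_ge_atTop n₀).and hev).exists
      refine ⟨δ, hδpos, ?_⟩
      intro N τ hN h0 hNt hmono hmesh
      have hb := hcomp s t hs0 hlt htT N τ hN h0 hNt hmono n
      have hsum1 : ∑ i ∈ range N, (τ (i + 1) - τ i) ^ p ≤ δ ^ (p - 1) * (t - s) := by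
        have h3 := mesh_sum p hαβ τ N δ hδpos.le (fun i hi => (hmono i hi).le)
          (fun i hi => (hmesh i hi).le)
        rwa [h0, hNt] at h3
      have hts0 : (0:ℝ) ≤ t - s := by linarith
      have hmesh2 : ((t - s) / (n + 1) : ℝ) ^ (p - 1) ≤ δ ^ (p - 1) := by
        apply Real.rpow_le_rpow (div_nonneg (by linarith) (by positivity)) _ (by linarith)
        refine le_of_lt (lt_of_le_of_lt ?_ hmeshn)
        have hc : ((n₀:ℝ) + 1) ≤ (n:ℝ) + 1 := by exact_mod_cast Nat.succ_le_succ hn1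
        exact div_le_div_of_nonneg_left (by linarith) (by positivity) hc
      have hRS : ‖RS g f τ N - seq s t n‖ ≤ ε / 2 := by
        refine le_trans hb ?_
        have step : ∑ i ∈ range N, (τ (i + 1) - τ i) ^ p
              + ((t - s) / (n + 1)) ^ (p - 1) * (t - s)
            ≤ δ ^ (p - 1) * (t - s) + δ ^ (p - 1) * (t - s) :=
          add_le_add hsum1 (mul_le_mul_of_nonneg_right hmesh2 hts0)
        calc 2 ^ p * Z * Cf * Cg * (∑ i ∈ range N, (τ (i + 1) - τ i) ^ p
              + ((t - s) / (n + 1)) ^ (p - 1) * (t - s))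
            ≤ 2 ^ p * Z * Cf * Cg * (δ ^ (p - 1) * (t - s) + δ ^ (p - 1) * (t - s)) :=
              mul_le_mul_of_nonneg_left step (by positivity)
          _ = 2 * (A * δ ^ (p - 1)) := by rw [hA]; ring
          _ ≤ 2 * (ε / 4) := by linarith
          _ = ε / 2 := by ring
      show ‖RS g f τ N - I s t‖ < ε
      have hdecomp : RS g f τ N - I s t
          = (RS g f τ N - seq s t n) + (seq s t n - I s t) := by abel
      rw [hdecomp]
      calc ‖(RS g f τ N - seq s t n) + (seq s t n - I s t)‖
          ≤ ‖RS g f τ N - seq s t n‖ + ‖seq s t n - I s t‖ := norm_add_le _ _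
        _ < ε / 2 + ε / 4 := by
            have := add_lt_add_of_le_of_lt hRS hn2
            linarith
        _ < ε := by linarith
  · -- the bound on the limit
    intro s t hs0 hst htT
    have htnd := hkey s t hs0 hst htT
    have hts0 : (0:ℝ) ≤ t - s := by linarith
    have hbound : ∀ n, ‖seq s t n - f s (g t - g s)‖
        ≤ 2 ^ p * Z * Cf * Cg * (t - s) ^ p := by
      intro n
      have hkc := keyC α β T hα0 hβ0 g f Cg Cf hCf hCg hg hf (n + 1) (u s t n)
        (fun i _ => by
          rw [← sub_nonneg, humesh]
          exact div_nonneg (by linarith) (by positivity))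
        (by rw [hu0]; exact hs0) (by rw [huN]; exact htT)
      rw [hu0, huN] at hkc
      refine le_trans hkc ?_
      have h2 : (2 * (t - s)) ^ p = 2 ^ p * (t - s) ^ p :=
        Real.mul_rpow (by norm_num) hts0
      calc Cf * Cg * (2 * (t - s)) ^ p * ∑ m ∈ range (n + 1), 1 / (m:ℝ) ^ p
          ≤ Cf * Cg * (2 * (t - s)) ^ p * Z :=
            mul_le_mul_of_nonneg_left (hZ _) (by positivity)
        _ = 2 ^ p * Z * Cf * Cg * (t - s) ^ p := by rw [h2]; ring
    have hlim : Tendsto (fun n => ‖seq s t n - f s (g t - g s)‖) atTop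
        (𝓝 ‖I s t - f s (g t - g s)‖) := (htnd.sub_const _).norm
    have hle := le_of_tendsto' hlim hbound
    refine le_trans hle ?_
    have hnn : (0:ℝ) ≤ Cf * Cg * (t - s) ^ p := by positivity
    nlinarith
end

section
/- (Rough integral of a controlled path) Let $\mathbf{X} = (1,X,\mathbb{X}) \in \mathscr{C}^{\alpha}([0,T],\mathbb{R}^d)$ with $\alpha \in (1/3,1/2]$ and $(Y,Y') \in \mathscr{D}^{\alpha}_X([0,T], L(\mathbb{R}^d,\mathbb{R}^m))$. Then the limit $\int_s^t Y_u \, d\mathbf{X}_u := \lim_{|\mathcal{P}|\to 0} \sum_{[u,v]\in\mathcal{P}} \big(Y_u \delta X_{u,v} + Y'_u \mathbb{X}_{u,v}\big)$ exists and satisfies $\big|\int_s^t Y_u\,d\mathbf{X}_u - Y_s \delta X_{s,t} - Y'_s \mathbb{X}_{s,t}\big| \le C(\|X\|_{\alpha}\|R^Y\|_{2\alpha} + \|\mathbb{X}\|_{2\alpha}\|Y'\|_{\alpha})|t-s|^{3\alpha}$. -/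
open Finset Filter

section RoughHelpers

lemma part_mono {β : Type*} [Preorder β] {τ : ℕ → β} {N : ℕ}
    (h : ∀ i < N, τ i < τ (i+1)) :
    ∀ {i j : ℕ}, i ≤ j → j ≤ N → τ i ≤ τ j := by
  intro i j hij hj
  induction j with
  | zero => exact le_of_eq (by rw [Nat.le_zero.mp hij])
  | succ n ih =>
    rcases Nat.eq_or_lt_of_le hij with rfl | hlt
    · exact le_refl _
    · exact le_trans (ih (Nat.lt_succ_iff.mp hlt) (by omega)) (le_of_lt (h n (by omega)))

lemma sum_Ico_shift (f : ℕ → ℝ) (a b : ℕ) :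
    ∑ j ∈ Ico a b, f (j+1) = ∑ j ∈ Ico (a+1) (b+1), f j := by
  rw [Finset.sum_Ico_eq_sum_range, Finset.sum_Ico_eq_sum_range, Nat.succ_sub_succ]
  exact Finset.sum_congr rfl fun j _ => by rw [Nat.add_right_comm]

lemma tele_Ico (τ : ℕ → ℝ) {a b : ℕ} (hab : a ≤ b) :
    ∑ j ∈ Ico a b, (τ (j+1) - τ j) = τ b - τ a := by
  induction b, hab using Nat.le_induction with
  | base => simp
  | succ n hn ih => rw [Finset.sum_Ico_succ_top (by omega), ih]; ring

lemma sum_blocks (f : ℕ → ℝ) (a : ℕ → ℕ) (N : ℕ) (h0 : a 0 = 0)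
    (hm : ∀ i < N, a i ≤ a (i+1)) :
    ∑ i ∈ range N, ∑ c ∈ Ico (a i) (a (i+1)), f c = ∑ c ∈ range (a N), f c := by
  induction N with
  | zero => simp [h0]
  | succ n ih =>
    have hmn : ∀ i < n, a i ≤ a (i+1) := fun i hi => hm i (by omega)
    have h0n : 0 ≤ a n := Nat.zero_le _
    rw [Finset.sum_range_succ, ih hmn, Finset.range_eq_Ico,
      Finset.sum_Ico_consecutive f h0n (hm n (by omega)), Finset.range_eq_Ico]

noncomputable def Zc (γ : ℝ) : ℝ := ∑' n : ℕ, 1/(n:ℝ)^γ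

lemma Zc_one_le {γ : ℝ} (hγ : 1 < γ) : 1 ≤ Zc γ := by
  have hsm : Summable (fun n : ℕ => 1/(n:ℝ)^γ) := Real.summable_one_div_nat_rpow.mpr hγ
  have := Summable.le_tsum hsm 1 (fun i _ => by positivity)
  simpa [Zc, Real.one_rpow] using this

lemma sum_bound {γ : ℝ} (hγ : 1 < γ) (c : ℝ) (hc : 0 ≤ c) (N : ℕ) :
    ∑ n ∈ Icc 1 (N-1), (2*c/(n:ℝ))^γ ≤ 2^γ * Zc γ * c^γ := by
  have hsm : Summable (fun n : ℕ => 1/(n:ℝ)^γ) := Real.summable_one_div_nat_rpow.mpr hγ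
  have step : ∀ n ∈ Icc 1 (N-1), (2*c/(n:ℝ))^γ = (2*c)^γ * (1/(n:ℝ)^γ) := by
    intro n _
    rw [Real.div_rpow (by positivity) (Nat.cast_nonneg n), div_eq_mul_one_div]
  rw [Finset.sum_congr rfl step, ← Finset.mul_sum]
  have h1 : ∑ n ∈ Icc 1 (N-1), 1/(n:ℝ)^γ ≤ Zc γ :=
    Summable.sum_le_tsum _ (fun i _ => by positivity) hsm
  have h2 : (2*c)^γ = 2^γ * c^γ := Real.mul_rpow (by norm_num) hc
  calc (2*c)^γ * ∑ n ∈ Icc 1 (N-1), 1/(n:ℝ)^γ ≤ (2*c)^γ * Zc γ :=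
        mul_le_mul_of_nonneg_left h1 (Real.rpow_nonneg (by positivity) γ)
    _ = 2^γ * Zc γ * c^γ := by rw [h2]; ring

-- the removal / maximal lemma
lemma removal (γ : ℝ) (hγ : 1 < γ) (Ξ : ℝ → ℝ → ℝ) (K s t : ℝ) (hK : 0 ≤ K)
    (hcoh : ∀ u v w, s ≤ u → u ≤ v → v ≤ w → w ≤ t →
      |Ξ u w - Ξ u v - Ξ v w| ≤ K * (w-u)^γ)
    (u v : ℝ) (hsu : s ≤ u) (hvt : v ≤ t) :
    ∀ N, ∀ τ : ℕ → ℝ, 1 ≤ N → τ 0 = u → τ N = v → (∀ i < N, τ i < τ (i+1)) →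
      |(∑ j ∈ range N, Ξ (τ j) (τ (j+1))) - Ξ u v|
        ≤ K * ∑ n ∈ Icc 1 (N-1), (2*(v-u)/(n:ℝ))^γ := by
  intro N
  induction N using Nat.strong_induction_on with
  | _ N ih =>
  intro τ h1 h0 hN hst
  have huv : u ≤ v := by rw [← h0, ← hN]; exact part_mono hst (Nat.zero_le N) le_rfl
  rcases Nat.lt_or_ge N 2 with h2 | h2
  · -- N = 1
    have hN1 : N = 1 := by omega
    subst hN1
    rw [Finset.sum_range_one, h0, hN, sub_self, abs_zero]
    exact mul_nonneg hK (Finset.sum_nonneg fun n _ => Real.rpow_nonneg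
      (div_nonneg (by linarith) (Nat.cast_nonneg n)) _)
  · -- N ≥ 2
    obtain ⟨M, rfl⟩ : ∃ M, N = M + 2 := ⟨N - 2, by omega⟩
    obtain ⟨i, hiI, hmin⟩ := Finset.exists_min_image (Icc 1 (M+1))
      (fun j => τ (j+1) - τ (j-1)) ⟨1, by simp⟩
    obtain ⟨p, rfl⟩ : ∃ p, i = p + 1 := ⟨i - 1, by simp at hiI; omega⟩
    have hpM : p ≤ M := by simp at hiI; omega
    have hsum : ∑ j ∈ Icc 1 (M+1), (τ (j+1) - τ (j-1)) ≤ 2*(v-u) := by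
      have e1 : ∑ j ∈ Icc 1 (M+1), (τ (j+1) - τ (j-1))
          = ∑ j ∈ Icc 1 (M+1), ((τ (j+1) - τ j) + (τ j - τ (j-1))) := by
        apply Finset.sum_congr rfl; intro j _; ring
      have e2 : ∑ j ∈ Icc 1 (M+1), (τ (j+1) - τ j) = τ (M+2) - τ 1 := by
        rw [show Icc 1 (M+1) = Ico 1 (M+2) from by rw [← Finset.Ico_add_one_right_eq_Icc]; rfl]
        exact tele_Ico τ (by omega)
      have e3 : ∑ j ∈ Icc 1 (M+1), (τ j - τ (j-1)) = τ (M+1) - τ 0 := by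
        rw [show Icc 1 (M+1) = Ico 1 (M+2) from by rw [← Finset.Ico_add_one_right_eq_Icc]; rfl,
          ← sum_Ico_shift (fun j => τ j - τ (j-1)) 0 (M+1)]
        simp only [Nat.add_sub_cancel]
        exact tele_Ico τ (by omega)
      have hm1 : u ≤ τ 1 := by rw [← h0]; exact part_mono hst (by omega) (by omega)
      have hm2 : τ (M+1) ≤ v := by rw [← hN]; exact part_mono hst (by omega) (by omega)
      rw [e1, Finset.sum_add_distrib, e2, e3, h0, hN]
      linarith
    have havg : τ (p+2) - τ p ≤ 2*(v-u)/((M:ℝ)+1) := by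
      rw [le_div_iff₀ (by positivity)]
      have hc := Finset.card_nsmul_le_sum (Icc 1 (M+1))
        (fun j => τ (j+1) - τ (j-1)) (τ (p+1+1) - τ (p+1-1)) hmin
      simp only [Nat.card_Icc, Nat.add_sub_cancel, nsmul_eq_mul] at hc
      push_cast at hc
      simp only [show p+1+1 = p+2 from rfl, Nat.add_sub_cancel] at hc
      nlinarith [le_trans hc hsum]
    -- reduced partition
    set τ' : ℕ → ℝ := fun j => if j < p+1 then τ j else τ (j+1) with hτ'
    have hτ'0 : τ' 0 = u := by simp only [hτ', if_pos (Nat.succ_pos p)]; exact h0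
    have hτ'N : τ' (M+1) = v := by
      simp only [hτ', if_neg (by omega : ¬ (M+1 < p+1))]; exact hN
    have hst' : ∀ j < M+1, τ' j < τ' (j+1) := by
      intro j hj
      simp only [hτ']
      by_cases hcase : j + 1 < p + 1
      · rw [if_pos (by omega), if_pos hcase]; exact hst j (by omega)
      · by_cases hcase2 : j < p + 1
        · rw [if_pos hcase2, if_neg hcase]
          have hjp : j = p := by omega
          rw [hjp]
          exact lt_trans (hst p (by omega)) (hst (p+1) (by omega))
        · rw [if_neg hcase2, if_neg hcase]; exact hst (j+1) (by omega)
    have hIH := ih (M+1) (by omega) τ' (by omega) hτ'0 hτ'N hst'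
    -- sum identity
    have c1 : ∑ j ∈ Ico 0 p, Ξ (τ' j) (τ' (j+1)) = ∑ j ∈ Ico 0 p, Ξ (τ j) (τ (j+1)) := by
      apply Finset.sum_congr rfl; intro j hj
      simp only [Finset.mem_Ico] at hj
      simp only [hτ', if_pos (by omega : j < p+1), if_pos (by omega : j+1 < p+1)]
    have c2 : Ξ (τ' p) (τ' (p+1)) = Ξ (τ p) (τ (p+2)) := by
      simp only [hτ', if_pos (by omega : p < p+1), if_neg (by omega : ¬ (p+1 < p+1))]
    have c3 : ∑ j ∈ Ico (p+1) (M+1), Ξ (τ' j) (τ' (j+1))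
        = ∑ j ∈ Ico (p+2) (M+2), Ξ (τ j) (τ (j+1)) := by
      rw [← sum_Ico_shift (fun j => Ξ (τ j) (τ (j+1))) (p+1) (M+1)]
      apply Finset.sum_congr rfl; intro j hj
      simp only [Finset.mem_Ico] at hj
      simp only [hτ', if_neg (by omega : ¬ (j < p+1)), if_neg (by omega : ¬ (j+1 < p+1))]
    have L : ∑ j ∈ range (M+2), Ξ (τ j) (τ (j+1))
        = ∑ j ∈ Ico 0 p, Ξ (τ j) (τ (j+1))
          + (Ξ (τ p) (τ (p+1)) + (Ξ (τ (p+1)) (τ (p+2))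
            + ∑ j ∈ Ico (p+2) (M+2), Ξ (τ j) (τ (j+1)))) := by
      rw [Finset.range_eq_Ico,
        ← Finset.sum_Ico_consecutive (fun j => Ξ (τ j) (τ (j+1))) (Nat.zero_le p) (by omega : p ≤ M+2),
        Finset.sum_eq_sum_Ico_succ_bot (by omega : p < M+2),
        Finset.sum_eq_sum_Ico_succ_bot (by omega : p+1 < M+2)]
    have R : ∑ j ∈ range (M+1), Ξ (τ' j) (τ' (j+1))
        = ∑ j ∈ Ico 0 p, Ξ (τ' j) (τ' (j+1))
          + (Ξ (τ' p) (τ' (p+1)) + ∑ j ∈ Ico (p+1) (M+1), Ξ (τ' j) (τ' (j+1))) := by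
      rw [Finset.range_eq_Ico,
        ← Finset.sum_Ico_consecutive (fun j => Ξ (τ' j) (τ' (j+1))) (Nat.zero_le p) (by omega : p ≤ M+1),
        Finset.sum_eq_sum_Ico_succ_bot (by omega : p < M+1)]
    have hsplit : ∑ j ∈ range (M+2), Ξ (τ j) (τ (j+1))
        = (∑ j ∈ range (M+1), Ξ (τ' j) (τ' (j+1)))
          + (Ξ (τ p) (τ (p+1)) + Ξ (τ (p+1)) (τ (p+2)) - Ξ (τ p) (τ (p+2))) := by
      rw [L, R, c1, c2, c3]
      ring
    -- coherence bound for removed point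
    have hsp : s ≤ τ p := le_trans hsu (by rw [← h0]; exact part_mono hst (by omega) (by omega))
    have hvt' : τ (p+2) ≤ t := le_trans (by rw [← hN]; exact part_mono hst (by omega) (by omega)) hvt
    have hco := hcoh (τ p) (τ (p+1)) (τ (p+2)) hsp
      (le_of_lt (hst p (by omega))) (le_of_lt (hst (p+1) (by omega))) hvt'
    have hrem : |Ξ (τ p) (τ (p+1)) + Ξ (τ (p+1)) (τ (p+2)) - Ξ (τ p) (τ (p+2))|
        ≤ K * (2*(v-u)/((M:ℝ)+1))^γ := by
      have e : Ξ (τ p) (τ (p+1)) + Ξ (τ (p+1)) (τ (p+2)) - Ξ (τ p) (τ (p+2))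
          = -(Ξ (τ p) (τ (p+2)) - Ξ (τ p) (τ (p+1)) - Ξ (τ (p+1)) (τ (p+2))) := by ring
      rw [e, abs_neg]
      refine le_trans hco (mul_le_mul_of_nonneg_left ?_ hK)
      apply Real.rpow_le_rpow (by nlinarith [hst p (by omega : p < M+2), hst (p+1) (by omega : p+1 < M+2)]) havg (by linarith)
    -- combine
    calc |(∑ j ∈ range (M+2), Ξ (τ j) (τ (j+1))) - Ξ u v|
        ≤ |(∑ j ∈ range (M+1), Ξ (τ' j) (τ' (j+1))) - Ξ u v|
          + |Ξ (τ p) (τ (p+1)) + Ξ (τ (p+1)) (τ (p+2)) - Ξ (τ p) (τ (p+2))| := by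
          rw [hsplit, show (∑ j ∈ range (M+1), Ξ (τ' j) (τ' (j+1)))
              + (Ξ (τ p) (τ (p+1)) + Ξ (τ (p+1)) (τ (p+2)) - Ξ (τ p) (τ (p+2))) - Ξ u v
            = ((∑ j ∈ range (M+1), Ξ (τ' j) (τ' (j+1))) - Ξ u v)
              + (Ξ (τ p) (τ (p+1)) + Ξ (τ (p+1)) (τ (p+2)) - Ξ (τ p) (τ (p+2))) from by ring]
          exact abs_add_le _ _
      _ ≤ K * ∑ n ∈ Icc 1 M, (2*(v-u)/(n:ℝ))^γ + K * (2*(v-u)/((M:ℝ)+1))^γ := by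
          exact add_le_add (by simpa using hIH) hrem
      _ = K * ∑ n ∈ Icc 1 (M+1), (2*(v-u)/(n:ℝ))^γ := by
          rw [Finset.sum_Icc_succ_top (by omega : 1 ≤ M+1)]
          push_cast
          ring
      _ = K * ∑ n ∈ Icc 1 (M+2-1), (2*(v-u)/(n:ℝ))^γ := by norm_num

noncomputable def enum (G : Finset ℝ) (x₀ : ℝ) : ℕ → ℝ :=
  fun j => if h : j < G.card then (G.orderIsoOfFin rfl ⟨j, h⟩ : ℝ) else x₀

lemma enum_mem (G : Finset ℝ) (x₀ : ℝ) {j : ℕ} (hj : j < G.card) :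
    enum G x₀ j ∈ G := by
  rw [enum, dif_pos hj]; exact (G.orderIsoOfFin rfl ⟨j, hj⟩).2

lemma enum_strict (G : Finset ℝ) (x₀ : ℝ) {j j' : ℕ} (hjj : j < j') (hj' : j' < G.card) :
    enum G x₀ j < enum G x₀ j' := by
  rw [enum, enum, dif_pos hj', dif_pos (lt_trans hjj hj')]
  exact_mod_cast (G.orderIsoOfFin rfl).strictMono (by exact_mod_cast hjj : (⟨j, lt_trans hjj hj'⟩ : Fin G.card) < ⟨j', hj'⟩)

noncomputable def gidx (G : Finset ℝ) (x : ℝ) : ℕ :=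
  if h : x ∈ G then ((G.orderIsoOfFin rfl).symm ⟨x, h⟩ : Fin G.card).val else 0

lemma gidx_lt (G : Finset ℝ) {x : ℝ} (h : x ∈ G) : gidx G x < G.card := by
  rw [gidx, dif_pos h]; exact ((G.orderIsoOfFin rfl).symm ⟨x, h⟩).isLt

lemma enum_gidx (G : Finset ℝ) (x₀ : ℝ) {x : ℝ} (h : x ∈ G) :
    enum G x₀ (gidx G x) = x := by
  rw [enum, dif_pos (gidx_lt G h)]
  have he : (⟨gidx G x, gidx_lt G h⟩ : Fin G.card) = (G.orderIsoOfFin rfl).symm ⟨x, h⟩ := by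
    apply Fin.ext; simp [gidx, dif_pos h]
  rw [he, OrderIso.apply_symm_apply]

lemma gidx_strict (G : Finset ℝ) {x y : ℝ} (hx : x ∈ G) (hy : y ∈ G) (hxy : x < y) :
    gidx G x < gidx G y := by
  rw [gidx, dif_pos hx, gidx, dif_pos hy]
  exact_mod_cast (G.orderIsoOfFin rfl).symm.strictMono (by exact_mod_cast hxy : (⟨x, hx⟩ : {z // z ∈ G}) < ⟨y, hy⟩)

lemma refine (γ : ℝ) (Ξ : ℝ → ℝ → ℝ) (K s t : ℝ) (hγ : 1 < γ) (hK : 0 ≤ K)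
    (hcoh : ∀ u v w, s ≤ u → u ≤ v → v ≤ w → w ≤ t →
      |Ξ u w - Ξ u v - Ξ v w| ≤ K * (w-u)^γ)
    (G : Finset ℝ) (hG : ∀ x ∈ G, s ≤ x ∧ x ≤ t)
    (N : ℕ) (τ : ℕ → ℝ) (h1 : 1 ≤ N) (h0 : τ 0 = s) (hN : τ N = t)
    (hstrict : ∀ i < N, τ i < τ (i+1)) (hmem : ∀ i ≤ N, τ i ∈ G)
    (δ : ℝ) (hδ : 0 ≤ δ) (hmesh : ∀ i < N, τ (i+1) - τ i ≤ δ) :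
    |(∑ c ∈ range (G.card - 1), Ξ (enum G t c) (enum G t (c+1)))
      - ∑ i ∈ range N, Ξ (τ i) (τ (i+1))|
      ≤ 2^γ * Zc γ * K * δ^(γ-1) * (t - s) := by
  set a : ℕ → ℕ := fun i => gidx G (τ i) with ha
  have hstr_a : ∀ i < N, a i < a (i+1) :=
    fun i hi => gidx_strict G (hmem i hi.le) (hmem (i+1) hi) (hstrict i hi)
  have hamono : ∀ {i j : ℕ}, i ≤ j → j ≤ N → a i ≤ a j := @part_mono ℕ _ a N hstr_a
  have hcard : 0 < G.card := lt_of_le_of_lt (Nat.zero_le _) (gidx_lt G (hmem 0 (Nat.zero_le N)))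
  have henum : ∀ i, i ≤ N → enum G t (a i) = τ i := fun i hi => enum_gidx G t (hmem i hi)
  have ha0 : a 0 = 0 := by
    by_contra hne
    have h0lt : 0 < a 0 := Nat.pos_of_ne_zero hne
    have hlt := enum_strict G t h0lt (gidx_lt G (hmem 0 (Nat.zero_le N)))
    rw [henum 0 (Nat.zero_le N), h0] at hlt
    have := (hG _ (enum_mem G t (Nat.lt_of_lt_of_le h0lt (gidx_lt G (hmem 0 (Nat.zero_le N))).le))).1
    linarith
  have haN : a N = G.card - 1 := by
    have hlt : a N < G.card := gidx_lt G (hmem N le_rfl)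
    by_contra hne
    have h2 : a N + 1 < G.card := by omega
    have hs := enum_strict G t (Nat.lt_succ_self (a N)) h2
    rw [henum N le_rfl, hN] at hs
    have := (hG _ (enum_mem G t h2)).2
    linarith
  have hsplit := sum_blocks (fun c => Ξ (enum G t c) (enum G t (c+1))) a N ha0
    (fun i hi => (hstr_a i hi).le)
  rw [show G.card - 1 = a N from haN.symm, ← hsplit, ← Finset.sum_sub_distrib]
  refine le_trans (Finset.abs_sum_le_sum_abs _ _) ?_
  have hper : ∀ i ∈ range N,
      |(∑ c ∈ Ico (a i) (a (i+1)), Ξ (enum G t c) (enum G t (c+1)))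
        - Ξ (τ i) (τ (i+1))|
      ≤ (2^γ * Zc γ * K * δ^(γ-1)) * (τ (i+1) - τ i) := by
    intro i hi
    rw [Finset.mem_range] at hi
    set σ : ℕ → ℝ := fun j => enum G t (a i + j) with hσ
    set n : ℕ := a (i+1) - a i with hn
    have hn1 : 1 ≤ n := by have := hstr_a i hi; omega
    have hblock : (∑ c ∈ Ico (a i) (a (i+1)), Ξ (enum G t c) (enum G t (c+1)))
        = ∑ j ∈ range n, Ξ (σ j) (σ (j+1)) := by
      rw [Finset.sum_Ico_eq_sum_range]
      apply Finset.sum_congr (by rw [hn]) ?_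
      intro j _
      simp [hσ, Nat.add_assoc]
    have hσ0 : σ 0 = τ i := by
      simp only [hσ, Nat.add_zero]; exact henum i hi.le
    have hσn : σ n = τ (i+1) := by
      simp only [hσ, hn, show a i + (a (i+1) - a i) = a (i+1) from by
        have := hstr_a i hi; omega]
      exact henum (i+1) hi
    have hσstr : ∀ j < n, σ j < σ (j+1) := by
      intro j hj
      have h4 : a (i+1) ≤ G.card - 1 := haN ▸ hamono (Nat.succ_le_of_lt hi) le_rfl
      exact enum_strict G t (by omega) (by omega)
    have hsi : s ≤ τ i := by rw [← h0]; exact part_mono hstrict (Nat.zero_le i) hi.le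
    have hit : τ (i+1) ≤ t := by rw [← hN]; exact part_mono hstrict hi le_rfl
    have hb := removal γ hγ Ξ K s t hK hcoh (τ i) (τ (i+1)) hsi hit n σ hn1 hσ0 hσn hσstr
    rw [hblock]
    refine le_trans hb ?_
    have hΔ : 0 < τ (i+1) - τ i := sub_pos.mpr (hstrict i hi)
    have h5 := sum_bound hγ (τ (i+1) - τ i) hΔ.le n
    have h6 : (τ (i+1) - τ i)^γ ≤ δ^(γ-1) * (τ (i+1) - τ i) := by
      have e : (τ (i+1) - τ i)^γ = (τ (i+1) - τ i)^(γ-1) * (τ (i+1) - τ i) := by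
        rw [← Real.rpow_add_one hΔ.ne' (γ-1)]; norm_num
      rw [e]
      exact mul_le_mul_of_nonneg_right
        (Real.rpow_le_rpow hΔ.le (hmesh i hi) (by linarith)) hΔ.le
    calc K * ∑ m ∈ Icc 1 (n-1), (2*(τ (i+1) - τ i)/(m:ℝ))^γ
        ≤ K * (2^γ * Zc γ * (τ (i+1) - τ i)^γ) := mul_le_mul_of_nonneg_left h5 hK
      _ ≤ K * (2^γ * Zc γ * (δ^(γ-1) * (τ (i+1) - τ i))) := by
          apply mul_le_mul_of_nonneg_left _ hK
          apply mul_le_mul_of_nonneg_left h6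
          have hZ : 0 ≤ Zc γ := tsum_nonneg (fun n => by positivity)
          positivity
      _ = (2^γ * Zc γ * K * δ^(γ-1)) * (τ (i+1) - τ i) := by ring
  refine le_trans (Finset.sum_le_sum hper) ?_
  rw [← Finset.mul_sum, Finset.sum_range_sub τ N, h0, hN]

lemma sewing (γ : ℝ) (hγ : 1 < γ) (Ξ : ℝ → ℝ → ℝ) (K s t : ℝ) (hK : 0 ≤ K) (hst : s ≤ t)
    (hcoh : ∀ u v w, s ≤ u → u ≤ v → v ≤ w → w ≤ t →
        |Ξ u w - Ξ u v - Ξ v w| ≤ K * (w-u)^γ) :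
    ∃ I : ℝ,
      (∀ δ, 0 < δ → ∀ (N : ℕ) (τ : ℕ → ℝ), 0 < N → τ 0 = s → τ N = t →
        (∀ i < N, τ i < τ (i+1)) → (∀ i < N, τ (i+1) - τ i ≤ δ) →
        |(∑ j ∈ range N, Ξ (τ j) (τ (j+1))) - I|
          ≤ 2^γ * Zc γ * K * (2 * δ^(γ-1)) * (t-s)) ∧
      |I - Ξ s t| ≤ 2^γ * Zc γ * K * (t-s)^γ := by
  have hZ : (0:ℝ) < 2^γ * Zc γ :=
    mul_pos (Real.rpow_pos_of_pos two_pos γ) (lt_of_lt_of_le one_pos (Zc_one_le hγ))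
  rcases eq_or_lt_of_le hst with rfl | hlt
  · -- degenerate case s = t
    refine ⟨Ξ s s, ?_, ?_⟩
    · intro δ hδ N τ hN h0 hNs hstrict hmesh
      exfalso
      have h01 : τ 0 < τ N :=
        lt_of_lt_of_le (hstrict 0 hN) (part_mono hstrict hN le_rfl)
      rw [h0, hNs] at h01
      exact lt_irrefl s h01
    · rw [sub_self, abs_zero, sub_self, Real.zero_rpow (by linarith : γ ≠ 0), mul_zero]
  · -- main case s < t
    set U : ℕ → ℕ → ℝ := fun n i => s + (t-s) * i / ((n:ℝ)+1) with hU
    have hUdiff : ∀ n i : ℕ, U n (i+1) - U n i = (t-s)/((n:ℝ)+1) := by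
      intro n i
      simp only [hU]
      push_cast
      field_simp
      ring
    have hU0 : ∀ n : ℕ, U n 0 = s := by intro n; simp [hU]
    have hUN : ∀ n : ℕ, U n (n+1) = t := by
      intro n
      simp only [hU]
      push_cast
      field_simp
      ring
    have hUstrict : ∀ n : ℕ, ∀ i, U n i < U n (i+1) := by
      intro n i
      have hpos : 0 < (t-s)/((n:ℝ)+1) := div_pos (by linarith) (by positivity)
      have h2 : 0 < U n (i+1) - U n i := by rw [hUdiff n i]; exact hpos
      linarith
    have hUmesh : ∀ n : ℕ, ∀ i, U n (i+1) - U n i ≤ (t-s)/((n:ℝ)+1) := by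
      intro n i; rw [hUdiff n i]
    -- comparison of two partitions
    have hcmp : ∀ (N : ℕ) (τ : ℕ → ℝ) (δ1 : ℝ) (M : ℕ) (σ : ℕ → ℝ) (δ2 : ℝ),
        0 < N → τ 0 = s → τ N = t → (∀ i < N, τ i < τ (i+1)) →
        (∀ i < N, τ (i+1) - τ i ≤ δ1) → 0 ≤ δ1 →
        0 < M → σ 0 = s → σ M = t → (∀ i < M, σ i < σ (i+1)) →
        (∀ i < M, σ (i+1) - σ i ≤ δ2) → 0 ≤ δ2 →
        |(∑ j ∈ range N, Ξ (τ j) (τ (j+1))) - ∑ j ∈ range M, Ξ (σ j) (σ (j+1))|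
          ≤ 2^γ * Zc γ * K * (δ1^(γ-1) + δ2^(γ-1)) * (t-s) := by
      intro N τ δ1 M σ δ2 hN h0 hNt hstr hm1 hδ1 hM g0 gMt gstr hm2 hδ2
      set G : Finset ℝ := (range (N+1)).image τ ∪ (range (M+1)).image σ with hG
      have hGmem : ∀ x ∈ G, s ≤ x ∧ x ≤ t := by
        intro x hx
        rw [hG, Finset.mem_union] at hx
        rcases hx with hx | hx <;> rw [Finset.mem_image] at hx <;>
          obtain ⟨i, hi, rfl⟩ := hx <;> rw [Finset.mem_range] at hi
        · exact ⟨h0 ▸ part_mono hstr (Nat.zero_le i) (by omega),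
            hNt ▸ part_mono hstr (by omega) le_rfl⟩
        · exact ⟨g0 ▸ part_mono gstr (Nat.zero_le i) (by omega),
            gMt ▸ part_mono gstr (by omega) le_rfl⟩
      have hmτ : ∀ i ≤ N, τ i ∈ G := by
        intro i hi
        exact Finset.mem_union_left _ (Finset.mem_image.mpr ⟨i, Finset.mem_range.mpr (by omega), rfl⟩)
      have hmσ : ∀ i ≤ M, σ i ∈ G := by
        intro i hi
        exact Finset.mem_union_right _ (Finset.mem_image.mpr ⟨i, Finset.mem_range.mpr (by omega), rfl⟩)
      have r1 := refine γ Ξ K s t hγ hK hcoh G hGmem N τ hN h0 hNt hstr hmτ δ1 hδ1 hm1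
      have r2 := refine γ Ξ K s t hγ hK hcoh G hGmem M σ hM g0 gMt gstr hmσ δ2 hδ2 hm2
      set E := ∑ c ∈ range (G.card - 1), Ξ (enum G t c) (enum G t (c+1))
      calc |(∑ j ∈ range N, Ξ (τ j) (τ (j+1))) - ∑ j ∈ range M, Ξ (σ j) (σ (j+1))|
          = |(E - ∑ j ∈ range M, Ξ (σ j) (σ (j+1)))
              - (E - ∑ j ∈ range N, Ξ (τ j) (τ (j+1)))| := by congr 1; ring
        _ ≤ |E - ∑ j ∈ range M, Ξ (σ j) (σ (j+1))|
              + |E - ∑ j ∈ range N, Ξ (τ j) (τ (j+1))| := abs_sub _ _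
        _ ≤ 2^γ * Zc γ * K * δ2^(γ-1) * (t-s) + 2^γ * Zc γ * K * δ1^(γ-1) * (t-s) :=
            add_le_add r2 r1
        _ = 2^γ * Zc γ * K * (δ1^(γ-1) + δ2^(γ-1)) * (t-s) := by ring
    -- the sequence of uniform Riemann sums
    set u : ℕ → ℝ := fun n => ∑ j ∈ range (n+1), Ξ (U n j) (U n (j+1)) with hu
    have hmesh_le : ∀ {n N : ℕ}, N ≤ n → (t-s)/((n:ℝ)+1) ≤ (t-s)/((N:ℝ)+1) := by
      intro n N h
      apply div_le_div_of_nonneg_left (by linarith) (by positivity)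
      exact_mod_cast by omega
    have hb0 : Tendsto (fun N : ℕ => ((t-s)/((N:ℝ)+1))^(γ-1)) atTop (nhds 0) := by
      have l1 : Tendsto (fun N : ℕ => (t-s)/((N:ℝ)+1)) atTop (nhds 0) := by
        have := tendsto_one_div_add_atTop_nhds_zero_nat (𝕜 := ℝ)
        have l2 := this.const_mul (t-s)
        simp only [mul_zero] at l2
        convert l2 using 2 with n
        push_cast
        ring
      have hc : ContinuousAt (fun x : ℝ => x^(γ-1)) 0 :=
        Real.continuousAt_rpow_const 0 (γ-1) (Or.inr (by linarith))
      have := hc.tendsto.comp l1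
      simpa [Function.comp_def, Real.zero_rpow (by linarith : γ - 1 ≠ 0)] using this
    have hcauchy : CauchySeq u := by
      refine cauchySeq_of_le_tendsto_0
        (fun N => 2^γ * Zc γ * K * (2 * ((t-s)/((N:ℝ)+1))^(γ-1)) * (t-s)) ?_ ?_
      · intro n m N hn hm
        rw [Real.dist_eq]
        have := hcmp (n+1) (U n) ((t-s)/((N:ℝ)+1)) (m+1) (U m) ((t-s)/((N:ℝ)+1))
          (Nat.succ_pos n) (hU0 n) (hUN n) (fun i _ => hUstrict n i)
          (fun i _ => le_trans (hUmesh n i) (hmesh_le hn)) (div_nonneg (by linarith) (by positivity))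
          (Nat.succ_pos m) (hU0 m) (hUN m) (fun i _ => hUstrict m i)
          (fun i _ => le_trans (hUmesh m i) (hmesh_le hm)) (div_nonneg (by linarith) (by positivity))
        calc |u n - u m| ≤ 2^γ * Zc γ * K * (((t-s)/((N:ℝ)+1))^(γ-1) + ((t-s)/((N:ℝ)+1))^(γ-1)) * (t-s) := this
          _ = 2^γ * Zc γ * K * (2 * ((t-s)/((N:ℝ)+1))^(γ-1)) * (t-s) := by ring
      · have := ((hb0.const_mul 2).const_mul (2^γ * Zc γ * K)).mul_const (t-s)
        simpa using this
    obtain ⟨I, hI⟩ := cauchySeq_tendsto_of_complete hcauchy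
    refine ⟨I, ?_, ?_⟩
    · -- mesh bound
      intro δ hδ N τ hN h0 hNt hstr hmesh
      have h7 : ∀ n : ℕ, |(∑ j ∈ range N, Ξ (τ j) (τ (j+1))) - u n|
          ≤ 2^γ * Zc γ * K * (δ^(γ-1) + ((t-s)/((n:ℝ)+1))^(γ-1)) * (t-s) := by
        intro n
        exact hcmp N τ δ (n+1) (U n) ((t-s)/((n:ℝ)+1)) hN h0 hNt hstr hmesh hδ.le
          (Nat.succ_pos n) (hU0 n) (hUN n) (fun i _ => hUstrict n i)
          (fun i _ => hUmesh n i) (div_nonneg (by linarith) (by positivity))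
      have l2 : Tendsto (fun n => |(∑ j ∈ range N, Ξ (τ j) (τ (j+1))) - u n|) atTop
          (nhds |(∑ j ∈ range N, Ξ (τ j) (τ (j+1))) - I|) :=
        ((tendsto_const_nhds.sub hI).abs)
      have l3 : Tendsto (fun n : ℕ => 2^γ * Zc γ * K * (δ^(γ-1) + ((t-s)/((n:ℝ)+1))^(γ-1)) * (t-s))
          atTop (nhds (2^γ * Zc γ * K * (δ^(γ-1) + 0) * (t-s))) :=
        (((hb0.const_add (δ^(γ-1))).const_mul (2^γ * Zc γ * K)).mul_const (t-s))
      have := le_of_tendsto_of_tendsto' l2 l3 h7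
      calc |(∑ j ∈ range N, Ξ (τ j) (τ (j+1))) - I|
          ≤ 2^γ * Zc γ * K * (δ^(γ-1) + 0) * (t-s) := this
        _ ≤ 2^γ * Zc γ * K * (2 * δ^(γ-1)) * (t-s) := by
            have hd : 0 ≤ δ^(γ-1) := Real.rpow_nonneg hδ.le _
            have : δ^(γ-1) + 0 ≤ 2 * δ^(γ-1) := by linarith
            have h9 : 0 ≤ 2^γ * Zc γ * K := mul_nonneg hZ.le hK
            nlinarith [mul_le_mul_of_nonneg_left this h9]
    · -- sewing bound
      have h8 : ∀ n : ℕ, |u n - Ξ s t| ≤ 2^γ * Zc γ * K * (t-s)^γ := by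
        intro n
        have hr := removal γ hγ Ξ K s t hK hcoh s t le_rfl le_rfl (n+1) (U n)
          (Nat.succ_le_succ (Nat.zero_le n)) (hU0 n) (hUN n) (fun i _ => hUstrict n i)
        refine le_trans hr ?_
        have := sum_bound hγ (t-s) (by linarith) (n+1)
        calc K * ∑ m ∈ Icc 1 (n+1-1), (2*(t-s)/(m:ℝ))^γ
            ≤ K * (2^γ * Zc γ * (t-s)^γ) := mul_le_mul_of_nonneg_left this hK
          _ = 2^γ * Zc γ * K * (t-s)^γ := by ring
      have l2 : Tendsto (fun n => |u n - Ξ s t|) atTop (nhds (|I - Ξ s t|)) :=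
        ((hI.sub tendsto_const_nhds).abs)
      exact le_of_tendsto_of_tendsto' l2 tendsto_const_nhds h8

lemma coh_bound (α : ℝ) (hα : 1/3 < α) (hα2 : α ≤ 1/2) (T : ℝ)
    (d m : ℕ) (X : ℝ → Fin d → ℝ) (XX : ℝ → ℝ → Fin d → Fin d → ℝ)
    (hChen : ∀ s u t : ℝ, ∀ i j : Fin d,
      XX s t i j = XX s u i j + XX u t i j + (X u i - X s i) * (X t j - X u j))
    (Y : ℝ → Fin m → Fin d → ℝ) (Y' : ℝ → Fin m → Fin d → Fin d → ℝ)
    (CX CXX CY' CR : ℝ) (hCX : 0 ≤ CX) (hCXX : 0 ≤ CXX) (hCY' : 0 ≤ CY') (hCR : 0 ≤ CR)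
    (hX : ∀ s t : ℝ, 0 ≤ s → s ≤ t → t ≤ T → ∀ i, |X t i - X s i| ≤ CX * (t - s) ^ α)
    (hXX : ∀ s t : ℝ, 0 ≤ s → s ≤ t → t ≤ T → ∀ i j, |XX s t i j| ≤ CXX * (t - s) ^ (2 * α))
    (hY' : ∀ s t : ℝ, 0 ≤ s → s ≤ t → t ≤ T → ∀ k,
      ∑ i, ∑ j, |Y' t k i j - Y' s k i j| ≤ CY' * (t - s) ^ α)
    (hR : ∀ s t : ℝ, 0 ≤ s → s ≤ t → t ≤ T → ∀ k,
      ∑ j, |Y t k j - Y s k j - ∑ i, Y' s k i j * (X t i - X s i)| ≤ CR * (t - s) ^ (2 * α))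
    (k : Fin m) :
    ∀ u v w : ℝ, 0 ≤ u → u ≤ v → v ≤ w → w ≤ T →
      |(((∑ j, Y u k j * (X w j - X u j)) + ∑ p, ∑ j, Y' u k p j * XX u w p j)
        - ((∑ j, Y u k j * (X v j - X u j)) + ∑ p, ∑ j, Y' u k p j * XX u v p j))
        - ((∑ j, Y v k j * (X w j - X v j)) + ∑ p, ∑ j, Y' v k p j * XX v w p j)|
      ≤ (CX * CR + CXX * CY') * (w - u) ^ (3 * α) := by
  intro u v w hu huv hvw hwT
  have hα0 : (0:ℝ) < α := by linarith
  have huw : u ≤ w := le_trans huv hvw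
  have hvT : v ≤ T := le_trans hvw hwT
  have huv0 : (0:ℝ) ≤ v - u := by linarith
  have hvw0 : (0:ℝ) ≤ w - v := by linarith
  have huw0 : (0:ℝ) ≤ w - u := by linarith
  -- the algebraic identity
  have e1 : ∑ p, ∑ j, Y' u k p j * XX u w p j
      = (∑ p, ∑ j, Y' u k p j * XX u v p j) + (∑ p, ∑ j, Y' u k p j * XX v w p j)
        + ∑ j, (∑ p, Y' u k p j * (X v p - X u p)) * (X w j - X v j) := by
    simp only [hChen u v w, mul_add, Finset.sum_add_distrib]
    congr 1
    rw [Finset.sum_comm]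
    apply Finset.sum_congr rfl; intro j _
    rw [Finset.sum_mul]
    apply Finset.sum_congr rfl; intro p _
    ring
  have hid : (((∑ j, Y u k j * (X w j - X u j)) + ∑ p, ∑ j, Y' u k p j * XX u w p j)
        - ((∑ j, Y u k j * (X v j - X u j)) + ∑ p, ∑ j, Y' u k p j * XX u v p j))
        - ((∑ j, Y v k j * (X w j - X v j)) + ∑ p, ∑ j, Y' v k p j * XX v w p j)
      = (∑ j, -(Y v k j - Y u k j - ∑ p, Y' u k p j * (X v p - X u p)) * (X w j - X v j))
        + ∑ p, ∑ j, (Y' u k p j - Y' v k p j) * XX v w p j := by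
    rw [e1]
    have e2 : ∑ j, -(Y v k j - Y u k j - ∑ p, Y' u k p j * (X v p - X u p)) * (X w j - X v j)
        = (∑ j, Y u k j * (X w j - X v j)) - (∑ j, Y v k j * (X w j - X v j))
          + ∑ j, (∑ p, Y' u k p j * (X v p - X u p)) * (X w j - X v j) := by
      rw [← Finset.sum_sub_distrib, ← Finset.sum_add_distrib]
      apply Finset.sum_congr rfl; intro j _; ring
    have e3 : ∑ p, ∑ j, (Y' u k p j - Y' v k p j) * XX v w p j
        = (∑ p, ∑ j, Y' u k p j * XX v w p j) - ∑ p, ∑ j, Y' v k p j * XX v w p j := by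
      rw [← Finset.sum_sub_distrib]
      apply Finset.sum_congr rfl; intro p _
      rw [← Finset.sum_sub_distrib]
      apply Finset.sum_congr rfl; intro j _; ring
    have e4 : (∑ j, Y u k j * (X w j - X u j)) - ∑ j, Y u k j * (X v j - X u j)
        = ∑ j, Y u k j * (X w j - X v j) := by
      rw [← Finset.sum_sub_distrib]
      apply Finset.sum_congr rfl; intro j _; ring
    rw [e2, e3]
    linarith [e4]
  rw [hid]
  -- bounds
  have hXb := hX v w (le_trans hu huv) hvw hwT
  have hXXb := hXX v w (le_trans hu huv) hvw hwT
  have hRb := hR u v hu huv hvT k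
  have hY'b := hY' u v hu huv hvT k
  have h1 : |∑ j, -(Y v k j - Y u k j - ∑ p, Y' u k p j * (X v p - X u p)) * (X w j - X v j)|
      ≤ (CR * (v - u) ^ (2*α)) * (CX * (w - v) ^ α) := by
    refine le_trans (Finset.abs_sum_le_sum_abs _ _) ?_
    have step : ∀ j : Fin d, |(-(Y v k j - Y u k j - ∑ p, Y' u k p j * (X v p - X u p))) * (X w j - X v j)|
        ≤ |Y v k j - Y u k j - ∑ p, Y' u k p j * (X v p - X u p)| * (CX * (w - v) ^ α) := by
      intro j
      rw [abs_mul, abs_neg]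
      exact mul_le_mul_of_nonneg_left (hXb j) (abs_nonneg _)
    refine le_trans (Finset.sum_le_sum (fun j _ => step j)) ?_
    rw [← Finset.sum_mul]
    exact mul_le_mul_of_nonneg_right (hRb) (by positivity)
  have h2 : |∑ p, ∑ j, (Y' u k p j - Y' v k p j) * XX v w p j|
      ≤ (CY' * (v - u) ^ α) * (CXX * (w - v) ^ (2*α)) := by
    refine le_trans (Finset.abs_sum_le_sum_abs _ _) ?_
    have step : ∀ p : Fin d, |∑ j, (Y' u k p j - Y' v k p j) * XX v w p j|
        ≤ (∑ j, |Y' u k p j - Y' v k p j|) * (CXX * (w - v) ^ (2*α)) := by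
      intro p
      refine le_trans (Finset.abs_sum_le_sum_abs _ _) ?_
      rw [Finset.sum_mul]
      apply Finset.sum_le_sum
      intro j _
      rw [abs_mul]
      exact mul_le_mul_of_nonneg_left (hXXb p j) (abs_nonneg _)
    refine le_trans (Finset.sum_le_sum (fun p _ => step p)) ?_
    rw [← Finset.sum_mul]
    refine mul_le_mul_of_nonneg_right ?_ (by positivity)
    refine le_trans (le_of_eq ?_) hY'b
    apply Finset.sum_congr rfl; intro p _
    apply Finset.sum_congr rfl; intro j _
    rw [abs_sub_comm]
  -- exponent juggling
  have hsplit : (w - u) ^ (3*α) = (w - u) ^ (2*α) * (w - u) ^ α := by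
    rw [show (3:ℝ)*α = 2*α + α by ring, Real.rpow_add' huw0 (by positivity)]
  have m1 : (v - u) ^ (2*α) * (w - v) ^ α ≤ (w - u) ^ (3*α) := by
    rw [hsplit]
    exact mul_le_mul (Real.rpow_le_rpow huv0 (by linarith) (by positivity))
      (Real.rpow_le_rpow hvw0 (by linarith) hα0.le)
      (Real.rpow_nonneg hvw0 _) (Real.rpow_nonneg huw0 _)
  have m2 : (v - u) ^ α * (w - v) ^ (2*α) ≤ (w - u) ^ (3*α) := by
    rw [hsplit]
    rw [mul_comm ((w-u)^(2*α))]
    exact mul_le_mul (Real.rpow_le_rpow huv0 (by linarith) hα0.le)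
      (Real.rpow_le_rpow hvw0 (by linarith) (by positivity))
      (Real.rpow_nonneg hvw0 _) (Real.rpow_nonneg huw0 _)
  calc |(∑ j, -(Y v k j - Y u k j - ∑ p, Y' u k p j * (X v p - X u p)) * (X w j - X v j))
        + ∑ p, ∑ j, (Y' u k p j - Y' v k p j) * XX v w p j|
      ≤ (CR * (v - u) ^ (2*α)) * (CX * (w - v) ^ α)
        + (CY' * (v - u) ^ α) * (CXX * (w - v) ^ (2*α)) :=
        le_trans (abs_add_le _ _) (add_le_add h1 h2)
    _ ≤ CX * CR * (w - u) ^ (3*α) + CXX * CY' * (w - u) ^ (3*α) := by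
        have b1 : (CR * (v - u) ^ (2*α)) * (CX * (w - v) ^ α)
            = CX * CR * ((v - u) ^ (2*α) * (w - v) ^ α) := by ring
        have b2 : (CY' * (v - u) ^ α) * (CXX * (w - v) ^ (2*α))
            = CXX * CY' * ((v - u) ^ α * (w - v) ^ (2*α)) := by ring
        rw [b1, b2]
        exact add_le_add (mul_le_mul_of_nonneg_left m1 (by positivity))
          (mul_le_mul_of_nonneg_left m2 (by positivity))
    _ = (CX * CR + CXX * CY') * (w - u) ^ (3*α) := by ring

end RoughHelpers

/-- Rough integral of a controlled path: for an `α`-Hölder rough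
path `(X,𝕏)` with `α ∈ (1/3,1/2]` and a controlled path `(Y,Y')`, the compensated
Riemann sums `∑ (Y_u δX_{u,v} + Y'_u 𝕏_{u,v})` converge, and the limit
`I s t = ∫_s^t Y d𝐗` satisfies
`‖I s t - Y_s δX_{s,t} - Y'_s 𝕏_{s,t}‖ ≤ C (‖X‖_α ‖R^Y‖_{2α} + ‖𝕏‖_{2α} ‖Y'‖_α) (t-s)^{3α}`. -/
theorem rough_integral_exists
    (α T : ℝ) (hα : 1 / 3 < α) (hα2 : α ≤ 1 / 2) (hT : 0 < T) :
    ∃ C : ℝ, 0 < C ∧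
      ∀ (d m : ℕ) (X : ℝ → Fin d → ℝ) (XX : ℝ → ℝ → Fin d → Fin d → ℝ),
        -- Chen's relation
        (∀ s u t : ℝ, ∀ i j : Fin d,
          XX s t i j = XX s u i j + XX u t i j + (X u i - X s i) * (X t j - X u j)) →
        ∀ (Y : ℝ → Fin m → Fin d → ℝ) (Y' : ℝ → Fin m → Fin d → Fin d → ℝ)
          (CX CXX CY' CR : ℝ), 0 ≤ CX → 0 ≤ CXX → 0 ≤ CY' → 0 ≤ CR →
        (∀ s t : ℝ, 0 ≤ s → s ≤ t → t ≤ T → ∀ i, |X t i - X s i| ≤ CX * (t - s) ^ α) →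
        (∀ s t : ℝ, 0 ≤ s → s ≤ t → t ≤ T → ∀ i j,
          |XX s t i j| ≤ CXX * (t - s) ^ (2 * α)) →
        (∀ s t : ℝ, 0 ≤ s → s ≤ t → t ≤ T → ∀ k,
          ∑ i, ∑ j, |Y' t k i j - Y' s k i j| ≤ CY' * (t - s) ^ α) →
        -- `(Y,Y')` controlled by `X`: `2α`-Hölder remainder
        (∀ s t : ℝ, 0 ≤ s → s ≤ t → t ≤ T → ∀ k,
          ∑ j, |Y t k j - Y s k j - ∑ i, Y' s k i j * (X t i - X s i)|
            ≤ CR * (t - s) ^ (2 * α)) →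
        ∃ I : ℝ → ℝ → Fin m → ℝ,
          -- the compensated Riemann sums converge to `I s t`
          (∀ s t, 0 ≤ s → s ≤ t → t ≤ T → ∀ ε > 0, ∃ δ > 0,
            ∀ (N : ℕ) (τ : ℕ → ℝ), 0 < N → τ 0 = s → τ N = t →
              (∀ i < N, τ i < τ (i + 1)) → (∀ i < N, τ (i + 1) - τ i < δ) →
              ∀ k, |(∑ i ∈ Finset.range N,
                  ((∑ j, Y (τ i) k j * (X (τ (i + 1)) j - X (τ i) j))
                    + ∑ p, ∑ j, Y' (τ i) k p j * XX (τ i) (τ (i + 1)) p j))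
                  - I s t k| < ε) ∧
          -- the sewing bound
          (∀ s t, 0 ≤ s → s ≤ t → t ≤ T → ∀ k,
            |I s t k - ((∑ j, Y s k j * (X t j - X s j))
                + ∑ p, ∑ j, Y' s k p j * XX s t p j)|
              ≤ C * (CX * CR + CXX * CY') * (t - s) ^ (3 * α)) := by
  have hγ : 1 < 3 * α := by linarith
  have hCpos : (0:ℝ) < 2^(3*α) * Zc (3*α) :=
    mul_pos (Real.rpow_pos_of_pos two_pos _) (lt_of_lt_of_le one_pos (Zc_one_le hγ))
  refine ⟨2^(3*α) * Zc (3*α), hCpos, ?_⟩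
  intro d m X XX hChen Y Y' CX CXX CY' CR hCX hCXX hCY' hCR hX hXX hY' hR
  set K := CX * CR + CXX * CY' with hKdef
  have hK : 0 ≤ K := by positivity
  have hco := coh_bound α hα hα2 T d m X XX hChen Y Y' CX CXX CY' CR hCX hCXX hCY' hCR hX hXX hY' hR
  -- existence of the integral for admissible (s,t,k)
  have hP : ∀ s t : ℝ, (0 ≤ s ∧ s ≤ t ∧ t ≤ T) → ∀ k : Fin m,
      ∃ I : ℝ,
        (∀ δ, 0 < δ → ∀ (N : ℕ) (τ : ℕ → ℝ), 0 < N → τ 0 = s → τ N = t →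
          (∀ i < N, τ i < τ (i+1)) → (∀ i < N, τ (i+1) - τ i ≤ δ) →
          |(∑ j ∈ range N, ((∑ q, Y (τ j) k q * (X (τ (j+1)) q - X (τ j) q))
              + ∑ p, ∑ q, Y' (τ j) k p q * XX (τ j) (τ (j+1)) p q)) - I|
            ≤ 2^(3*α) * Zc (3*α) * K * (2 * δ^(3*α-1)) * (t-s)) ∧
        |I - ((∑ q, Y s k q * (X t q - X s q)) + ∑ p, ∑ q, Y' s k p q * XX s t p q)|
          ≤ 2^(3*α) * Zc (3*α) * K * (t-s)^(3*α) := by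
    intro s t ⟨hs, hst, ht⟩ k
    exact sewing (3*α) hγ
      (fun u v => (∑ q, Y u k q * (X v q - X u q)) + ∑ p, ∑ q, Y' u k p q * XX u v p q)
      K s t hK hst
      (fun u v w h1 h2 h3 h4 => hco k u v w (le_trans hs h1) h2 h3 (le_trans h4 ht))
  classical
  refine ⟨fun s t k => if h : 0 ≤ s ∧ s ≤ t ∧ t ≤ T then (hP s t h k).choose else 0, ?_, ?_⟩
  · -- convergence
    intro s t hs hst ht ε hε
    set B := 2 * (2^(3*α) * Zc (3*α)) * K * (t-s) with hB
    have hBnn : 0 ≤ B := by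
      have : (0:ℝ) ≤ t - s := by linarith
      positivity
    set δ := (ε/(B+1))^((3*α-1)⁻¹) with hδdef
    have hδpos : 0 < δ := Real.rpow_pos_of_pos (by positivity) _
    refine ⟨δ, hδpos, ?_⟩
    intro N τ hN h0 hNt hstr hmesh k
    have hcond : 0 ≤ s ∧ s ≤ t ∧ t ≤ T := ⟨hs, hst, ht⟩
    have hspec := (hP s t hcond k).choose_spec.1 δ hδpos N τ hN h0 hNt hstr
      (fun i hi => (hmesh i hi).le)
    simp only [dif_pos hcond]
    refine lt_of_le_of_lt hspec ?_
    have hrp : δ^(3*α-1) = ε/(B+1) :=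
      Real.rpow_inv_rpow (by positivity) (by intro h; nlinarith)
    rw [hrp]
    calc 2^(3*α) * Zc (3*α) * K * (2 * (ε/(B+1))) * (t-s) = B * (ε/(B+1)) := by
          rw [hB]; ring
      _ < ε := by
          rw [div_eq_mul_inv, ← mul_assoc]
          rw [show B * ε * (B+1)⁻¹ = B * ε / (B+1) by ring]
          rw [div_lt_iff₀ (by linarith)]
          nlinarith
  · -- sewing bound
    intro s t hs hst ht k
    have hcond : 0 ≤ s ∧ s ≤ t ∧ t ≤ T := ⟨hs, hst, ht⟩
    simp only [dif_pos hcond]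
    exact (hP s t hcond k).choose_spec.2
end
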